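/- arXiv:2502.14733 — 3 statements merged into one kernel-verified Lean document; each statement's English description precedes it below -/
import Mathlib

section
/- A set S ⊆ ℝ² is staircase connected if and only if S is orthogonally connected and orthogonally convex. -/
open Set MeasureTheory Bornology
open scoped ENNReal

noncomputable section

/-- `ℝ^d` as Euclidean space. -/
abbrev EucR (d : ℕ) := EuclideanSpace ℝ (Fin d)

/-- The segment from `x` to `y` is parallel to a coordinate axis
(all coordinates except possibly one agree). -/
def IsOrthSeg {d : ℕ} (x y : EucR d) : Prop :=
  ∃ i : Fin d, ∀ j, j ≠ i → x j = y j

/-- `p 0, p 1, …, p n` is an orthogonal polygonal path contained in `S`. -/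
def IsOrthPathIn {d : ℕ} (S : Set (EucR d)) (p : ℕ → EucR d) (n : ℕ) : Prop :=
  ∀ k, k < n → IsOrthSeg (p k) (p (k + 1)) ∧ segment ℝ (p k) (p (k + 1)) ⊆ S

/-- `S` is orthogonally connected. -/
def OrthConnected {d : ℕ} (S : Set (EucR d)) : Prop :=
  ∀ x ∈ S, ∀ y ∈ S, ∃ n : ℕ, ∃ p : ℕ → EucR d,
    p 0 = x ∧ p n = y ∧ IsOrthPathIn S p n

/-- An orthogonal path is a staircase if all edges parallel to the same axis
point in the same direction. -/
def IsStaircaseIn {d : ℕ} (S : Set (EucR d)) (p : ℕ → EucR d) (n : ℕ) : Prop :=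
  IsOrthPathIn S p n ∧
    ∀ k, k < n → ∀ l, l < n → ∀ i : Fin d,
      (∀ j, j ≠ i → p k j = p (k + 1) j) → (∀ j, j ≠ i → p l j = p (l + 1) j) →
        0 ≤ (p (k + 1) i - p k i) * (p (l + 1) i - p l i)

/-- `S` is staircase connected. -/
def StaircaseConnected {d : ℕ} (S : Set (EucR d)) : Prop :=
  ∀ x ∈ S, ∀ y ∈ S, ∃ n : ℕ, ∃ p : ℕ → EucR d,
    p 0 = x ∧ p n = y ∧ IsStaircaseIn S p n

/-- `S` is orthogonally convex. -/
def OrthConvex {d : ℕ} (S : Set (EucR d)) : Prop :=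
  ∀ x ∈ S, ∀ y ∈ S, IsOrthSeg x y → segment ℝ x y ⊆ S

/-- A convex body: compact convex with nonempty interior. -/
def IsConvexBody {d : ℕ} (K : Set (EucR d)) : Prop :=
  Convex ℝ K ∧ IsCompact K ∧ (interior K).Nonempty

/-- The point of `ℝ²` with coordinates `(a, b)`. -/
def pt2 (a b : ℝ) : EucR 2 := (WithLp.equiv 2 (Fin 2 → ℝ)).symm ![a, b]

/-- Horizontal width of `S` at `x`: the length of the connected component
containing `x` of the intersection of `S` with the horizontal line through `x`. -/
def hw (S : Set (EucR 2)) (x : EucR 2) : ℝ≥0∞ :=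
  volume (connectedComponentIn {t : ℝ | pt2 t (x 1) ∈ S} (x 0))

/-- Vertical width of `S` at `x`. -/
def vw (S : Set (EucR 2)) (x : EucR 2) : ℝ≥0∞ :=
  volume (connectedComponentIn {t : ℝ | pt2 (x 0) t ∈ S} (x 1))

/-- The set of unit directions from `x` towards points of `K`. -/
def dirSet (x : EucR 2) (K : Set (EucR 2)) : Set (EucR 2) :=
  {u | ∃ y ∈ K, y ≠ x ∧ u = ‖y - x‖⁻¹ • (y - x)}

/-- `α_x(K)`: the angular (1-dimensional Hausdorff) measure of the set of unit
directions from `x` towards other points of `K`. -/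
def angMeasure (x : EucR 2) (K : Set (EucR 2)) : ℝ≥0∞ :=
  μH[1] (dirSet x K)

/-- The half-line from `x` through `y`. -/
def rayFrom (x y : EucR 2) : Set (EucR 2) := {z | ∃ t : ℝ, 0 ≤ t ∧ z = x + t • (y - x)}

/-- `T_x(K)`: the union of the half-lines from `x` through the points of `K \ {x}`. -/
def TCone (x : EucR 2) (K : Set (EucR 2)) : Set (EucR 2) := ⋃ y ∈ K \ {x}, rayFrom x y

/-- `K` is obtuse: at every boundary point `x`, either `α_x(K) > π/2`, or
`α_x(K) = π/2` and `T_x(K) \ {x}` is not open. -/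
def Obtuse (K : Set (EucR 2)) : Prop :=
  ∀ x ∈ frontier K,
    ENNReal.ofReal (Real.pi / 2) < angMeasure x K ∨
      (angMeasure x K = ENNReal.ofReal (Real.pi / 2) ∧ ¬ IsOpen (TCone x K \ {x}))

/-- Inclusion of `ℝ² × ℝ` into `ℝ³`. -/
def incl3 (q : EucR 2) (t : ℝ) : EucR 3 := (WithLp.equiv 2 (Fin 3 → ℝ)).symm ![q 0, q 1, t]

/-- A piece of a continuum `C`: the closure of a connected component of
`C \ {x}` for some cut point `x` of `C`. -/
def IsPiece (C P : Set (EucR 2)) : Prop :=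
  ∃ x ∈ C, ¬ IsPreconnected (C \ {x}) ∧
    ∃ y ∈ C \ {x}, P = closure (connectedComponentIn (C \ {x}) y)

/-- `f` is unimodal on `[a,b]`: non-decreasing on `[a,c]`, non-increasing on `[c,b]`
for some `c ∈ (a,b)`. -/
def Unimodal (f : ℝ → ℝ) (a b : ℝ) : Prop :=
  ∃ c ∈ Ioo a b, MonotoneOn f (Icc a c) ∧ AntitoneOn f (Icc c b)

/-- `a` is an s-extreme point of `M`: it belongs to a staircase in `M` only as an
endpoint. -/
def SExtreme (M : Set (EucR 2)) (a : EucR 2) : Prop :=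
  a ∈ M ∧ ∀ n : ℕ, ∀ γ : ℕ → EucR 2, IsStaircaseIn M γ n →
    a ∈ ⋃ k ∈ Set.Iio n, segment ℝ (γ k) (γ (k + 1)) → a = γ 0 ∨ a = γ n

/-- `M ⊆ ℝ²` is a strip: the preimage of an interval of `ℝ` under a nonzero
linear functional (this includes half-planes and the whole plane). -/
def IsStrip (M : Set (EucR 2)) : Prop :=
  ∃ f : EucR 2 →ₗ[ℝ] ℝ, f ≠ 0 ∧ ∃ I : Set ℝ, I.OrdConnected ∧ M = f ⁻¹' I

end
private def oth (i : Fin 2) : Fin 2 := if i = 0 then 1 else 0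

private lemma fin2_eq : ∀ (i j : Fin 2), j ≠ oth i → j = i := by decide

private lemma mem_segment_coord {d : ℕ} (a b c : EucR d) (i : Fin d)
    (hj : ∀ j, j ≠ i → c j = a j ∧ a j = b j)
    (hi : c i ∈ Set.uIcc (a i) (b i)) : c ∈ segment ℝ a b := by
  rw [← segment_eq_uIcc] at hi
  obtain ⟨t, s, ht, hs, hts, h⟩ := hi
  refine ⟨t, s, ht, hs, hts, PiLp.ext fun j => ?_⟩
  show t * a j + s * b j = c j
  by_cases hji : j = i
  · subst hji; exact h
  · obtain ⟨h1, h2⟩ := hj j hji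
    rw [h1, ← h2]
    linear_combination (a j) * hts

private lemma ivt_discrete (f : ℕ → ℝ) (v : ℝ) :
    ∀ n : ℕ, (∀ k, k ≤ n → f k ≤ f (k+1)) → f 0 ≤ v → v ≤ f (n+1) →
      ∃ k, k ≤ n ∧ f k ≤ v ∧ v ≤ f (k+1) := by
  intro n
  induction n with
  | zero => exact fun _ h0 h1 => ⟨0, le_refl 0, h0, h1⟩
  | succ m ih =>
    intro hm h0 h1
    by_cases hv : v ≤ f (m+1)
    · obtain ⟨k, hk, h⟩ := ih (fun k hk => hm k (hk.trans (Nat.le_succ m))) h0 hv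
      exact ⟨k, hk.trans (Nat.le_succ m), h⟩
    · exact ⟨m+1, le_refl _, (not_le.1 hv).le, h1⟩

private lemma sum_sq_zero (n m : ℕ) (D : ℕ → ℝ) (hm : m < n) (h : ∀ k, k < n → 0 ≤ D m * D k)
    (hsum : ∑ k ∈ Finset.range n, D k = 0) : D m = 0 := by
  have h1 : ∑ k ∈ Finset.range n, D m * D k = 0 := by
    rw [← Finset.mul_sum, hsum, mul_zero]
  have h2 : D m * D m ≤ ∑ k ∈ Finset.range n, D m * D k :=
    Finset.single_le_sum (fun k hk => h k (Finset.mem_range.1 hk)) (Finset.mem_range.2 hm)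
  have := mul_self_nonneg (D m)
  exact mul_self_eq_zero.1 (le_antisymm (h1 ▸ h2) this)

private lemma convex_between {u v t s : ℝ} (ht : 0 ≤ t) (hs : 0 ≤ s) (hts : t + s = 1) (h : u ≤ v) :
    u ≤ t*u + s*v ∧ t*u + s*v ≤ v := by
  have h1 : t*u + s*v - u = s*(v - u) := by linear_combination u * hts
  have h2 : v - (t*u + s*v) = t*(v - u) := by linear_combination (-v) * hts
  constructor
  · nlinarith [mul_nonneg hs (sub_nonneg.2 h)]
  · nlinarith [mul_nonneg ht (sub_nonneg.2 h)]

private lemma stair_convex {dd : ℕ} (S : Set (EucR dd)) (h : StaircaseConnected S) : OrthConvex S := by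
  intro x hx y hy ⟨i, hi⟩
  obtain ⟨n, p, h0, hn, hpath, hstair⟩ := h x hx y hy
  have tel : ∀ j : Fin dd, ∑ k ∈ Finset.range n, (p (k+1) j - p k j) = y j - x j := by
    intro j
    rw [Finset.sum_range_sub (fun k => p k j), h0, hn]
  -- step 1 : all edges constant in coordinates j ≠ i
  have step1 : ∀ j, j ≠ i → ∀ m, m < n → p (m+1) j - p m j = 0 := by
    intro j hj m hm
    by_cases hDm : p (m+1) j - p m j = 0
    · exact hDm
    · -- edge m moves in coordinate j, so its axis is j
      obtain ⟨w, hw⟩ := (hpath m hm).1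
      have hwj : w = j := by
        by_contra hwj
        exact hDm (sub_eq_zero.2 (hw j (fun hh => hwj hh.symm)).symm)
      subst hwj
      refine sum_sq_zero n m (fun k => p (k+1) w - p k w) hm (fun k hk => ?_)
        (by rw [tel w, hi w hj, sub_self])
      show 0 ≤ (p (m+1) w - p m w) * (p (k+1) w - p k w)
      by_cases hDk : p (k+1) w - p k w = 0
      · rw [hDk, mul_zero]
      · obtain ⟨w', hw'⟩ := (hpath k hk).1
        have hwk : w' = w := by
          by_contra hwk
          exact hDk (sub_eq_zero.2 (hw' w (fun hh => hwk hh.symm)).symm)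
        subst hwk
        exact hstair m hm k hk w' hw hw'
  have const : ∀ j, j ≠ i → ∀ m, m ≤ n → p m j = x j := by
    intro j hj m
    induction m with
    | zero => intro _; rw [h0]
    | succ k ih =>
      intro hk
      have := step1 j hj k hk
      have hik := ih (Nat.le_of_succ_le hk)
      linarith [sub_eq_zero.1 this]
  have hypI : ∀ k, k < n → ∀ j, j ≠ i → p k j = p (k+1) j := fun k hk j hj => by
    rw [const j hj k hk.le, const j hj (k+1) hk]
  have prodE : ∀ k, k < n → ∀ l, l < n →
      0 ≤ (p (k+1) i - p k i) * (p (l+1) i - p l i) :=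
    fun k hk l hl => hstair k hk l hl i (hypI k hk) (hypI l hl)
  rcases n with _ | m
  · have hxy : x = y := by rw [← h0, hn]
    rw [hxy, segment_same]
    intro z hz
    rw [Set.mem_singleton_iff.1 hz]
    exact hy
  · intro z hz
    obtain ⟨t, s, ht, hs, hts, hsum⟩ := hz
    have hzj : ∀ j, z j = t * x j + s * y j := fun j => by rw [← hsum]; rfl
    have hzx : ∀ j, j ≠ i → z j = x j := by
      intro j hj
      rw [hzj j, ← hi j hj]
      linear_combination (x j) * hts
    set f : ℕ → ℝ := fun k => p k i with hf
    have hf0 : f 0 = x i := by show p 0 i = x i; rw [h0]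
    have hfn : f (m+1) = y i := by show p (m+1) i = y i; rw [hn]
    by_cases hall : ∀ k, k < m+1 → 0 ≤ f (k+1) - f k
    · have mono : ∀ k, k ≤ m → f k ≤ f (k+1) := fun k hk => by
        linarith [hall k (Nat.lt_succ_of_le hk)]
      have hxy : x i ≤ y i := by
        have h1 := tel i
        have h2 : 0 ≤ ∑ k ∈ Finset.range (m+1), (p (k+1) i - p k i) :=
          Finset.sum_nonneg fun k hk => hall k (Finset.mem_range.1 hk)
        linarith
      have hz1 : f 0 ≤ z i := by rw [hf0, hzj i]; exact (convex_between ht hs hts hxy).1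
      have hz2 : z i ≤ f (m+1) := by rw [hfn, hzj i]; exact (convex_between ht hs hts hxy).2
      obtain ⟨k, hk, hk1, hk2⟩ := ivt_discrete f (z i) m mono hz1 hz2
      apply (hpath k (Nat.lt_succ_of_le hk)).2
      apply mem_segment_coord (p k) (p (k+1)) z i
      · intro j hj
        refine ⟨?_, hypI k (Nat.lt_succ_of_le hk) j hj⟩
        rw [hzx j hj, const j hj k (Nat.le_of_lt (Nat.lt_succ_of_le hk))]
      · rw [Set.uIcc_of_le (mono k hk)]
        exact ⟨hk1, hk2⟩
    · push_neg at hall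
      obtain ⟨a, ha, hEa⟩ := hall
      have anti : ∀ k, k < m+1 → f (k+1) - f k ≤ 0 := by
        intro k hk
        have := prodE a ha k hk
        nlinarith
      have mono : ∀ k, k ≤ m → (fun k => -f k) k ≤ (fun k => -f k) (k+1) := fun k hk => by
        have := anti k (Nat.lt_succ_of_le hk); simp; linarith
      have hxy : y i ≤ x i := by
        have h1 := tel i
        have h2 : ∑ k ∈ Finset.range (m+1), (p (k+1) i - p k i) ≤ 0 :=
          Finset.sum_nonpos fun k hk => anti k (Finset.mem_range.1 hk)
        linarith
      have hz1 : -f 0 ≤ -(z i) := by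
        rw [hf0, hzj i]
        have h3 : -(x i) ≤ -(y i) := neg_le_neg hxy
        have := convex_between ht hs hts h3
        nlinarith [this.1]
      have hz2 : -(z i) ≤ -f (m+1) := by
        rw [hfn, hzj i]
        have h3 : -(x i) ≤ -(y i) := neg_le_neg hxy
        have := convex_between ht hs hts h3
        nlinarith [this.2]
      obtain ⟨k, hk, hk1, hk2⟩ := ivt_discrete (fun k => -f k) (-(z i)) m mono hz1 hz2
      simp only [neg_le_neg_iff] at hk1 hk2
      apply (hpath k (Nat.lt_succ_of_le hk)).2
      apply mem_segment_coord (p k) (p (k+1)) z i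
      · intro j hj
        refine ⟨?_, hypI k (Nat.lt_succ_of_le hk) j hj⟩
        rw [hzx j hj, const j hj k (Nat.le_of_lt (Nat.lt_succ_of_le hk))]
      · rw [Set.uIcc_of_ge]
        · exact ⟨hk2, hk1⟩
        · linarith [anti k (Nat.lt_succ_of_le hk)]

private lemma shortcut (S : Set (EucR 2)) (hX : OrthConvex S) (a b c d : EucR 2) (i : Fin 2)
    (hab : segment ℝ a b ⊆ S) (hcd : segment ℝ c d ⊆ S)
    (h1 : ∀ j, j ≠ i → a j = b j) (h2 : b i = c i) (h3 : ∀ j, j ≠ i → c j = d j)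
    (hsign : (b i - a i) * (d i - c i) < 0) :
    ∃ e : EucR 2, IsOrthSeg a e ∧ segment ℝ a e ⊆ S ∧ IsOrthSeg e d ∧ segment ℝ e d ⊆ S := by
  have haS : a ∈ S := hab (left_mem_segment ℝ a b)
  have hdS : d ∈ S := hcd (right_mem_segment ℝ c d)
  by_cases hcase : d i ∈ Set.uIcc (a i) (b i)
  · set e : EucR 2 := WithLp.toLp 2 (Function.update a.ofLp i (d i)) with he
    have hei : e i = d i := Function.update_self i (d i) a.ofLp
    have hej : ∀ j, j ≠ i → e j = a j := fun j hj => Function.update_of_ne hj (d i) a.ofLp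
    have heseg : e ∈ segment ℝ a b :=
      mem_segment_coord a b e i (fun j hj => ⟨hej j hj, h1 j hj⟩) (by rw [hei]; exact hcase)
    have heS : e ∈ S := hab heseg
    refine ⟨e, ⟨i, fun j hj => (hej j hj).symm⟩, ?_, ⟨oth i, fun j hj => ?_⟩, ?_⟩
    · exact subset_trans ((convex_segment a b).segment_subset (left_mem_segment ℝ a b) heseg) hab
    · rw [fin2_eq i j hj, hei]
    · exact hX e heS d hdS ⟨oth i, fun j hj => by rw [fin2_eq i j hj, hei]⟩
  · have hcase2 : a i ∈ Set.uIcc (c i) (d i) := by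
      rw [Set.mem_uIcc] at hcase ⊢
      push_neg at hcase
      rcases lt_trichotomy (a i) (b i) with h | h | h
      · have hd : d i < b i := by nlinarith
        have : d i < a i := by
          by_contra hh
          push_neg at hh
          linarith [hcase.1 hh]
        right; constructor <;> [linarith; linarith]
      · exfalso; rw [h] at hsign; simp at hsign
      · have hd : b i < d i := by nlinarith
        have : a i < d i := by
          by_contra hh
          push_neg at hh
          exact absurd (hcase.2 (by linarith)) (by linarith)
        left; constructor <;> [linarith; linarith]
    set e : EucR 2 := WithLp.toLp 2 (Function.update c.ofLp i (a i)) with he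
    have hei : e i = a i := Function.update_self i (a i) c.ofLp
    have hej : ∀ j, j ≠ i → e j = c j := fun j hj => Function.update_of_ne hj (a i) c.ofLp
    have heseg : e ∈ segment ℝ c d :=
      mem_segment_coord c d e i (fun j hj => ⟨hej j hj, h3 j hj⟩) (by rw [hei]; exact hcase2)
    have heS : e ∈ S := hcd heseg
    refine ⟨e, ⟨oth i, fun j hj => ?_⟩, ?_, ⟨i, fun j hj => (hej j hj).trans (h3 j hj)⟩, ?_⟩
    · rw [fin2_eq i j hj, hei]
    · exact hX a haS e heS ⟨oth i, fun j hj => by rw [fin2_eq i j hj, hei]⟩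
    · exact subset_trans ((convex_segment c d).segment_subset heseg (right_mem_segment ℝ c d)) hcd

private lemma skip_path (S : Set (EucR 2)) (p : ℕ → EucR 2) (n k : ℕ) (hk : k + 1 < n)
    (hp : IsOrthPathIn S p n)
    (horth : IsOrthSeg (p k) (p (k+2))) (hsub : segment ℝ (p k) (p (k+2)) ⊆ S) :
    ∃ q : ℕ → EucR 2, q 0 = p 0 ∧ q (n-1) = p n ∧ IsOrthPathIn S q (n-1) := by
  refine ⟨fun m => if m ≤ k then p m else p (m+1), by simp, ?_, ?_⟩
  · have h1 : ¬ (n - 1 ≤ k) := by omega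
    have h2 : n - 1 + 1 = n := by omega
    simp only [if_neg h1, h2]
  · intro m hm
    by_cases h1 : m + 1 ≤ k
    · simp only [if_pos (by omega : m ≤ k), if_pos h1]
      exact hp m (by omega)
    · by_cases h2 : m ≤ k
      · have hmk : m = k := by omega
        subst hmk
        simp only [if_pos (le_refl m), if_neg h1]
        exact ⟨horth, hsub⟩
      · simp only [if_neg h2, if_neg h1]
        exact hp (m+1) (by omega)

private lemma swap2_path (S : Set (EucR 2)) (p : ℕ → EucR 2) (n k : ℕ) (hk : k + 2 < n)
    (hp : IsOrthPathIn S p n) (e : EucR 2)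
    (h1 : IsOrthSeg (p k) e) (h1s : segment ℝ (p k) e ⊆ S)
    (h2 : IsOrthSeg e (p (k+3))) (h2s : segment ℝ e (p (k+3)) ⊆ S) :
    ∃ q : ℕ → EucR 2, q 0 = p 0 ∧ q (n-1) = p n ∧ IsOrthPathIn S q (n-1) := by
  refine ⟨fun m => if m ≤ k then p m else if m = k+1 then e else p (m+1), by simp, ?_, ?_⟩
  · have ha : ¬ (n - 1 ≤ k) := by omega
    have hb : ¬ (n - 1 = k + 1) := by omega
    have h2 : n - 1 + 1 = n := by omega
    simp only [if_neg ha, if_neg hb, h2]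
  · intro m hm
    by_cases ha : m + 1 ≤ k
    · simp only [if_pos (by omega : m ≤ k), if_pos ha]
      exact hp m (by omega)
    · by_cases hb : m ≤ k
      · have hmk : m = k := by omega
        subst hmk
        simp only [if_pos (le_refl m), if_neg ha, if_pos (rfl : m + 1 = m + 1)]
        exact ⟨h1, h1s⟩
      · by_cases hc : m = k + 1
        · subst hc
          simp only [if_neg hb, if_pos (rfl : k + 1 = k + 1), if_neg (by omega : ¬ (k + 1 + 1 ≤ k)),
            if_neg (by omega : ¬ (k + 1 + 1 = k + 1)), (by omega : k + 1 + 1 + 1 = k + 3)]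
          exact ⟨h2, h2s⟩
        · simp only [if_neg hb, if_neg hc, if_neg (by omega : ¬ (m + 1 ≤ k)),
            if_neg (by omega : ¬ (m + 1 = k + 1))]
          exact hp (m+1) (by omega)

private lemma sign_trans {a b c : ℝ} (h1 : 0 < a * b) (h2 : b * c < 0) : a * c < 0 := by
  nlinarith [sq_nonneg b, sq_nonneg (a*c)]

private lemma conn_convex_stair (S : Set (EucR 2)) (hC : OrthConnected S) (hX : OrthConvex S) :
    StaircaseConnected S := by
  classical
  intro x hx y hy
  have hex : ∃ n, ∃ p : ℕ → EucR 2, p 0 = x ∧ p n = y ∧ IsOrthPathIn S p n := hC x hx y hy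
  obtain ⟨p, h0, hn, hp⟩ := Nat.find_spec hex
  set n := Nat.find hex with hndef
  refine ⟨n, p, h0, hn, hp, ?_⟩
  have hmin : ∀ m, m < n → ¬ ∃ q : ℕ → EucR 2, q 0 = x ∧ q m = y ∧ IsOrthPathIn S q m := by
    intro m hm hq
    exact Nat.find_min hex hm hq
  -- fact A : no degenerate edges
  have factA : ∀ k, k < n → p k ≠ p (k+1) := by
    intro k hk heq
    by_cases hk1 : k + 1 < n
    · have horth : IsOrthSeg (p k) (p (k+2)) := by
        rw [heq]; exact (hp (k+1) hk1).1
      have hsub : segment ℝ (p k) (p (k+2)) ⊆ S := by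
        rw [heq]; exact (hp (k+1) hk1).2
      obtain ⟨q, hq0, hqn, hq⟩ := skip_path S p n k hk1 hp horth hsub
      exact hmin (n-1) (by omega) ⟨q, by rw [hq0, h0], by rw [hqn, hn], hq⟩
    · -- k = n - 1 : truncate
      have hkeq : k = n - 1 := by omega
      refine hmin (n-1) (by omega) ⟨p, h0, ?_, fun m hm => hp m (by omega)⟩
      rw [← hkeq, heq, (by omega : k + 1 = n), hn]
  -- fact B : consecutive points two apart never span an orthogonal segment
  have factB : ∀ k, k + 1 < n → ¬ IsOrthSeg (p k) (p (k+2)) := by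
    intro k hk hseg
    have hk0 : p k ∈ S := (hp k (by omega)).2 (left_mem_segment ℝ _ _)
    have hk2 : p (k+2) ∈ S := (hp (k+1) hk).2 (right_mem_segment ℝ _ _)
    obtain ⟨q, hq0, hqn, hq⟩ := skip_path S p n k hk hp hseg (hX _ hk0 _ hk2 hseg)
    exact hmin (n-1) (by omega) ⟨q, by rw [hq0, h0], by rw [hqn, hn], hq⟩
  -- axis extraction for moving edges
  have axis : ∀ k, k < n → ∀ i : Fin 2, p k i ≠ p (k+1) i →
      ∀ j, j ≠ i → p k j = p (k+1) j := by
    intro k hk i hne j hj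
    obtain ⟨w, hw⟩ := (hp k hk).1
    have hwi : w = i := by
      by_contra hwi
      exact hne (hw i fun hh => hwi hh.symm)
    subst hwi
    exact hw j hj
  -- main claim by strong induction on the gap
  by_contra hcon
  push_neg at hcon
  obtain ⟨k0, hk0, l0, hl0, i0, hik0, hil0, hneg0⟩ := hcon
  have main : ∀ g : ℕ, ¬ ∃ k l : ℕ, ∃ i : Fin 2, l < n ∧ l = k + g ∧
      (∀ j, j ≠ i → p k j = p (k+1) j) ∧ (∀ j, j ≠ i → p l j = p (l+1) j) ∧
      (p (k+1) i - p k i) * (p (l+1) i - p l i) < 0 := by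
    intro g
    induction g using Nat.strong_induction_on with
    | _ g IH =>
    rintro ⟨k, l, i, hln, hlk, hyk, hyl, hprod⟩
    have hkn : k < n := by omega
    have hdk : p (k+1) i - p k i ≠ 0 := left_ne_zero_of_mul hprod.ne
    have hdl : p (l+1) i - p l i ≠ 0 := right_ne_zero_of_mul hprod.ne
    match g, hlk with
    | 0, hlk =>
      rw [hlk] at hprod
      simp at hlk
      subst hlk
      exact absurd hprod (not_lt.2 (mul_self_nonneg _))
    | 1, hlk =>
      subst hlk
      exact factB k (by omega) ⟨i, fun j hj => (hyk j hj).trans (hyl j hj)⟩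
    | (g'+2), hlk =>
      by_cases hconst : p (k+1) i = p (k+2) i
      · by_cases hg2 : g' = 0
        · -- l = k + 2 : the zigzag configuration, shortcut
          subst hg2
          have hl2 : l = k + 2 := by omega
          subst hl2
          obtain ⟨e, he1, he1s, he2, he2s⟩ := shortcut S hX (p k) (p (k+1)) (p (k+2)) (p (k+3)) i
            (hp k hkn).2 (hp (k+2) hln).2 hyk hconst hyl hprod
          obtain ⟨q, hq0, hqn, hq⟩ := swap2_path S p n k (by omega) hp e he1 he1s he2 he2s
          exact hmin (n-1) (by omega) ⟨q, by rw [hq0, h0], by rw [hqn, hn], hq⟩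
        · -- g ≥ 3 : analyze edge k+2
          by_cases hconst2 : p (k+2) i = p (k+3) i
          · exact factB (k+1) (by omega)
              ⟨oth i, fun j hj => by rw [fin2_eq i j hj, hconst, hconst2]⟩
          · have hE2ne : p (k+2) i ≠ p (k+3) i := hconst2
            have hyk2 : ∀ j, j ≠ i → p (k+2) j = p (k+3) j := axis (k+2) (by omega) i hE2ne
            have hE2 : p (k+3) i - p (k+2) i ≠ 0 := fun h => hE2ne (sub_eq_zero.1 h).symm
            rcases lt_or_ge ((p (k+1) i - p k i) * (p (k+3) i - p (k+2) i)) 0 with hneg2 | hpos2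
            · exact IH 2 (by omega) ⟨k, k+2, i, by omega, rfl, hyk, hyk2, hneg2⟩
            · have hpos : 0 < (p (k+1) i - p k i) * (p (k+3) i - p (k+2) i) :=
                lt_of_le_of_ne hpos2 (Ne.symm (mul_ne_zero hdk hE2))
              have : (p (k+3) i - p (k+2) i) * (p (l+1) i - p l i) < 0 :=
                sign_trans (mul_comm (p (k+1) i - p k i) (p (k+3) i - p (k+2) i) ▸ hpos) hprod
              exact IH g' (by omega) ⟨k+2, l, i, hln, by omega, hyk2, hyl, this⟩
      · -- edge k+1 moves in coordinate i
        have hyk1 : ∀ j, j ≠ i → p (k+1) j = p (k+2) j := axis (k+1) (by omega) i hconst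
        have hE1 : p (k+2) i - p (k+1) i ≠ 0 := fun h => hconst (sub_eq_zero.1 h).symm
        rcases lt_or_ge ((p (k+1) i - p k i) * (p (k+2) i - p (k+1) i)) 0 with hneg1 | hpos1
        · exact IH 1 (by omega) ⟨k, k+1, i, by omega, rfl, hyk, hyk1, hneg1⟩
        · have hpos : 0 < (p (k+1) i - p k i) * (p (k+2) i - p (k+1) i) :=
            lt_of_le_of_ne hpos1 (Ne.symm (mul_ne_zero hdk hE1))
          have : (p (k+2) i - p (k+1) i) * (p (l+1) i - p l i) < 0 :=
            sign_trans (mul_comm (p (k+1) i - p k i) (p (k+2) i - p (k+1) i) ▸ hpos) hprod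
          exact IH (g'+1) (by omega) ⟨k+1, l, i, hln, by omega, hyk1, hyl, this⟩
  rcases lt_trichotomy k0 l0 with h | h | h
  · exact main (l0 - k0) ⟨k0, l0, i0, hl0, by omega, hik0, hil0, hneg0⟩
  · subst h
    exact absurd hneg0 (not_lt.2 (mul_self_nonneg _))
  · exact main (k0 - l0) ⟨l0, k0, i0, hk0, by omega, hil0, hik0, by rw [mul_comm]; exact hneg0⟩

/-- `S ⊆ ℝ²` is staircase connected iff it is orthogonally connected and
orthogonally convex. -/
theorem staircaseConnected_iff_orthConnected_orthConvex (S : Set (EucR 2)) :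
    StaircaseConnected S ↔ OrthConnected S ∧ OrthConvex S := by
  constructor
  · intro h
    refine ⟨fun x hx y hy => ?_, stair_convex S h⟩
    obtain ⟨n, p, h0, hn, hst⟩ := h x hx y hy
    exact ⟨n, p, h0, hn, hst.1⟩
  · rintro ⟨hC, hX⟩
    exact conn_convex_stair S hC hX
end

section
/- For every convex body D ⊆ ℝ², there exists a rotation ρ of the plane such that ρ(D) is staircase connected. -/
open Set MeasureTheory Bornology
open scoped ENNReal

noncomputable section

namespace SP

abbrev Pt := EucR 2

lemma pt2_0 (a b : ℝ) : pt2 a b 0 = a := rfl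
lemma pt2_1 (a b : ℝ) : pt2 a b 1 = b := rfl

lemma ext2 {x y : Pt} (h0 : x 0 = y 0) (h1 : x 1 = y 1) : x = y := by
  ext i; fin_cases i
  · exact h0
  · exact h1

lemma pt2_eta (x : Pt) : pt2 (x 0) (x 1) = x := by
  apply ext2 <;> rfl

lemma cont_coord (i : Fin 2) : Continuous (fun z : Pt => z i) :=
  (continuous_apply i).comp (PiLp.continuous_ofLp 2 (fun _ : Fin 2 => ℝ))

lemma cont_pt2 : Continuous (fun p : ℝ × ℝ => pt2 p.1 p.2) := by
  apply Continuous.comp (PiLp.continuous_toLp 2 (fun _ : Fin 2 => ℝ))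
  apply continuous_pi
  intro i
  fin_cases i
  · exact continuous_fst
  · exact continuous_snd

lemma comb_coord (u v : ℝ) (x y : Pt) (i : Fin 2) :
    (u • x + v • y) i = u * x i + v * y i := rfl

lemma mem_seg (x y : Pt) {u v : ℝ} (h0 : 0 ≤ u) (h1 : 0 ≤ v) (huv : u + v = 1) :
    u • x + v • y ∈ segment ℝ x y :=
  ⟨u, v, h0, h1, huv, rfl⟩
/-- A signed monotone orthogonal chain in `S`. -/
def Chain (s0 s1 : ℝ) (S : Set Pt) (p : ℕ → Pt) (m : ℕ) : Prop :=
  p 0 ∈ S ∧ ∀ k, k < m → p (k+1) ∈ S ∧ (p k 0 = p (k+1) 0 ∨ p k 1 = p (k+1) 1)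
    ∧ 0 ≤ s0 * (p (k+1) 0 - p k 0) ∧ 0 ≤ s1 * (p (k+1) 1 - p k 1)

lemma Chain.mem {s0 s1 : ℝ} {S : Set Pt} {p : ℕ → Pt} {m : ℕ} (h : Chain s0 s1 S p m) :
    ∀ k, k ≤ m → p k ∈ S := by
  intro k hk
  rcases Nat.eq_zero_or_pos k with rfl | hpos
  · exact h.1
  · obtain ⟨j, rfl⟩ := Nat.exists_eq_succ_of_ne_zero (Nat.pos_iff_ne_zero.1 hpos)
    exact (h.2 j (by omega)).1

lemma staircase_of_Chain {s0 s1 : ℝ} (hs0 : s0 = 1 ∨ s0 = -1) (hs1 : s1 = 1 ∨ s1 = -1)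
    {S : Set Pt} (hS : Convex ℝ S) {p : ℕ → Pt} {m : ℕ}
    (h : Chain s0 s1 S p m) : IsStaircaseIn S p m := by
  have hsq0 : s0 * s0 = 1 := by rcases hs0 with rfl | rfl <;> norm_num
  have hsq1 : s1 * s1 = 1 := by rcases hs1 with rfl | rfl <;> norm_num
  constructor
  · intro k hk
    obtain ⟨hmem, he, h0, h1⟩ := h.2 k hk
    refine ⟨?_, hS.segment_subset (h.mem k (le_of_lt hk)) (h.mem (k+1) hk)⟩
    rcases he with he | he
    · refine ⟨1, ?_⟩
      intro j hj; fin_cases j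
      · exact he
      · exact absurd rfl hj
    · refine ⟨0, ?_⟩
      intro j hj; fin_cases j
      · exact absurd rfl hj
      · exact he
  · intro k hk l hl i _ _
    have hk' := h.2 k hk
    have hl' := h.2 l hl
    fin_cases i
    · have : 0 ≤ (s0 * (p (k + 1) 0 - p k 0)) * (s0 * (p (l + 1) 0 - p l 0)) :=
        mul_nonneg hk'.2.2.1 hl'.2.2.1
      calc (0:ℝ) ≤ (s0 * (p (k + 1) 0 - p k 0)) * (s0 * (p (l + 1) 0 - p l 0)) := this
        _ = (s0*s0) * ((p (k + 1) 0 - p k 0) * ((p (l + 1) 0 - p l 0))) := by ring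
        _ = (p (k + 1) 0 - p k 0) * (p (l + 1) 0 - p l 0) := by rw [hsq0]; ring
    · have : 0 ≤ (s1 * (p (k + 1) 1 - p k 1)) * (s1 * (p (l + 1) 1 - p l 1)) :=
        mul_nonneg hk'.2.2.2 hl'.2.2.2
      calc (0:ℝ) ≤ (s1 * (p (k + 1) 1 - p k 1)) * (s1 * (p (l + 1) 1 - p l 1)) := this
        _ = (s1*s1) * ((p (k + 1) 1 - p k 1) * ((p (l + 1) 1 - p l 1))) := by ring
        _ = (p (k + 1) 1 - p k 1) * (p (l + 1) 1 - p l 1) := by rw [hsq1]; ring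

/-- reversal -/
lemma Chain.reverse {s0 s1 : ℝ} {S : Set Pt} {p : ℕ → Pt} {m : ℕ} (h : Chain s0 s1 S p m) :
    Chain (-s0) (-s1) S (fun k => p (m - k)) m := by
  constructor
  · simpa using h.mem m (le_refl m)
  · intro k hk
    have hj : m - k = (m - (k+1)) + 1 := by omega
    have h' := h.2 (m - (k+1)) (by omega)
    refine ⟨h.mem _ (by omega), ?_, ?_, ?_⟩
    · show p (m - k) 0 = p (m - (k+1)) 0 ∨ p (m - k) 1 = p (m - (k+1)) 1
      rw [hj]
      rcases h'.2.1 with he | he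
      · exact Or.inl he.symm
      · exact Or.inr he.symm
    · show 0 ≤ -s0 * (p (m - (k+1)) 0 - p (m - k) 0)
      rw [hj]
      nlinarith [h'.2.2.1]
    · show 0 ≤ -s1 * (p (m - (k+1)) 1 - p (m - k) 1)
      rw [hj]
      nlinarith [h'.2.2.2]

/-- coordinate sign flips -/
def refl2 (e0 e1 : ℝ) (z : Pt) : Pt := pt2 (e0 * z 0) (e1 * z 1)

lemma refl2_0 (e0 e1 : ℝ) (z : Pt) : refl2 e0 e1 z 0 = e0 * z 0 := rfl
lemma refl2_1 (e0 e1 : ℝ) (z : Pt) : refl2 e0 e1 z 1 = e1 * z 1 := rfl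

lemma refl2_invol {e0 e1 : ℝ} (h0 : e0 = 1 ∨ e0 = -1) (h1 : e1 = 1 ∨ e1 = -1) (z : Pt) :
    refl2 e0 e1 (refl2 e0 e1 z) = z := by
  apply ext2
  · rw [refl2_0, refl2_0]
    rcases h0 with rfl | rfl <;> ring
  · rw [refl2_1, refl2_1]
    rcases h1 with rfl | rfl <;> ring

lemma refl2_comb (e0 e1 u v : ℝ) (a b : Pt) :
    refl2 e0 e1 (u • a + v • b) = u • refl2 e0 e1 a + v • refl2 e0 e1 b := by
  apply ext2
  · show e0 * ((u • a + v • b) 0) = u * (e0 * a 0) + v * (e0 * b 0)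
    show e0 * (u * a 0 + v * b 0) = _
    ring
  · show e1 * ((u • a + v • b) 1) = u * (e1 * a 1) + v * (e1 * b 1)
    show e1 * (u * a 1 + v * b 1) = _
    ring

lemma refl2_convex {e0 e1 : ℝ} {S : Set Pt} (hS : Convex ℝ S) :
    Convex ℝ (refl2 e0 e1 '' S) := by
  intro a ha b hb u v hu hv huv
  obtain ⟨a', ha', rfl⟩ := ha
  obtain ⟨b', hb', rfl⟩ := hb
  exact ⟨u • a' + v • b', hS ha' hb' hu hv huv, by rw [refl2_comb]⟩

lemma refl2_cont (e0 e1 : ℝ) : Continuous (refl2 e0 e1) := by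
  have c0 : Continuous (fun z : Pt => z 0) :=
    (continuous_apply (0 : Fin 2)).comp (PiLp.continuous_ofLp 2 (fun _ : Fin 2 => ℝ))
  have c1 : Continuous (fun z : Pt => z 1) :=
    (continuous_apply (1 : Fin 2)).comp (PiLp.continuous_ofLp 2 (fun _ : Fin 2 => ℝ))
  have cp : Continuous (fun p : ℝ × ℝ => pt2 p.1 p.2) := by
    apply Continuous.comp (PiLp.continuous_toLp 2 (fun _ : Fin 2 => ℝ))
    apply continuous_pi
    intro i; fin_cases i
    · exact continuous_fst
    · exact continuous_snd
  exact cp.comp (((continuous_const.mul c0).prodMk (continuous_const.mul c1)))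

lemma refl2_closed {e0 e1 : ℝ} (h0 : e0 = 1 ∨ e0 = -1) (h1 : e1 = 1 ∨ e1 = -1)
    {S : Set Pt} (hS : IsClosed S) : IsClosed (refl2 e0 e1 '' S) := by
  have : refl2 e0 e1 '' S = refl2 e0 e1 ⁻¹' S := by
    ext z
    constructor
    · rintro ⟨w, hw, rfl⟩
      simpa [Set.mem_preimage, refl2_invol h0 h1] using hw
    · intro hz
      exact ⟨refl2 e0 e1 z, hz, refl2_invol h0 h1 _⟩
  rw [this]
  exact hS.preimage (refl2_cont e0 e1)

/-- transfer chains through refl2 -/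
lemma Chain.map {s0 s1 e0 e1 : ℝ} (h0 : e0 = 1 ∨ e0 = -1) (h1 : e1 = 1 ∨ e1 = -1)
    {S : Set Pt} {p : ℕ → Pt} {m : ℕ} (h : Chain s0 s1 S p m) :
    Chain (e0*s0) (e1*s1) (refl2 e0 e1 '' S) (fun k => refl2 e0 e1 (p k)) m := by
  constructor
  · exact ⟨p 0, h.1, rfl⟩
  · intro k hk
    obtain ⟨hmem, he, ha, hb⟩ := h.2 k hk
    refine ⟨⟨p (k+1), hmem, rfl⟩, ?_, ?_, ?_⟩
    · rcases he with he | he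
      · exact Or.inl (show e0 * p k 0 = e0 * p (k+1) 0 by rw [he])
      · exact Or.inr (show e1 * p k 1 = e1 * p (k+1) 1 by rw [he])
    · show 0 ≤ e0 * s0 * (e0 * p (k+1) 0 - e0 * p k 0)
      have : e0 * s0 * (e0 * p (k+1) 0 - e0 * p k 0) = (e0*e0) * (s0 * (p (k+1) 0 - p k 0)) := by ring
      rw [this]
      rcases h0 with rfl | rfl <;> simpa using ha
    · show 0 ≤ e1 * s1 * (e1 * p (k+1) 1 - e1 * p k 1)
      have : e1 * s1 * (e1 * p (k+1) 1 - e1 * p k 1) = (e1*e1) * (s1 * (p (k+1) 1 - p k 1)) := by ring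
      rw [this]
      rcases h1 with rfl | rfl <;> simpa using hb
lemma interp (A B E : ℝ) (h : B - A ≠ 0) :
    (1 - (E - A)/(B - A)) * A + ((E - A)/(B - A)) * B = E := by
  field_simp
  ring

lemma Chain.snoc {s0 s1 : ℝ} {S : Set Pt} {p : ℕ → Pt} {m : ℕ} (h : Chain s0 s1 S p m) {b : Pt}
    (hb : b ∈ S) (he : p m 0 = b 0 ∨ p m 1 = b 1)
    (h0 : 0 ≤ s0 * (b 0 - p m 0)) (h1 : 0 ≤ s1 * (b 1 - p m 1)) :
    Chain s0 s1 S (fun k => if k = m + 1 then b else p k) (m + 1) := by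
  constructor
  · simpa using h.1
  · intro k hk
    rcases Nat.lt_succ_iff_lt_or_eq.1 hk with hk' | hk'
    · have e1 : (if k + 1 = m + 1 then b else p (k+1)) = p (k+1) := by
        have : k + 1 ≠ m + 1 := by omega
        exact if_neg this
      have e0 : (if k = m + 1 then b else p k) = p k := by
        have : k ≠ m + 1 := by omega
        simp [this]
      simp only [e0, e1]
      exact h.2 k hk'
    · subst hk'
      have e1 : (if k + 1 = k + 1 then b else p (k+1)) = b := by simp
      have e0 : (if k = k + 1 then b else p k) = p k := by simp
      simp only [e0, e1]
      exact ⟨hb, he, h0, h1⟩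

set_option maxHeartbeats 1600000 in
/-- The main greedy construction: a NE-monotone chain between `x` and `y` when
`x` is strictly south-west of `y`. -/
lemma greedy_NE {K : Set Pt} (hconv : Convex ℝ K) (hcl : IsClosed K)
    (hNL : ∀ z ∈ K, ∃ w ∈ K, w ≠ z ∧ (w 0 = z 0 ∨ w 1 = z 1))
    {x y : Pt} (hx : x ∈ K) (hy : y ∈ K) (hxy0 : x 0 < y 0) (hxy1 : x 1 < y 1) :
    ∃ m p, p 0 = x ∧ p m = y ∧ Chain 1 1 K p m := by
  classical
  set P : Set Pt := {z : Pt | z ∈ K ∧ z 0 ≤ y 0 ∧ z 1 ≤ y 1} with hPdef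
  have hPsub : P ⊆ K := fun z hz => hz.1
  have hPconv : Convex ℝ P := by
    intro a ha b hb u v hu hv huv
    refine ⟨hconv ha.1 hb.1 hu hv huv, ?_, ?_⟩
    · show u * a 0 + v * b 0 ≤ y 0
      have h1 : u * a 0 + v * b 0 ≤ u * y 0 + v * y 0 :=
        add_le_add (mul_le_mul_of_nonneg_left ha.2.1 hu) (mul_le_mul_of_nonneg_left hb.2.1 hv)
      have h2 : u * y 0 + v * y 0 = y 0 := by rw [← add_mul, huv, one_mul]
      linarith
    · show u * a 1 + v * b 1 ≤ y 1
      have h1 : u * a 1 + v * b 1 ≤ u * y 1 + v * y 1 :=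
        add_le_add (mul_le_mul_of_nonneg_left ha.2.2 hu) (mul_le_mul_of_nonneg_left hb.2.2 hv)
      have h2 : u * y 1 + v * y 1 = y 1 := by rw [← add_mul, huv, one_mul]
      linarith
  have hPcl : IsClosed P := by
    have h1 : IsClosed {z : Pt | z 0 ≤ y 0} := isClosed_le (cont_coord 0) continuous_const
    have h2 : IsClosed {z : Pt | z 1 ≤ y 1} := isClosed_le (cont_coord 1) continuous_const
    have hPe : P = K ∩ ({z : Pt | z 0 ≤ y 0} ∩ {z : Pt | z 1 ≤ y 1}) := rfl
    rw [hPe]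
    exact hcl.inter (h1.inter h2)
  have hxP : x ∈ P := ⟨hx, le_of_lt hxy0, le_of_lt hxy1⟩
  have hyP : y ∈ P := ⟨hy, le_refl _, le_refl _⟩
  set f : ℝ → ℝ := fun t => sSup {s : ℝ | pt2 t s ∈ P} with hfdef
  set g : ℝ → ℝ := fun s => sSup {t : ℝ | pt2 t s ∈ P} with hgdef
  have hf : ∀ t s₀, pt2 t s₀ ∈ P → pt2 t (f t) ∈ P ∧ s₀ ≤ f t := by
    intro t s₀ h
    have hcl' : IsClosed {s : ℝ | pt2 t s ∈ P} :=
      hPcl.preimage (cont_pt2.comp (continuous_const.prodMk continuous_id))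
    have hbdd : BddAbove {s : ℝ | pt2 t s ∈ P} := ⟨y 1, fun s hs => hs.2.2⟩
    exact ⟨hcl'.csSup_mem ⟨s₀, h⟩ hbdd, le_csSup hbdd h⟩
  have hg : ∀ s t₀, pt2 t₀ s ∈ P → pt2 (g s) s ∈ P ∧ t₀ ≤ g s := by
    intro s t₀ h
    have hcl' : IsClosed {t : ℝ | pt2 t s ∈ P} :=
      hPcl.preimage (cont_pt2.comp (continuous_id.prodMk continuous_const))
    have hbdd : BddAbove {t : ℝ | pt2 t s ∈ P} := ⟨y 0, fun t ht => ht.2.1⟩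
    exact ⟨hcl'.csSup_mem ⟨t₀, h⟩ hbdd, le_csSup hbdd h⟩
  set T : ℕ → ℝ := fun n => Nat.rec (motive := fun _ => ℝ) (x 0) (fun _ t => g (f t)) n with hTdef
  set S : ℕ → ℝ := fun n => f (T n) with hSdef
  have hT0 : T 0 = x 0 := rfl
  have hTsucc : ∀ n, T (n + 1) = g (S n) := fun n => rfl
  have hx_eta : pt2 (x 0) (x 1) ∈ P := by rw [pt2_eta]; exact hxP
  have hTS : ∀ n, pt2 (T n) (S n) ∈ P := by
    intro n
    induction n with
    | zero => exact (hf (x 0) (x 1) hx_eta).1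
    | succ n ih =>
      have h1 : pt2 (T (n+1)) (S n) ∈ P := by
        rw [hTsucc]
        exact (hg (S n) (T n) ih).1
      exact (hf (T (n+1)) (S n) h1).1
  have hTmid : ∀ n, pt2 (T (n+1)) (S n) ∈ P := by
    intro n
    rw [hTsucc]
    exact (hg (S n) (T n) (hTS n)).1
  have hTmono : Monotone T := by
    apply monotone_nat_of_le_succ
    intro n
    rw [hTsucc]
    exact (hg (S n) (T n) (hTS n)).2
  have hSmono : Monotone S := by
    apply monotone_nat_of_le_succ
    intro n
    exact (hf (T (n+1)) (S n) (hTmid n)).2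
  have hTub : ∀ n, T n ≤ y 0 := fun n => (hTS n).2.1
  have hSub : ∀ n, S n ≤ y 1 := fun n => (hTS n).2.2
  have hSx : ∀ n, x 1 ≤ S n := by
    intro n
    calc x 1 ≤ S 0 := (hf (x 0) (x 1) hx_eta).2
    _ ≤ S n := hSmono (Nat.zero_le n)
  have hTx : ∀ n, x 0 ≤ T n := by
    intro n
    calc x 0 = T 0 := rfl
    _ ≤ T n := hTmono (Nat.zero_le n)
  have bddT : BddAbove (Set.range T) := ⟨y 0, by rintro _ ⟨n, rfl⟩; exact hTub n⟩
  have bddS : BddAbove (Set.range S) := ⟨y 1, by rintro _ ⟨n, rfl⟩; exact hSub n⟩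
  set tstar : ℝ := ⨆ n, T n with htstar
  set sstar : ℝ := ⨆ n, S n with hsstar
  have hTle : ∀ n, T n ≤ tstar := fun n => le_ciSup bddT n
  have hSle : ∀ n, S n ≤ sstar := fun n => le_ciSup bddS n
  have htstary : tstar ≤ y 0 := ciSup_le hTub
  have hsstary : sstar ≤ y 1 := ciSup_le hSub
  have hxt : x 0 ≤ tstar := le_trans (hTx 0) (hTle 0)
  have hxs : x 1 ≤ sstar := le_trans (hSx 0) (hSle 0)
  have tendT : Filter.Tendsto T Filter.atTop (nhds tstar) := tendsto_atTop_ciSup hTmono bddT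
  have tendS : Filter.Tendsto S Filter.atTop (nhds sstar) := tendsto_atTop_ciSup hSmono bddS
  have hmstar : pt2 tstar sstar ∈ P := by
    apply hPcl.mem_of_tendsto ((cont_pt2.tendsto (tstar, sstar)).comp (tendT.prodMk_nhds tendS))
    exact Filter.Eventually.of_forall hTS
  have hgle : ∀ (n : ℕ) (t' : ℝ), pt2 t' (S n) ∈ P → t' ≤ T (n+1) := by
    intro n t' h
    rw [hTsucc]
    exact (hg (S n) t' h).2
  have hfle : ∀ (n : ℕ) (s' : ℝ), pt2 (T n) s' ∈ P → s' ≤ S n := by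
    intro n s' h
    exact (hf (T n) s' h).2
  have hterm : ∃ n, T n = y 0 ∨ S n = y 1 := by
    by_contra hterm
    push_neg at hterm
    have hTlt : ∀ n, T n < y 0 := fun n => lt_of_le_of_ne (hTub n) (hterm n).1
    have hSlt : ∀ n, S n < y 1 := fun n => lt_of_le_of_ne (hSub n) (hterm n).2
    have hA1 : ∀ w ∈ P, w 1 = sstar → w 0 ≤ tstar := by
      intro w hw hw1
      by_contra hcon
      push_neg at hcon
      rcases eq_or_lt_of_le hxs with hse | hse
      · have hS0 : S 0 = x 1 := le_antisymm (by rw [hse]; exact hSle 0) (hSx 0)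
        have h1 : pt2 (w 0) (S 0) ∈ P := by
          have : pt2 (w 0) (w 1) ∈ P := by rw [pt2_eta]; exact hw
          rw [hS0, hse, ← hw1]
          exact this
        have h2 : w 0 ≤ T 1 := hgle 0 (w 0) h1
        exact absurd (le_trans h2 (hTle 1)) (not_le.2 hcon)
      · have hw0x : x 0 < w 0 := lt_of_le_of_lt hxt hcon
        set r : ℝ := (tstar - x 0) / (w 0 - x 0) with hr
        have hrlt : r < 1 := (div_lt_one (by linarith)).2 (by linarith)
        have hr0 : 0 ≤ r := div_nonneg (by linarith) (by linarith)
        have hkey : x 1 + r * (sstar - x 1) < sstar := by nlinarith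
        obtain ⟨n, hn⟩ := exists_lt_of_lt_ciSup (show x 1 + r * (sstar - x 1) < sstar from hkey)
        set μ : ℝ := (S n - x 1) / (sstar - x 1) with hμ
        have hμ0 : 0 ≤ μ := div_nonneg (by linarith [hSx n]) (by linarith)
        have hμ1 : μ ≤ 1 := (div_le_one (by linarith)).2 (by linarith [hSle n])
        have hμr : r < μ := by
          rw [hμ, lt_div_iff₀ (by linarith)]
          linarith
        set v : Pt := (1 - μ) • x + μ • w with hv
        have hvP : v ∈ P := hPconv hxP hw (by linarith) hμ0 (by ring)
        have hv1 : v 1 = S n := by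
          rw [hv, comb_coord, hw1, hμ]
          exact interp (x 1) sstar (S n) (by linarith)
        have hv0 : tstar < v 0 := by
          rw [hv, comb_coord]
          have hre : r * (w 0 - x 0) = tstar - x 0 := by
            rw [hr]
            exact div_mul_cancel₀ _ (by linarith : w 0 - x 0 ≠ 0)
          nlinarith
        have : pt2 (v 0) (S n) ∈ P := by
          rw [← hv1, pt2_eta]
          exact hvP
        have := le_trans (hgle n (v 0) this) (hTle (n+1))
        linarith
    have hA2 : ∀ w ∈ P, w 0 = tstar → w 1 ≤ sstar := by
      intro w hw hw0
      by_contra hcon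
      push_neg at hcon
      rcases eq_or_lt_of_le hxt with hte | hte
      · have hTn : ∀ n, T n = x 0 := fun n => le_antisymm (by rw [hte]; exact hTle n) (hTx n)
        have h1 : pt2 (T 0) (w 1) ∈ P := by
          have : pt2 (w 0) (w 1) ∈ P := by rw [pt2_eta]; exact hw
          rw [hT0, hte, ← hw0]
          exact this
        have h2 : w 1 ≤ S 0 := hfle 0 (w 1) h1
        exact absurd (le_trans h2 (hSle 0)) (not_le.2 hcon)
      · have hw1x : x 1 < w 1 := lt_of_le_of_lt hxs hcon
        set r : ℝ := (sstar - x 1) / (w 1 - x 1) with hr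
        have hrlt : r < 1 := (div_lt_one (by linarith)).2 (by linarith)
        have hr0 : 0 ≤ r := div_nonneg (by linarith) (by linarith)
        have hkey : x 0 + r * (tstar - x 0) < tstar := by nlinarith
        obtain ⟨n, hn⟩ := exists_lt_of_lt_ciSup (show x 0 + r * (tstar - x 0) < tstar from hkey)
        set μ : ℝ := (T n - x 0) / (tstar - x 0) with hμ
        have hμ0 : 0 ≤ μ := div_nonneg (by linarith [hTx n]) (by linarith)
        have hμ1 : μ ≤ 1 := (div_le_one (by linarith)).2 (by linarith [hTle n])
        have hμr : r < μ := by
          rw [hμ, lt_div_iff₀ (by linarith)]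
          linarith
        set v : Pt := (1 - μ) • x + μ • w with hv
        have hvP : v ∈ P := hPconv hxP hw (by linarith) hμ0 (by ring)
        have hv0 : v 0 = T n := by
          rw [hv, comb_coord, hw0, hμ]
          exact interp (x 0) tstar (T n) (by linarith)
        have hv1 : sstar < v 1 := by
          rw [hv, comb_coord]
          have hre : r * (w 1 - x 1) = sstar - x 1 := by
            rw [hr]
            exact div_mul_cancel₀ _ (by linarith : w 1 - x 1 ≠ 0)
          nlinarith
        have : pt2 (T n) (v 1) ∈ P := by
          rw [← hv0, pt2_eta]
          exact hvP
        have := le_trans (hfle n (v 1) this) (hSle n)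
        linarith
    -- tail helpers
    have tail_left : ∀ q ∈ P, q 1 = y 1 → q 0 < y 0 → tstar = y 0 → False := by
      intro q hq hq1 hq0 hty
      have : q 0 < tstar := by rw [hty]; exact hq0
      obtain ⟨n, hn⟩ := exists_lt_of_lt_ciSup (show q 0 < tstar from this)
      set ν : ℝ := (T n - q 0) / (y 0 - q 0) with hν
      have hν0 : 0 ≤ ν := div_nonneg (by linarith) (by linarith)
      have hν1 : ν ≤ 1 := (div_le_one (by linarith)).2 (by linarith [hTub n])
      set u : Pt := (1 - ν) • q + ν • y with hu
      have huP : u ∈ P := hPconv hq hyP (by linarith) hν0 (by ring)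
      have hu0 : u 0 = T n := by
        rw [hu, comb_coord, hν]
        exact interp (q 0) (y 0) (T n) (by linarith)
      have hu1 : u 1 = y 1 := by
        rw [hu, comb_coord, hq1]
        ring
      have : pt2 (T n) (y 1) ∈ P := by
        rw [← hu0, ← hu1, pt2_eta]
        exact huP
      have h4 := hfle n (y 1) this
      exact (hterm n).2 (le_antisymm (hSub n) h4)
    have tail_down : ∀ q ∈ P, q 0 = y 0 → q 1 < y 1 → sstar = y 1 → False := by
      intro q hq hq0 hq1 hsy
      have : q 1 < sstar := by rw [hsy]; exact hq1
      obtain ⟨n, hn⟩ := exists_lt_of_lt_ciSup (show q 1 < sstar from this)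
      set ν : ℝ := (S n - q 1) / (y 1 - q 1) with hν
      have hν0 : 0 ≤ ν := div_nonneg (by linarith) (by linarith)
      have hν1 : ν ≤ 1 := (div_le_one (by linarith)).2 (by linarith [hSub n])
      set u : Pt := (1 - ν) • q + ν • y with hu
      have huP : u ∈ P := hPconv hq hyP (by linarith) hν0 (by ring)
      have hu1 : u 1 = S n := by
        rw [hu, comb_coord, hν]
        exact interp (q 1) (y 1) (S n) (by linarith)
      have hu0 : u 0 = y 0 := by
        rw [hu, comb_coord, hq0]
        ring
      have : pt2 (y 0) (S n) ∈ P := by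
        rw [← hu0, ← hu1, pt2_eta]
        exact huP
      have h2 := hgle n (y 0) this
      have h3 := hTub (n+1)
      exact absurd (le_antisymm h3 h2) (hterm (n+1)).1
    rcases eq_or_lt_of_le htstary with hty | hty
    · -- tstar = y 0
      have hsy : sstar = y 1 := le_antisymm hsstary (hA2 y hyP hty.symm)
      obtain ⟨w, hwK, hwne, hwline⟩ := hNL y hy
      rcases hwline with hw0 | hw1
      · -- vertical chord : w 0 = y 0
        have hwne1 : w 1 ≠ y 1 := by
          intro h
          exact hwne (ext2 hw0 h)
        rcases lt_or_gt_of_ne hwne1 with hlt | hgt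
        · exact tail_down w ⟨hwK, le_of_eq hw0, le_of_lt hlt⟩ hw0 hlt hsy
        · -- up chord, produce a left chord
          set μ : ℝ := (y 1 - x 1) / (w 1 - x 1) with hμ
          have hwx1 : x 1 < w 1 := lt_trans hxy1 hgt
          have hμ0 : 0 < μ := div_pos (by linarith) (by linarith)
          have hμ1 : μ < 1 := (div_lt_one (by linarith)).2 (by linarith)
          set v : Pt := (1 - μ) • x + μ • w with hv
          have hvK : v ∈ K := hconv hx hwK (by linarith) (le_of_lt hμ0) (by ring)
          have hv1 : v 1 = y 1 := by
            rw [hv, comb_coord, hμ]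
            exact interp (x 1) (w 1) (y 1) (by linarith)
          have hv0 : v 0 < y 0 := by
            rw [hv, comb_coord, hw0]
            nlinarith
          exact tail_left v ⟨hvK, le_of_lt hv0, le_of_eq hv1⟩ hv1 hv0 hty
      · -- horizontal chord : w 1 = y 1
        have hwne0 : w 0 ≠ y 0 := by
          intro h
          exact hwne (ext2 h hw1)
        rcases lt_or_gt_of_ne hwne0 with hlt | hgt
        · exact tail_left w ⟨hwK, le_of_lt hlt, le_of_eq hw1⟩ hw1 hlt hty
        · set μ : ℝ := (y 0 - x 0) / (w 0 - x 0) with hμ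
          have hwx0 : x 0 < w 0 := lt_trans hxy0 hgt
          have hμ0 : 0 < μ := div_pos (by linarith) (by linarith)
          have hμ1 : μ < 1 := (div_lt_one (by linarith)).2 (by linarith)
          set v : Pt := (1 - μ) • x + μ • w with hv
          have hvK : v ∈ K := hconv hx hwK (by linarith) (le_of_lt hμ0) (by ring)
          have hv0 : v 0 = y 0 := by
            rw [hv, comb_coord, hμ]
            exact interp (x 0) (w 0) (y 0) (by linarith)
          have hv1 : v 1 < y 1 := by
            rw [hv, comb_coord, hw1]
            nlinarith
          exact tail_down v ⟨hvK, le_of_eq hv0, le_of_lt hv1⟩ hv0 hv1 hsy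
    · -- tstar < y 0
      have hss : sstar < y 1 := by
        rcases eq_or_lt_of_le hsstary with h | h
        · exfalso
          have := hA1 y hyP h.symm
          linarith
        · exact h
      set m : Pt := pt2 tstar sstar with hm
      have hmK : m ∈ K := hPsub hmstar
      obtain ⟨w, hwK, hwne, hwline⟩ := hNL m hmK
      have hm0 : m 0 = tstar := rfl
      have hm1 : m 1 = sstar := rfl
      rcases hwline with hw0 | hw1
      · -- vertical : w 0 = tstar
        have hwne1 : w 1 ≠ sstar := fun h => hwne (ext2 (by rw [hw0, hm0]) (by rw [h, hm1]))
        rcases lt_or_gt_of_ne hwne1 with hlt | hgt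
        · -- w below : point on [w, y] at height sstar, strictly right of tstar
          set ν : ℝ := (sstar - w 1) / (y 1 - w 1) with hν
          have hν0 : 0 < ν := div_pos (by linarith) (by linarith)
          have hν1 : ν < 1 := (div_lt_one (by linarith)).2 (by linarith)
          set q : Pt := (1 - ν) • w + ν • y with hq
          have hqK : q ∈ K := hconv hwK hy (by linarith) (le_of_lt hν0) (by ring)
          have hq1 : q 1 = sstar := by
            rw [hq, comb_coord, hν]
            exact interp (w 1) (y 1) sstar (by linarith)
          have hq0 : tstar < q 0 ∧ q 0 ≤ y 0 := by
            rw [hq, comb_coord, hw0, hm0]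
            constructor
            · nlinarith
            · nlinarith
          have := hA1 q ⟨hqK, hq0.2, by rw [hq1]; linarith⟩ hq1
          linarith [hq0.1]
        · -- w above
          by_cases hwy : w 1 ≤ y 1
          · have := hA2 w ⟨hwK, by rw [hw0, hm0]; linarith, hwy⟩ (by rw [hw0, hm0])
            linarith
          · push_neg at hwy
            set ν : ℝ := (y 1 - sstar) / (w 1 - sstar) with hν
            have hν0 : 0 < ν := div_pos (by linarith) (by linarith)
            have hν1 : ν < 1 := (div_lt_one (by linarith)).2 (by linarith)
            set q : Pt := (1 - ν) • m + ν • w with hq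
            have hqK : q ∈ K := hconv hmK hwK (by linarith) (le_of_lt hν0) (by ring)
            have hq1 : q 1 = y 1 := by
              have he : q 1 = (1 - ν) * m 1 + ν * w 1 := rfl
              rw [he, hm1, hν]
              exact interp sstar (w 1) (y 1) (by linarith)
            have hq0 : q 0 = tstar := by
              have he : q 0 = (1 - ν) * m 0 + ν * w 0 := rfl
              rw [he, hm0, hw0, hm0]
              ring
            have := hA2 q ⟨hqK, by rw [hq0]; linarith, le_of_eq hq1⟩ hq0
            linarith
      · -- horizontal : w 1 = sstar
        have hwne0 : w 0 ≠ tstar := fun h => hwne (ext2 (by rw [h, hm0]) (by rw [hw1, hm1]))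
        rcases lt_or_gt_of_ne hwne0 with hlt | hgt
        · set ν : ℝ := (tstar - w 0) / (y 0 - w 0) with hν
          have hν0 : 0 < ν := div_pos (by linarith) (by linarith)
          have hν1 : ν < 1 := (div_lt_one (by linarith)).2 (by linarith)
          set q : Pt := (1 - ν) • w + ν • y with hq
          have hqK : q ∈ K := hconv hwK hy (by linarith) (le_of_lt hν0) (by ring)
          have hq0 : q 0 = tstar := by
            rw [hq, comb_coord, hν]
            exact interp (w 0) (y 0) tstar (by linarith)
          have hq1 : sstar < q 1 ∧ q 1 ≤ y 1 := by
            rw [hq, comb_coord, hw1, hm1]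
            constructor
            · nlinarith
            · nlinarith
          have := hA2 q ⟨hqK, by rw [hq0]; linarith, hq1.2⟩ hq0
          linarith [hq1.1]
        · by_cases hwy : w 0 ≤ y 0
          · have := hA1 w ⟨hwK, hwy, by rw [hw1, hm1]; linarith⟩ (by rw [hw1, hm1])
            linarith
          · push_neg at hwy
            set ν : ℝ := (y 0 - tstar) / (w 0 - tstar) with hν
            have hν0 : 0 < ν := div_pos (by linarith) (by linarith)
            have hν1 : ν < 1 := (div_lt_one (by linarith)).2 (by linarith)
            set q : Pt := (1 - ν) • m + ν • w with hq
            have hqK : q ∈ K := hconv hmK hwK (by linarith) (le_of_lt hν0) (by ring)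
            have hq0 : q 0 = y 0 := by
              have he : q 0 = (1 - ν) * m 0 + ν * w 0 := rfl
              rw [he, hm0, hν]
              exact interp tstar (w 0) (y 0) (by linarith)
            have hq1 : q 1 = sstar := by
              have he : q 1 = (1 - ν) * m 1 + ν * w 1 := rfl
              rw [he, hm1, hw1, hm1]
              ring
            have := hA1 q ⟨hqK, le_of_eq hq0, by rw [hq1]; linarith⟩ hq1
            linarith
  -- chains to every greedy point
  have chainTo : ∀ n, ∃ m p, p 0 = x ∧ p m = pt2 (T n) (S n) ∧ Chain 1 1 K p m := by
    intro n
    induction n with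
    | zero =>
      refine ⟨1, fun k => Nat.rec (motive := fun _ => Pt) x (fun _ _ => pt2 (x 0) (S 0)) k,
        rfl, rfl, hx, ?_⟩
      intro k hk
      have hk0 : k = 0 := by omega
      subst hk0
      refine ⟨hPsub (hTS 0), Or.inl rfl, ?_, ?_⟩
      · show (0:ℝ) ≤ 1 * (pt2 (x 0) (S 0) 0 - x 0)
        rw [pt2_0]
        simp
      · show (0:ℝ) ≤ 1 * (pt2 (x 0) (S 0) 1 - x 1)
        rw [pt2_1, one_mul]
        have := hSx 0
        linarith
    | succ n ih =>
      obtain ⟨m, p, hp0, hpm, hc⟩ := ih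
      have hb1 : pt2 (T (n+1)) (S n) ∈ K := hPsub (hTmid n)
      have hc1 : Chain 1 1 K (fun k => if k = m + 1 then pt2 (T (n+1)) (S n) else p k) (m+1) := by
        apply hc.snoc hb1
        · rw [hpm]
          exact Or.inr rfl
        · rw [hpm, pt2_0, pt2_0]
          simpa using hTmono (Nat.le_succ n)
        · rw [hpm, pt2_1, pt2_1]
          simp
      have hb2 : pt2 (T (n+1)) (S (n+1)) ∈ K := hPsub (hTS (n+1))
      have hend : (fun k => if k = m + 1 then pt2 (T (n+1)) (S n) else p k) (m+1)
          = pt2 (T (n+1)) (S n) := by simp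
      refine ⟨m+2, _, ?_, ?_, hc1.snoc hb2 ?_ ?_ ?_⟩
      · simp [hp0]
      · simp
      · rw [if_pos rfl]
        exact Or.inl rfl
      · rw [if_pos rfl, pt2_0, pt2_0]
        simp
      · rw [if_pos rfl, pt2_1, pt2_1]
        simpa using hSmono (Nat.le_succ n)
  obtain ⟨n₀, hn₀⟩ := hterm
  obtain ⟨m, p, hp0, hpm, hc⟩ := chainTo n₀
  rcases hn₀ with hTy | hSy
  · refine ⟨m+1, _, by simp [hp0], by simp, hc.snoc hy ?_ ?_ ?_⟩
    · rw [hpm, pt2_0, hTy]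
      exact Or.inl rfl
    · rw [hpm, pt2_0, hTy]
      simp
    · rw [hpm, pt2_1]
      simpa using hSub n₀
  · refine ⟨m+1, _, by simp [hp0], by simp, hc.snoc hy ?_ ?_ ?_⟩
    · rw [hpm, pt2_1, hSy]
      exact Or.inr rfl
    · rw [hpm, pt2_0]
      simpa using hTub n₀
    · rw [hpm, pt2_1, hSy]
      simp
lemma refl2_image_image {e0 e1 : ℝ} (h0 : e0 = 1 ∨ e0 = -1) (h1 : e1 = 1 ∨ e1 = -1) (S : Set Pt) :
    refl2 e0 e1 '' (refl2 e0 e1 '' S) = S := by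
  ext z
  constructor
  · rintro ⟨w, ⟨v, hv, rfl⟩, rfl⟩
    rwa [refl2_invol h0 h1]
  · intro hz
    exact ⟨refl2 e0 e1 z, ⟨z, hz, rfl⟩, refl2_invol h0 h1 z⟩

lemma refl2_NL {e0 e1 : ℝ} (h0 : e0 = 1 ∨ e0 = -1) (h1 : e1 = 1 ∨ e1 = -1) {K : Set Pt}
    (hNL : ∀ z ∈ K, ∃ w ∈ K, w ≠ z ∧ (w 0 = z 0 ∨ w 1 = z 1)) :
    ∀ z' ∈ refl2 e0 e1 '' K, ∃ w' ∈ refl2 e0 e1 '' K, w' ≠ z' ∧ (w' 0 = z' 0 ∨ w' 1 = z' 1) := by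
  rintro z' ⟨z, hz, rfl⟩
  obtain ⟨w, hw, hne, hli⟩ := hNL z hz
  refine ⟨refl2 e0 e1 w, ⟨w, hw, rfl⟩, ?_, ?_⟩
  · intro h
    apply hne
    have := congrArg (refl2 e0 e1) h
    rwa [refl2_invol h0 h1, refl2_invol h0 h1] at this
  · rcases hli with hli | hli
    · exact Or.inl (by rw [refl2_0, refl2_0, hli])
    · exact Or.inr (by rw [refl2_1, refl2_1, hli])

lemma staircase_single {K : Set Pt} (hconv : Convex ℝ K) {x y : Pt} (hx : x ∈ K) (hy : y ∈ K)
    (he : x 0 = y 0 ∨ x 1 = y 1) :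
    ∃ n p, p 0 = x ∧ p n = y ∧ IsStaircaseIn K p n := by
  refine ⟨1, fun k => Nat.rec (motive := fun _ => Pt) x (fun _ _ => y) k, rfl, rfl, ?_, ?_⟩
  · intro k hk
    have hk0 : k = 0 := by omega
    subst hk0
    constructor
    · rcases he with he | he
      · refine ⟨1, ?_⟩
        intro j hj
        fin_cases j
        · exact he
        · exact absurd rfl hj
      · refine ⟨0, ?_⟩
        intro j hj
        fin_cases j
        · exact absurd rfl hj
        · exact he
    · exact hconv.segment_subset hx hy
  · intro k hk l hl i _ _
    have hk0 : k = 0 := by omega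
    have hl0 : l = 0 := by omega
    subst hk0; subst hl0
    exact mul_self_nonneg _

theorem staircaseConnected_of_NL {K : Set Pt} (hconv : Convex ℝ K) (hcl : IsClosed K)
    (hNL : ∀ z ∈ K, ∃ w ∈ K, w ≠ z ∧ (w 0 = z 0 ∨ w 1 = z 1)) : StaircaseConnected K := by
  intro x hx y hy
  by_cases he : x 0 = y 0 ∨ x 1 = y 1
  · exact staircase_single hconv hx hy he
  · push_neg at he
    rcases lt_or_gt_of_ne he.1 with h0 | h0 <;> rcases lt_or_gt_of_ne he.2 with h1 | h1
    · -- NE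
      obtain ⟨m, p, hp0, hpm, hc⟩ := greedy_NE hconv hcl hNL hx hy h0 h1
      exact ⟨m, p, hp0, hpm, staircase_of_Chain (Or.inl rfl) (Or.inl rfl) hconv hc⟩
    · -- SE : x 0 < y 0, y 1 < x 1 : reflect coordinate 1
      have e0 : (1:ℝ) = 1 ∨ (1:ℝ) = -1 := Or.inl rfl
      have e1 : (-1:ℝ) = 1 ∨ (-1:ℝ) = -1 := Or.inr rfl
      have hK' := refl2_convex (e0 := 1) (e1 := -1) hconv
      have hcl' := refl2_closed e0 e1 hcl
      have hNL' := refl2_NL e0 e1 hNL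
      have hx' : refl2 1 (-1) x ∈ refl2 1 (-1) '' K := ⟨x, hx, rfl⟩
      have hy' : refl2 1 (-1) y ∈ refl2 1 (-1) '' K := ⟨y, hy, rfl⟩
      have hlt0 : refl2 1 (-1) x 0 < refl2 1 (-1) y 0 := by
        rw [refl2_0, refl2_0]
        linarith
      have hlt1 : refl2 1 (-1) x 1 < refl2 1 (-1) y 1 := by
        rw [refl2_1, refl2_1]
        linarith
      obtain ⟨m, p, hp0, hpm, hc⟩ := greedy_NE hK' hcl' hNL' hx' hy' hlt0 hlt1
      have hc2 := hc.map e0 e1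
      rw [refl2_image_image e0 e1] at hc2
      refine ⟨m, fun k => refl2 1 (-1) (p k), ?_, ?_, ?_⟩
      · show refl2 1 (-1) (p 0) = x
        rw [hp0, refl2_invol e0 e1]
      · show refl2 1 (-1) (p m) = y
        rw [hpm, refl2_invol e0 e1]
      · exact staircase_of_Chain (Or.inl (by norm_num)) (Or.inr (by norm_num)) hconv hc2
    · -- NW : y 0 < x 0, x 1 < y 1 : reflect coordinate 0
      have e0 : (-1:ℝ) = 1 ∨ (-1:ℝ) = -1 := Or.inr rfl
      have e1 : (1:ℝ) = 1 ∨ (1:ℝ) = -1 := Or.inl rfl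
      have hK' := refl2_convex (e0 := -1) (e1 := 1) hconv
      have hcl' := refl2_closed e0 e1 hcl
      have hNL' := refl2_NL e0 e1 hNL
      have hx' : refl2 (-1) 1 x ∈ refl2 (-1) 1 '' K := ⟨x, hx, rfl⟩
      have hy' : refl2 (-1) 1 y ∈ refl2 (-1) 1 '' K := ⟨y, hy, rfl⟩
      have hlt0 : refl2 (-1) 1 x 0 < refl2 (-1) 1 y 0 := by
        rw [refl2_0, refl2_0]
        linarith
      have hlt1 : refl2 (-1) 1 x 1 < refl2 (-1) 1 y 1 := by
        rw [refl2_1, refl2_1]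
        linarith
      obtain ⟨m, p, hp0, hpm, hc⟩ := greedy_NE hK' hcl' hNL' hx' hy' hlt0 hlt1
      have hc2 := hc.map e0 e1
      rw [refl2_image_image e0 e1] at hc2
      refine ⟨m, fun k => refl2 (-1) 1 (p k), ?_, ?_, ?_⟩
      · show refl2 (-1) 1 (p 0) = x
        rw [hp0, refl2_invol e0 e1]
      · show refl2 (-1) 1 (p m) = y
        rw [hpm, refl2_invol e0 e1]
      · exact staircase_of_Chain (Or.inr (by norm_num)) (Or.inl (by norm_num)) hconv hc2
    · -- SW : swap x and y, then reverse
      obtain ⟨m, p, hp0, hpm, hc⟩ := greedy_NE hconv hcl hNL hy hx h0 h1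
      have hcr := hc.reverse
      refine ⟨m, fun k => p (m - k), ?_, ?_, ?_⟩
      · show p (m - 0) = x
        rw [Nat.sub_zero, hpm]
      · show p (m - m) = y
        rw [Nat.sub_self, hp0]
      · exact staircase_of_Chain (Or.inr (by norm_num)) (Or.inr (by norm_num)) hconv hcr
/-! ### Theorem B : finding a good rotation angle -/

def fdir (θ : ℝ) (z : Pt) : ℝ := Real.cos θ * z 0 + Real.sin θ * z 1

/-- `z` is the unique maximizer of the direction `θ` functional over `K`. -/
def UU (K : Set Pt) (θ : ℝ) (z : Pt) : Prop :=
  z ∈ K ∧ ∀ w ∈ K, fdir θ w ≤ fdir θ z ∧ (fdir θ w = fdir θ z → w = z)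

/-- `z` maximizes the direction `θ` functional over `K` (not necessarily uniquely). -/
def MaxAt (K : Set Pt) (z : Pt) (θ : ℝ) : Prop :=
  z ∈ K ∧ ∀ w ∈ K, fdir θ w ≤ fdir θ z

def QQ (K : Set Pt) (z : Pt) (φ : ℝ) : Prop := UU K φ z ∧ UU K (φ + Real.pi/2) z

def PP (K : Set Pt) (φ : ℝ) : Prop := ∃ z, QQ K z φ

lemma fdir_two_pi (θ : ℝ) (z : Pt) : fdir (θ + 2*Real.pi) z = fdir θ z := by
  unfold fdir
  rw [Real.cos_add_two_pi, Real.sin_add_two_pi]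

lemma fdir_pi (θ : ℝ) (z : Pt) : fdir (θ + Real.pi) z = -fdir θ z := by
  unfold fdir
  rw [Real.cos_add_pi, Real.sin_add_pi]
  ring

lemma UU_congr {K : Set Pt} {θ θ' : ℝ} {z : Pt} (h : UU K θ z)
    (he : ∀ w, fdir θ' w = fdir θ w) : UU K θ' z := by
  refine ⟨h.1, fun w hw => ?_⟩
  rw [he w, he z]
  exact h.2 w hw

lemma UU_two_pi {K : Set Pt} {θ : ℝ} {z : Pt} (h : UU K θ z) : UU K (θ + 2*Real.pi) z :=
  UU_congr h (fun w => fdir_two_pi θ w)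

lemma UU_two_pi' {K : Set Pt} {θ : ℝ} {z : Pt} (h : UU K (θ + 2*Real.pi) z) : UU K θ z :=
  UU_congr h (fun w => (fdir_two_pi θ w).symm)

lemma MaxAt_two_pi {K : Set Pt} {θ : ℝ} {z : Pt} (h : MaxAt K z θ) : MaxAt K z (θ + 2*Real.pi) :=
  ⟨h.1, fun w hw => by rw [fdir_two_pi, fdir_two_pi]; exact h.2 w hw⟩

lemma UU.maxAt {K : Set Pt} {θ : ℝ} {z : Pt} (h : UU K θ z) : MaxAt K z θ :=
  ⟨h.1, fun w hw => (h.2 w hw).1⟩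

lemma eq_of_UU_MaxAt {K : Set Pt} {θ : ℝ} {z z' : Pt} (h : UU K θ z) (h' : MaxAt K z' θ) :
    z' = z :=
  (h.2 z' h'.1).2 (le_antisymm (h.2 z' h'.1).1 (h'.2 z h.1))

lemma eq_of_UU_UU {K : Set Pt} {θ : ℝ} {z z' : Pt} (h : UU K θ z) (h' : UU K θ z') : z' = z :=
  eq_of_UU_MaxAt h h'.maxAt

/-- trigonometric combination identity -/
lemma fdir_comb (φ1 φ2 ψ : ℝ) (z : Pt) :
    Real.sin (φ2 - φ1) * fdir ψ z
      = Real.sin (φ2 - ψ) * fdir φ1 z + Real.sin (ψ - φ1) * fdir φ2 z := by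
  unfold fdir
  rw [Real.sin_sub, Real.sin_sub, Real.sin_sub]
  ring

lemma UU_between {K : Set Pt} {φ1 φ2 ψ : ℝ} {z : Pt} (h1 : UU K φ1 z) (h2 : UU K φ2 z)
    (ha : φ1 ≤ ψ) (hb : ψ ≤ φ2) (hw : φ2 - φ1 < Real.pi) : UU K ψ z := by
  rcases eq_or_lt_of_le ha with rfl | ha'
  · exact h1
  rcases eq_or_lt_of_le hb with rfl | hb'
  · exact h2
  have hs : 0 < Real.sin (φ2 - φ1) :=
    Real.sin_pos_of_pos_of_lt_pi (by linarith) (by linarith)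
  have hA : 0 < Real.sin (φ2 - ψ) :=
    Real.sin_pos_of_pos_of_lt_pi (by linarith) (by linarith)
  have hB : 0 < Real.sin (ψ - φ1) :=
    Real.sin_pos_of_pos_of_lt_pi (by linarith) (by linarith)
  refine ⟨h1.1, fun w hw' => ?_⟩
  have e1 := fdir_comb φ1 φ2 ψ w
  have e2 := fdir_comb φ1 φ2 ψ z
  have le1 := (h1.2 w hw').1
  have le2 := (h2.2 w hw').1
  constructor
  · nlinarith
  · intro heq
    have h3 : fdir φ1 w = fdir φ1 z := by nlinarith
    exact (h1.2 w hw').2 h3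

/-- a point of the interior rules out two antipodal maximal directions -/
lemma no_antipodal {K : Set Pt} (hint : (interior K).Nonempty) {z : Pt} {ψ ψ' : ℝ}
    (he : ψ' = ψ + Real.pi) (h : MaxAt K z ψ) (h' : MaxAt K z ψ') : False := by
  obtain ⟨p, hp⟩ := hint
  obtain ⟨ε, hε, hball⟩ := Metric.isOpen_iff.1 isOpen_interior p hp
  have hpK : p ∈ K := interior_subset hp
  set d : Pt := pt2 (Real.cos ψ) (Real.sin ψ) with hd
  have hdnorm : ‖d‖ = 1 := by
    rw [hd, EuclideanSpace.norm_eq]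
    rw [Fin.sum_univ_two]
    rw [pt2_0, pt2_1]
    rw [Real.norm_eq_abs, Real.norm_eq_abs, sq_abs, sq_abs]
    rw [Real.cos_sq_add_sin_sq]
    exact Real.sqrt_one
  set w : Pt := p + (ε/2) • d with hw
  have hwK : w ∈ K := by
    apply interior_subset
    apply hball
    simp only [Metric.mem_ball, hw]
    rw [dist_eq_norm]
    have : p + (ε/2) • d - p = (ε/2) • d := by abel
    rw [this, norm_smul, hdnorm, mul_one, Real.norm_eq_abs,
      abs_of_pos (by linarith : (0:ℝ) < ε/2)]
    linarith
  have hfw : fdir ψ w = fdir ψ p + ε/2 := by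
    unfold fdir
    have e0 : w 0 = p 0 + (ε/2) * Real.cos ψ := rfl
    have e1 : w 1 = p 1 + (ε/2) * Real.sin ψ := rfl
    rw [e0, e1]
    have := Real.cos_sq_add_sin_sq ψ
    nlinarith [this]
  have h1 : fdir ψ w ≤ fdir ψ z := h.2 w hwK
  have h2 : fdir ψ' p ≤ fdir ψ' z := h'.2 p hpK
  rw [he, fdir_pi, fdir_pi] at h2
  have h3 : fdir ψ z ≤ fdir ψ p := by linarith
  linarith

/-- Two `Q`-points of the same `z` are at distance `< π/2`, `... ≤ 3π/2` excluded. -/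
lemma ML1 {K : Set Pt} (hint : (interior K).Nonempty) {z : Pt} {φ1 φ2 : ℝ}
    (h1 : QQ K z φ1) (h2 : QQ K z φ2) (hle : φ1 + Real.pi/2 ≤ φ2)
    (hge : φ2 ≤ φ1 + 3*(Real.pi/2)) : False := by
  have hπ : 0 < Real.pi := Real.pi_pos
  rcases le_or_gt φ2 (φ1 + Real.pi) with hc | hc
  · -- φ1 + π ∈ [φ2, φ2 + π/2]
    have hU : UU K (φ1 + Real.pi) z := by
      apply UU_between h2.1 h2.2 hc (by linarith) (by linarith)
    exact no_antipodal hint rfl h1.1.maxAt hU.maxAt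
  · -- φ1 + π/2 + π ∈ [φ2, φ2 + π/2]
    have hU : UU K (φ1 + Real.pi/2 + Real.pi) z := by
      apply UU_between h2.1 h2.2 (by linarith) (by linarith) (by linarith)
    exact no_antipodal hint rfl h1.2.maxAt hU.maxAt

/-- pinning: two `Q`-points within (closed) distance `π/2` have the same witness. -/
lemma ML2 {K : Set Pt} {z z' : Pt} {φ φ' : ℝ} (h : QQ K z φ) (h' : QQ K z' φ')
    (ha : φ ≤ φ') (hb : φ' ≤ φ + Real.pi/2) : z' = z := by
  have hπ : 0 < Real.pi := Real.pi_pos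
  have hU : UU K φ' z := UU_between h.1 h.2 ha hb (by linarith)
  exact eq_of_UU_UU hU h'.1

/-- limit maximality -/
lemma maxAt_limit {K : Set Pt} {z : Pt} {ψ : ℝ} (hz : z ∈ K)
    (h : ∀ δ > (0:ℝ), ∃ φ, |φ - ψ| < δ ∧ UU K φ z) : MaxAt K z ψ := by
  refine ⟨hz, fun w hw => ?_⟩
  by_contra hcon
  push_neg at hcon
  set g : ℝ → ℝ := fun θ => fdir θ w - fdir θ z with hg
  have hgc : Continuous g := by
    apply Continuous.sub
    · exact ((Real.continuous_cos.mul continuous_const).add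
        (Real.continuous_sin.mul continuous_const))
    · exact ((Real.continuous_cos.mul continuous_const).add
        (Real.continuous_sin.mul continuous_const))
  have hgψ : 0 < g ψ := by simp [hg]; linarith
  have hc : ContinuousAt g ψ := hgc.continuousAt
  rw [Metric.continuousAt_iff] at hc
  obtain ⟨δ, hδ, hd⟩ := hc (g ψ) hgψ
  obtain ⟨φ, hφ, hU⟩ := h δ hδ
  have := hd (show dist φ ψ < δ by rwa [Real.dist_eq])
  rw [Real.dist_eq] at this
  have h2 : 0 < g φ := by
    rcases abs_lt.1 this with ⟨hl, _⟩
    linarith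
  have h3 : g φ ≤ 0 := by
    simp [hg]
    exact (hU.2 w hw).1
  linarith
lemma QQ_two_pi' {K : Set Pt} {z : Pt} {φ : ℝ} (h : QQ K z (φ + 2*Real.pi)) : QQ K z φ := by
  constructor
  · exact UU_two_pi' h.1
  · apply UU_two_pi'
    have he : φ + Real.pi/2 + 2*Real.pi = φ + 2*Real.pi + Real.pi/2 := by ring
    rw [he]
    exact h.2

lemma QQ_two_pi {K : Set Pt} {z : Pt} {φ : ℝ} (h : QQ K z φ) : QQ K z (φ + 2*Real.pi) := by
  constructor
  · exact UU_two_pi h.1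
  · have := UU_two_pi h.2
    have he : φ + Real.pi/2 + 2*Real.pi = φ + 2*Real.pi + Real.pi/2 := by ring
    rwa [he] at this

lemma cluster_top {K : Set Pt} (hint : (interior K).Nonempty) {z : Pt} {φ : ℝ}
    (hq : QQ K z φ) :
    ∃ b, φ ≤ b ∧ b ≤ φ + Real.pi/2 ∧
      (∀ δ > (0:ℝ), ∃ ψ, b - δ < ψ ∧ ψ ≤ b ∧ QQ K z ψ) ∧
      (∀ ψ, b < ψ → ψ < b + Real.pi/2 → ¬ QQ K z ψ) := by
  have hπ : 0 < Real.pi := Real.pi_pos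
  set A := {ψ : ℝ | φ ≤ ψ ∧ ψ ≤ φ + Real.pi/2 ∧ QQ K z ψ} with hA
  have hmem : φ ∈ A := ⟨le_refl _, by linarith, hq⟩
  have hne : A.Nonempty := ⟨φ, hmem⟩
  have hbdd : BddAbove A := ⟨φ + Real.pi/2, fun ψ hψ => hψ.2.1⟩
  have h1 : φ ≤ sSup A := le_csSup hbdd hmem
  have h2 : sSup A ≤ φ + Real.pi/2 := csSup_le hne (fun ψ hψ => hψ.2.1)
  refine ⟨sSup A, h1, h2, ?_, ?_⟩
  · intro δ hδ
    obtain ⟨ψ, hψA, hψgt⟩ := exists_lt_of_lt_csSup hne (by linarith : sSup A - δ < sSup A)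
    exact ⟨ψ, hψgt, le_csSup hbdd hψA, hψA.2.2⟩
  · intro ψ hgt hlt hQ
    rcases le_or_gt ψ (φ + Real.pi/2) with hle | hgt2
    · have : ψ ∈ A := ⟨le_trans h1 (le_of_lt hgt), hle, hQ⟩
      exact absurd (le_csSup hbdd this) (not_le.2 hgt)
    · exact ML1 hint hq hQ (le_of_lt hgt2) (by linarith)

lemma approach_max {K : Set Pt} {z : Pt} {b : ℝ}
    (happ : ∀ δ > (0:ℝ), ∃ ψ, b - δ < ψ ∧ ψ ≤ b ∧ QQ K z ψ) :
    MaxAt K z b ∧ MaxAt K z (b + Real.pi/2) := by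
  have hzK : z ∈ K := by
    obtain ⟨ψ, _, _, hQ⟩ := happ 1 one_pos
    exact hQ.1.1
  constructor
  · apply maxAt_limit hzK
    intro δ hδ
    obtain ⟨ψ, h1, h2, hQ⟩ := happ δ hδ
    exact ⟨ψ, by rw [abs_lt]; constructor <;> linarith, hQ.1⟩
  · apply maxAt_limit hzK
    intro δ hδ
    obtain ⟨ψ, h1, h2, hQ⟩ := happ δ hδ
    exact ⟨ψ + Real.pi/2, by rw [abs_lt]; constructor <;> linarith, hQ.2⟩

/-- no `P`-point exactly a quarter turn above a cluster top -/
lemma L1 {K : Set Pt} (hint : (interior K).Nonempty) {z : Pt} {b : ℝ}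
    (happ : ∀ δ > (0:ℝ), ∃ ψ, b - δ < ψ ∧ ψ ≤ b ∧ QQ K z ψ) :
    ¬ PP K (b + Real.pi/2) := by
  rintro ⟨z', hz'⟩
  obtain ⟨hM1, hM2⟩ := approach_max happ
  have heq : z = z' := eq_of_UU_MaxAt hz'.1 hM2
  subst heq
  exact no_antipodal hint (by ring : b + Real.pi/2 + Real.pi/2 = b + Real.pi) hM1 hz'.2.maxAt

/-- no `P`-point exactly three quarter turns above a cluster top -/
lemma L3 {K : Set Pt} (hint : (interior K).Nonempty) {z : Pt} {b : ℝ}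
    (happ : ∀ δ > (0:ℝ), ∃ ψ, b - δ < ψ ∧ ψ ≤ b ∧ QQ K z ψ) :
    ¬ PP K (b + 3*(Real.pi/2)) := by
  rintro ⟨z', hz'⟩
  obtain ⟨hM1, hM2⟩ := approach_max happ
  have hM2π : MaxAt K z (b + 2*Real.pi) := by
    have := MaxAt_two_pi hM1
    rwa [show b + 2*Real.pi = b + 2*Real.pi from rfl] at this
  have hU : UU K (b + 2*Real.pi) z' := by
    have := hz'.2
    rwa [show b + 3*(Real.pi/2) + Real.pi/2 = b + 2*Real.pi by ring] at this
  have heq : z = z' := eq_of_UU_MaxAt hU hM2π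
  subst heq
  exact no_antipodal hint (by ring : b + 3*(Real.pi/2) = b + Real.pi/2 + Real.pi)
    hM2 hz'.1.maxAt

/-- pin a `P`-point at distance `≤ π/2` above an approached cluster top -/
lemma pin_above {K : Set Pt} {z z' : Pt} {b ψ' : ℝ}
    (happ : ∀ δ > (0:ℝ), ∃ ψ, b - δ < ψ ∧ ψ ≤ b ∧ QQ K z ψ)
    (hq' : QQ K z' ψ') (h1 : b ≤ ψ') (h2 : ψ' < b + Real.pi/2) : z' = z := by
  have hδ : (0:ℝ) < b + Real.pi/2 - ψ' := by linarith
  obtain ⟨ψ, hψ1, hψ2, hQ⟩ := happ _ hδ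
  exact ML2 hQ hq' (by linarith) (by linarith)

theorem exists_anchor {K : Set Pt} (hint : (interior K).Nonempty)
    (H4 : ∀ θ : ℝ, PP K θ ∨ PP K (θ + Real.pi/2) ∨ PP K (θ + Real.pi)
      ∨ PP K (θ + 3*(Real.pi/2))) :
    ∃ z b, QQ K z b ∧ (∀ ψ, b < ψ → ψ < b + Real.pi/2 → ¬ QQ K z ψ) := by
  have hπ : 0 < Real.pi := Real.pi_pos
  -- an initial P-point
  have hstart : ∃ φ₁ z₁, QQ K z₁ φ₁ := by
    rcases H4 0 with h | h | h | h
    · exact ⟨0, h.choose, h.choose_spec⟩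
    · exact ⟨0 + Real.pi/2, h.choose, h.choose_spec⟩
    · exact ⟨0 + Real.pi, h.choose, h.choose_spec⟩
    · exact ⟨0 + 3*(Real.pi/2), h.choose, h.choose_spec⟩
  obtain ⟨φ₁, z₁, hz₁⟩ := hstart
  obtain ⟨b₁, hb₁φ, hb₁φ', happ₁, htop₁⟩ := cluster_top hint hz₁
  -- key dichotomy at a cluster top
  have key : ∀ (z : Pt) (b : ℝ),
      (∀ δ > (0:ℝ), ∃ ψ, b - δ < ψ ∧ ψ ≤ b ∧ QQ K z ψ) →
      (QQ K z b ∨ ∃ z', QQ K z' (b + Real.pi)) := by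
    intro z b happ
    rcases H4 b with h | h | h | h
    · left
      obtain ⟨z', hz'⟩ := h
      have := pin_above happ hz' (le_refl b) (by linarith)
      rwa [this] at hz'
    · exact absurd h (L1 hint happ)
    · exact Or.inr h
    · exact absurd h (L3 hint happ)
  rcases key z₁ b₁ happ₁ with hanchor | ⟨z₂, hz₂⟩
  · exact ⟨z₁, b₁, hanchor, htop₁⟩
  · obtain ⟨b₂, hb₂φ, hb₂φ', happ₂, htop₂⟩ := cluster_top hint hz₂
    rcases key z₂ b₂ happ₂ with hanchor | ⟨z₃, hz₃⟩
    · exact ⟨z₂, b₂, hanchor, htop₂⟩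
    · -- z₃ sits at b₂ + π ≡ b₂ - π ; reduce into the window of the first cluster
      have hz₃' : QQ K z₃ (b₂ - Real.pi) := by
        apply QQ_two_pi'
        rwa [show b₂ - Real.pi + 2*Real.pi = b₂ + Real.pi by ring]
      have hrange : b₁ ≤ b₂ - Real.pi ∧ b₂ - Real.pi ≤ b₁ + Real.pi/2 := by
        constructor <;> linarith
      rcases eq_or_lt_of_le hrange.1 with heq | hlt
      · -- b₂ - π = b₁ : attained anchor for the first cluster
        have hq : QQ K z₃ b₁ := by rwa [← heq] at hz₃'
        have hpin := pin_above happ₁ hq (le_refl _) (by linarith)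
        rw [hpin] at hq
        exact ⟨z₁, b₁, hq, htop₁⟩
      · rcases eq_or_lt_of_le hrange.2 with heq2 | hlt2
        · -- b₂ - π = b₁ + π/2 : contradiction with L1
          exfalso
          apply L1 hint happ₁
          rw [← heq2]
          exact ⟨z₃, hz₃'⟩
        · -- strictly inside the gap : contradiction with top property
          exfalso
          have hpin := pin_above happ₁ hz₃' (le_of_lt hlt) hlt2
          rw [hpin] at hz₃'
          exact htop₁ _ hlt hlt2 hz₃'
lemma QQ_between {K : Set Pt} {z : Pt} {φ1 φ2 ψ : ℝ} (h1 : QQ K z φ1) (h2 : QQ K z φ2)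
    (ha : φ1 ≤ ψ) (hb : ψ ≤ φ2) (hw : φ2 - φ1 < Real.pi) : QQ K z ψ :=
  ⟨UU_between h1.1 h2.1 ha hb hw,
   UU_between h1.2 h2.2 (by linarith) (by linarith) (by linarith)⟩

lemma sup_max {K : Set Pt} {z : Pt} {D : Set ℝ} (hD : D.Nonempty) (hbdd : BddAbove D)
    (hQ : ∀ φ ∈ D, QQ K z φ) : MaxAt K z (sSup D) ∧ MaxAt K z (sSup D + Real.pi/2) := by
  apply approach_max
  intro δ hδ
  obtain ⟨ψ, hψD, hψ⟩ := exists_lt_of_lt_csSup hD (by linarith : sSup D - δ < sSup D)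
  exact ⟨ψ, hψ, le_csSup hbdd hψD, hQ ψ hψD⟩

lemma inf_max {K : Set Pt} {z : Pt} {D : Set ℝ} (hD : D.Nonempty) (hbdd : BddBelow D)
    (hQ : ∀ φ ∈ D, QQ K z φ) : MaxAt K z (sInf D) ∧ MaxAt K z (sInf D + Real.pi/2) := by
  have hzK : z ∈ K := (hQ _ hD.choose_spec).1.1
  constructor
  · apply maxAt_limit hzK
    intro δ hδ
    obtain ⟨ψ, hψD, hψ⟩ := exists_lt_of_csInf_lt hD (by linarith : sInf D < sInf D + δ)
    have := csInf_le hbdd hψD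
    exact ⟨ψ, by rw [abs_lt]; constructor <;> linarith, (hQ ψ hψD).1⟩
  · apply maxAt_limit hzK
    intro δ hδ
    obtain ⟨ψ, hψD, hψ⟩ := exists_lt_of_csInf_lt hD (by linarith : sInf D < sInf D + δ)
    have := csInf_le hbdd hψD
    exact ⟨ψ + Real.pi/2, by rw [abs_lt]; constructor <;> linarith, (hQ ψ hψD).2⟩

set_option maxHeartbeats 3200000 in
theorem exists_good {K : Set Pt} (hint : (interior K).Nonempty) :
    ∃ θ : ℝ, ¬ PP K θ ∧ ¬ PP K (θ + Real.pi/2) ∧ ¬ PP K (θ + Real.pi)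
      ∧ ¬ PP K (θ + 3*(Real.pi/2)) := by
  by_contra hcon
  push_neg at hcon
  have H4 : ∀ θ : ℝ, PP K θ ∨ PP K (θ + Real.pi/2) ∨ PP K (θ + Real.pi)
      ∨ PP K (θ + 3*(Real.pi/2)) := by
    intro θ
    by_contra h4
    push_neg at h4
    obtain ⟨h1, h2, h3, h4'⟩ := h4
    -- hcon : ∀ θ, ¬PPθ → ¬PP(θ+π/2) → ¬PP(θ+π) → PP(θ+3π/2)?? shape check below
    exact h4' (hcon θ h1 h2 h3)
  have hπ : 0 < Real.pi := Real.pi_pos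
  obtain ⟨z₀, b₀, hQ0, htop⟩ := exists_anchor hint H4
  -- basic facts about the anchor
  have hB2 : ∀ φ, b₀ < φ → φ ≤ b₀ + 3*(Real.pi/2) → ¬ QQ K z₀ φ := by
    intro φ h1 h2 hQ
    rcases lt_or_ge φ (b₀ + Real.pi/2) with h | h
    · exact htop φ h1 h hQ
    · exact ML1 hint hQ0 hQ h h2
  have hgap : ∀ θ, b₀ < θ → θ ≤ b₀ + Real.pi/2 → ¬ PP K θ := by
    rintro θ h1 h2 ⟨z', hz'⟩
    have he := ML2 hQ0 hz' (by linarith) h2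
    rw [he] at hz'
    exact hB2 θ h1 (by linarith) hz'
  have hQ04 : QQ K z₀ (b₀ + 2*Real.pi) := QQ_two_pi hQ0
  -- the three window pieces
  set D1 : Set ℝ := {φ | b₀ + Real.pi/2 ≤ φ ∧ φ ≤ b₀ + Real.pi ∧ PP K φ} with hD1def
  set D2 : Set ℝ := {φ | b₀ + Real.pi ≤ φ ∧ φ ≤ b₀ + 3*(Real.pi/2) ∧ PP K φ} with hD2def
  set D3 : Set ℝ := {φ | b₀ + 3*(Real.pi/2) ≤ φ ∧ φ ≤ b₀ + 2*Real.pi ∧ PP K φ} with hD3def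
  -- D3 : nonempty, witness z₀
  have hD3top : b₀ + 2*Real.pi ∈ D3 := ⟨by linarith, le_refl _, ⟨z₀, hQ04⟩⟩
  have hD3ne : D3.Nonempty := ⟨_, hD3top⟩
  have hD3bdd : BddBelow D3 := ⟨b₀ + 3*(Real.pi/2), fun φ hφ => hφ.1⟩
  have hD3Q : ∀ φ ∈ D3, QQ K z₀ φ := by
    rintro φ ⟨h1, h2, z, hz⟩
    have he := ML2 hz hQ04 h2 (by linarith)
    rwa [he]
  set a3 : ℝ := sInf D3 with ha3def
  have ha3low : b₀ + 3*(Real.pi/2) ≤ a3 := le_csInf hD3ne (fun φ hφ => hφ.1)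
  have ha3up : a3 ≤ b₀ + 2*Real.pi := csInf_le hD3bdd hD3top
  have hM3 := inf_max hD3ne hD3bdd hD3Q
  rw [← ha3def] at hM3
  have ha3strict : b₀ + 3*(Real.pi/2) < a3 := by
    rcases eq_or_lt_of_le ha3low with heq | h
    · exfalso
      apply no_antipodal hint (show a3 = (b₀ + Real.pi/2) + Real.pi by rw [← heq]; ring)
        hQ0.2.maxAt hM3.1
    · exact h
  have hD3int : ∀ ψ, a3 < ψ → ψ ≤ b₀ + 2*Real.pi → QQ K z₀ ψ := by
    intro ψ h1 h2
    obtain ⟨φl, hφl, hφl2⟩ := exists_lt_of_csInf_lt hD3ne (show sInf D3 < ψ from h1)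
    exact QQ_between (hD3Q φl hφl) hQ04 (le_of_lt hφl2) h2
      (by have := hφl.1; linarith)
  -- generic break: a fully unoccupied residue contradicts H4
  have hbreak : ∀ x : ℝ, 0 < x → x < Real.pi/2 →
      ¬ PP K (b₀ + Real.pi/2 + x) → ¬ PP K (b₀ + Real.pi + x) →
      ¬ PP K (b₀ + 3*(Real.pi/2) + x) → False := by
    intro x h0 h1 hP1 hP2 hP3
    rcases H4 (b₀ + x) with h | h | h | h
    · exact hgap _ (by linarith) (by linarith) h
    · exact hP1 (by rwa [show b₀ + x + Real.pi/2 = b₀ + Real.pi/2 + x by ring] at h)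
    · exact hP2 (by rwa [show b₀ + x + Real.pi = b₀ + Real.pi + x by ring] at h)
    · exact hP3 (by rwa [show b₀ + x + 3*(Real.pi/2) = b₀ + 3*(Real.pi/2) + x by ring] at h)
  -- witness and strict bound for D1 (when nonempty)
  have hD1W : D1.Nonempty → ∃ z1, (∀ φ ∈ D1, QQ K z1 φ) ∧ z1 ≠ z₀ ∧
      b₀ + Real.pi/2 < sInf D1 := by
    rintro ⟨φ₁, hφ₁⟩
    obtain ⟨z1, hz1⟩ := hφ₁.2.2
    have hQ1 : ∀ φ ∈ D1, QQ K z1 φ := by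
      rintro φ ⟨h1, h2, z, hz⟩
      rcases le_or_gt φ φ₁ with h | h
      · have he := ML2 hz hz1 h (by have := hφ₁.2.1; linarith)
        rwa [he]
      · have he := ML2 hz1 hz (le_of_lt h) (by have := hφ₁.1; linarith)
        rwa [he] at hz
    have hzne : z1 ≠ z₀ := by
      intro he
      rw [he] at hz1
      exact hB2 φ₁ (by have := hφ₁.1; linarith) (by have := hφ₁.2.1; linarith) hz1
    have hbdd : BddBelow D1 := ⟨b₀ + Real.pi/2, fun φ hφ => hφ.1⟩
    have hlow : b₀ + Real.pi/2 ≤ sInf D1 := le_csInf ⟨φ₁, hφ₁⟩ (fun φ hφ => hφ.1)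
    refine ⟨z1, hQ1, hzne, ?_⟩
    rcases eq_or_lt_of_le hlow with heq | h
    · exfalso
      have hM1 := inf_max ⟨φ₁, hφ₁⟩ hbdd hQ1
      have : z1 = z₀ := by
        apply eq_of_UU_MaxAt hQ0.2
        have := hM1.1
        rwa [← heq] at this
      exact hzne this
    · exact h
  
  -- witness for D2
  have hD2bddB : BddBelow D2 := ⟨b₀ + Real.pi, fun φ hφ => hφ.1⟩
  have hD2bddA : BddAbove D2 := ⟨b₀ + 3*(Real.pi/2), fun φ hφ => hφ.2.1⟩
  have hD1bddB : BddBelow D1 := ⟨b₀ + Real.pi/2, fun φ hφ => hφ.1⟩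
  have hD1bddA : BddAbove D1 := ⟨b₀ + Real.pi, fun φ hφ => hφ.2.1⟩
  have hD2W : D2.Nonempty → ∃ z2, (∀ φ ∈ D2, QQ K z2 φ) ∧ z2 ≠ z₀ := by
    rintro ⟨φ₂, hφ₂⟩
    obtain ⟨z2, hz2⟩ := hφ₂.2.2
    have hQ2 : ∀ φ ∈ D2, QQ K z2 φ := by
      rintro φ ⟨h1, h2, z, hz⟩
      rcases le_or_gt φ φ₂ with h | h
      · have he := ML2 hz hz2 h (by have := hφ₂.2.1; linarith)
        rwa [he]
      · have he := ML2 hz2 hz (le_of_lt h) (by have := hφ₂.1; linarith)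
        rwa [he] at hz
    refine ⟨z2, hQ2, ?_⟩
    intro he
    rw [he] at hz2
    exact hB2 φ₂ (by have := hφ₂.1; linarith) hφ₂.2.1 hz2
  -- forcing : D2 must be nonempty with infimum exactly b₀ + π
  have hforce : D2.Nonempty ∧ sInf D2 = b₀ + Real.pi := by
    by_contra hnf
    classical
    set d1 : ℝ := if D1.Nonempty then sInf D1 - (b₀ + Real.pi/2) else Real.pi/2 with hd1
    set d2 : ℝ := if D2.Nonempty then sInf D2 - (b₀ + Real.pi) else Real.pi/2 with hd2
    set d3 : ℝ := a3 - (b₀ + 3*(Real.pi/2)) with hd3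
    have hd1pos : 0 < d1 := by
      rw [hd1]
      split_ifs with h
      · obtain ⟨z1, _, _, hstrict⟩ := hD1W h
        linarith
      · linarith
    have hd2pos : 0 < d2 := by
      rw [hd2]
      split_ifs with h
      · have hlow : b₀ + Real.pi ≤ sInf D2 := le_csInf h (fun φ hφ => hφ.1)
        rcases eq_or_lt_of_le hlow with heq | hlt
        · exact absurd ⟨h, heq.symm⟩ hnf
        · linarith
      · linarith
    have hd3pos : 0 < d3 := by rw [hd3]; linarith
    have hd3le : d3 ≤ Real.pi/2 := by rw [hd3]; linarith
    set x : ℝ := min (min d1 d2) d3 / 2 with hx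
    have hx0 : 0 < x := by
      rw [hx]
      have : 0 < min (min d1 d2) d3 := lt_min (lt_min hd1pos hd2pos) hd3pos
      linarith
    have hmpos : 0 < min (min d1 d2) d3 := lt_min (lt_min hd1pos hd2pos) hd3pos
    have hhalf : x < min (min d1 d2) d3 := by
      rw [hx]
      exact half_lt_self hmpos
    have hxd1 : x < d1 :=
      lt_of_lt_of_le hhalf (le_trans (min_le_left _ _) (min_le_left _ _))
    have hxd2 : x < d2 :=
      lt_of_lt_of_le hhalf (le_trans (min_le_left _ _) (min_le_right _ _))
    have hxd3 : x < d3 := lt_of_lt_of_le hhalf (min_le_right _ _)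
    have hx1 : x < Real.pi/2 := lt_of_lt_of_le hxd3 hd3le
    apply hbreak x hx0 hx1
    · intro hP
      have hmem : b₀ + Real.pi/2 + x ∈ D1 := ⟨by linarith, by linarith, hP⟩
      have hle := csInf_le hD1bddB hmem
      have hne : D1.Nonempty := ⟨_, hmem⟩
      rw [hd1, if_pos hne] at hxd1
      linarith
    · intro hP
      have hmem : b₀ + Real.pi + x ∈ D2 := ⟨by linarith, by linarith, hP⟩
      have hle := csInf_le hD2bddB hmem
      have hne : D2.Nonempty := ⟨_, hmem⟩
      rw [hd2, if_pos hne] at hxd2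
      linarith
    · intro hP
      have hmem : b₀ + 3*(Real.pi/2) + x ∈ D3 := ⟨by linarith, by linarith, hP⟩
      have hle := csInf_le hD3bdd hmem
      rw [hd3] at hxd3
      linarith
  obtain ⟨hD2ne, ha2⟩ := hforce
  obtain ⟨z2, hD2Q, hz2ne⟩ := hD2W hD2ne
  set b2 : ℝ := sSup D2 with hb2def
  have hb2up : b2 ≤ b₀ + 3*(Real.pi/2) := csSup_le hD2ne (fun φ hφ => hφ.2.1)
  have hb2low : b₀ + Real.pi ≤ b2 := by
    obtain ⟨φ₂, hφ₂⟩ := hD2ne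
    have := le_csSup hD2bddA hφ₂
    have := hφ₂.1
    linarith
  have hM2b := sup_max hD2ne hD2bddA hD2Q
  rw [← hb2def] at hM2b
  have hb2strict : b2 < b₀ + 3*(Real.pi/2) := by
    rcases eq_or_lt_of_le hb2up with heq | h
    · exfalso
      have hM := hM2b.2
      rw [heq] at hM
      rw [show b₀ + 3*(Real.pi/2) + Real.pi/2 = b₀ + 2*Real.pi by ring] at hM
      exact hz2ne (eq_of_UU_MaxAt hQ04.1 hM)
    · exact h
  have hD2int : ∀ ψ, b₀ + Real.pi < ψ → ψ < b2 → QQ K z2 ψ := by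
    intro ψ h1 h2
    obtain ⟨φl, hφlD, hφl⟩ := exists_lt_of_csInf_lt hD2ne (by rw [ha2]; exact h1)
    obtain ⟨φr, hφrD, hφr⟩ := exists_lt_of_lt_csSup hD2ne h2
    exact QQ_between (hD2Q φl hφlD) (hD2Q φr hφrD) (le_of_lt hφl) (le_of_lt hφr)
      (by have := hφlD.1; have := hφrD.2.1; linarith)
  rcases lt_trichotomy a3 (b2 + Real.pi/2) with hT1 | hT1 | hT2
  · -- T1 : overlap of the pieces D2 and D3
    set φq : ℝ := (a3 - Real.pi/2 + b2)/2 with hφq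
    have h1 : b₀ + Real.pi < φq := by rw [hφq]; linarith
    have h2 : φq < b2 := by rw [hφq]; linarith
    have hq2 := hD2int φq h1 h2
    have h3 : a3 < φq + Real.pi/2 := by rw [hφq]; linarith
    have h4 : φq + Real.pi/2 ≤ b₀ + 2*Real.pi := by rw [hφq]; linarith
    have hq3 := hD3int _ h3 h4
    exact hz2ne (eq_of_UU_UU hq3.1 hq2.2)
  · -- T1' : exact touch b2 + π/2 = a3
    have hb2s : b₀ + Real.pi < b2 := by linarith
    rcases H4 (b2 - Real.pi) with h | h | h | h
    · exact hgap _ (by linarith) (by linarith) h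
    · obtain ⟨z', hz'⟩ := h
      rw [show b2 - Real.pi + Real.pi/2 = b2 - Real.pi/2 by ring] at hz'
      have hU : UU K b2 z' := by
        have := hz'.2
        rwa [show b2 - Real.pi/2 + Real.pi/2 = b2 by ring] at this
      have he : z2 = z' := eq_of_UU_MaxAt hU hM2b.1
      apply no_antipodal hint (show b2 + Real.pi/2 = (b2 - Real.pi/2) + Real.pi by ring)
        hz'.1.maxAt
      rw [← he]
      exact hM2b.2
    · obtain ⟨z', hz'⟩ := h
      rw [show b2 - Real.pi + Real.pi = b2 by ring] at hz'
      have hmem : b2 ∈ D2 := ⟨by linarith, by linarith, ⟨z', hz'⟩⟩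
      have hq := hD2Q b2 hmem
      have hM := hM3.1
      rw [hT1] at hM
      exact hz2ne ((eq_of_UU_MaxAt hq.2 hM).symm)
    · obtain ⟨z', hz'⟩ := h
      rw [show b2 - Real.pi + 3*(Real.pi/2) = b2 + Real.pi/2 by ring] at hz'
      have hmem : b2 + Real.pi/2 ∈ D3 := ⟨by linarith, by linarith, ⟨z', hz'⟩⟩
      have hq := hD3Q _ hmem
      exact hz2ne (eq_of_UU_MaxAt hq.1 hM2b.2)
  · -- T2 : a gap between D2 and D3
    by_cases hD1ne : D1.Nonempty
    · obtain ⟨z1, hD1Q, hz1ne, ha1strict⟩ := hD1W hD1ne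
      set a1 : ℝ := sInf D1 with ha1def
      set b1 : ℝ := sSup D1 with hb1def
      have ha1up : a1 ≤ b₀ + Real.pi := by
        obtain ⟨φ₁, hφ₁⟩ := hD1ne
        have := csInf_le hD1bddB hφ₁
        have := hφ₁.2.1
        linarith
      have hb1up : b1 ≤ b₀ + Real.pi := csSup_le hD1ne (fun φ hφ => hφ.2.1)
      have ha1b1 : a1 ≤ b1 := by
        obtain ⟨φ₁, hφ₁⟩ := hD1ne
        exact le_trans (csInf_le hD1bddB hφ₁) (le_csSup hD1bddA hφ₁)
      have hM1a := inf_max hD1ne hD1bddB hD1Q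
      rw [← ha1def] at hM1a
      have hM1b := sup_max hD1ne hD1bddA hD1Q
      rw [← hb1def] at hM1b
      have hD1int : ∀ ψ, a1 < ψ → ψ < b1 → QQ K z1 ψ := by
        intro ψ h1 h2
        obtain ⟨φl, hφlD, hφl⟩ := exists_lt_of_csInf_lt hD1ne h1
        obtain ⟨φr, hφrD, hφr⟩ := exists_lt_of_lt_csSup hD1ne h2
        exact QQ_between (hD1Q φl hφlD) (hD1Q φr hφrD) (le_of_lt hφl) (le_of_lt hφr)
          (by have := hφlD.1; have := hφrD.2.1; linarith)
      rcases lt_trichotomy (a1 + Real.pi/2) b2 with hU1 | hU1 | hU1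
      · -- T2b : overlap of D1 and D2
        rcases eq_or_lt_of_le ha1b1 with hsing | hw1
        · have ha1mem : a1 ∈ D1 := by
            obtain ⟨φ, hφ⟩ := hD1ne
            have h1 := csInf_le hD1bddB hφ
            have h2 := le_csSup hD1bddA hφ
            have : φ = a1 := le_antisymm (by rw [hsing]; exact h2) h1
            rwa [this] at hφ
          have hqa := hD1Q a1 ha1mem
          have hq2 := hD2int (a1 + Real.pi/2) (by linarith) hU1
          have he : z2 = z1 := eq_of_UU_UU hqa.2 hq2.1
          rw [he] at hq2
          exact ML1 hint hqa hq2 (le_refl _) (by linarith)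
        · set φp : ℝ := (a1 + min b1 (b2 - Real.pi/2))/2 with hφp
          have hmin1 : a1 < min b1 (b2 - Real.pi/2) := lt_min hw1 (by linarith)
          have hp1 : a1 < φp := by rw [hφp]; linarith
          have hp2 : φp < b1 := by
            have := min_le_left b1 (b2 - Real.pi/2)
            rw [hφp]
            linarith
          have hp3 : φp + Real.pi/2 < b2 := by
            have := min_le_right b1 (b2 - Real.pi/2)
            rw [hφp]
            linarith
          have hqp := hD1int φp hp1 hp2
          have hq2 := hD2int (φp + Real.pi/2) (by linarith) hp3
          have he : z2 = z1 := eq_of_UU_UU hqp.2 hq2.1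
          rw [he] at hq2
          exact ML1 hint hqp hq2 (le_refl _) (by linarith)
      · -- T2c : exact touch a1 + π/2 = b2
        rcases H4 (a1 - Real.pi/2) with h | h | h | h
        · exact hgap _ (by linarith) (by linarith) h
        · obtain ⟨z', hz'⟩ := h
          rw [show a1 - Real.pi/2 + Real.pi/2 = a1 by ring] at hz'
          have hmem : a1 ∈ D1 := ⟨by linarith, by linarith, ⟨z', hz'⟩⟩
          have hqa := hD1Q a1 hmem
          have hUb2 : UU K b2 z1 := by
            have := hqa.2
            rwa [hU1] at this
          have he : z2 = z1 := eq_of_UU_MaxAt hUb2 hM2b.1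
          apply no_antipodal hint (show b2 + Real.pi/2 = a1 + Real.pi by rw [← hU1]; ring)
            hqa.1.maxAt
          rw [← he]
          exact hM2b.2
        · obtain ⟨z', hz'⟩ := h
          rw [show a1 - Real.pi/2 + Real.pi = a1 + Real.pi/2 by ring] at hz'
          have hmem : a1 + Real.pi/2 ∈ D2 := by
            refine ⟨by linarith, ?_, ⟨z', hz'⟩⟩
            rw [hU1] at *
            linarith
          have hq2 := hD2Q _ hmem
          have he : z1 = z2 := eq_of_UU_MaxAt hq2.1 hM1a.2
          apply no_antipodal hint
            (show a1 + Real.pi/2 + Real.pi/2 = a1 + Real.pi by ring) ?_ hq2.2.maxAt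
          rw [← he] at hq2
          exact (he ▸ hM1a.1)
        · obtain ⟨z', hz'⟩ := h
          rw [show a1 - Real.pi/2 + 3*(Real.pi/2) = a1 + Real.pi by ring] at hz'
          have hmem : a1 + Real.pi ∈ D3 := ⟨by linarith, by linarith, ⟨z', hz'⟩⟩
          have := csInf_le hD3bdd hmem
          -- a3 ≤ a1 + π = b2 + π/2 < a3
          linarith
      · -- T2a : gap between D1 and D2 projections : break
        set ξ : ℝ := min (a1 + Real.pi/2) (a3 - Real.pi/2) with hξdef
        have hξ : b2 < ξ := lt_min hU1 (by linarith)
        have hξ1 : ξ ≤ a1 + Real.pi/2 := min_le_left _ _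
        have hξ2 : ξ ≤ a3 - Real.pi/2 := min_le_right _ _
        set φm : ℝ := (b2 + ξ)/2 with hφm
        set x : ℝ := φm - (b₀ + Real.pi) with hxdef
        have hφm1 : b2 < φm := by rw [hφm]; linarith
        have hφm2 : φm < ξ := by rw [hφm]; linarith
        have hx0 : 0 < x := by rw [hxdef]; linarith
        have hx1 : x < Real.pi/2 := by
          rw [hxdef]
          have : φm < a1 + Real.pi/2 := lt_of_lt_of_le hφm2 hξ1
          linarith
        apply hbreak x hx0 hx1
        · intro hP
          have hmem : b₀ + Real.pi/2 + x ∈ D1 := ⟨by linarith, by linarith, hP⟩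
          have hle := csInf_le hD1bddB hmem
          have : φm < a1 + Real.pi/2 := lt_of_lt_of_le hφm2 hξ1
          rw [hxdef] at hle
          linarith
        · intro hP
          have hmem : b₀ + Real.pi + x ∈ D2 := ⟨by linarith, by linarith, hP⟩
          have hle := le_csSup hD2bddA hmem
          rw [hxdef] at hle
          linarith
        · intro hP
          have hmem : b₀ + 3*(Real.pi/2) + x ∈ D3 := ⟨by linarith, by linarith, hP⟩
          have hle := csInf_le hD3bdd hmem
          rw [hxdef] at hle
          have : φm < a3 - Real.pi/2 := lt_of_lt_of_le hφm2 hξ2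
          linarith
    · -- D1 empty : break
      set φm : ℝ := (b2 + (a3 - Real.pi/2))/2 with hφm
      set x : ℝ := φm - (b₀ + Real.pi) with hxdef
      have hφm1 : b2 < φm := by rw [hφm]; linarith
      have hφm2 : φm < a3 - Real.pi/2 := by rw [hφm]; linarith
      have hx0 : 0 < x := by rw [hxdef]; linarith
      have hx1 : x < Real.pi/2 := by rw [hxdef]; linarith
      apply hbreak x hx0 hx1
      · intro hP
        exact hD1ne ⟨b₀ + Real.pi/2 + x, by linarith, by linarith, hP⟩
      · intro hP
        have hmem : b₀ + Real.pi + x ∈ D2 := ⟨by linarith, by linarith, hP⟩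
        have hle := le_csSup hD2bddA hmem
        rw [hxdef] at hle
        linarith
      · intro hP
        have hmem : b₀ + 3*(Real.pi/2) + x ∈ D3 := ⟨by linarith, by linarith, hP⟩
        have hle := csInf_le hD3bdd hmem
        rw [hxdef] at hle
        linarith
def rotPt (θ : ℝ) (w : Pt) : Pt := pt2 (fdir θ w) (fdir (θ + Real.pi/2) w)

lemma rotPt_0 (θ : ℝ) (w : Pt) : rotPt θ w 0 = fdir θ w := rfl
lemma rotPt_1 (θ : ℝ) (w : Pt) : rotPt θ w 1 = fdir (θ + Real.pi/2) w := rfl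

lemma fdir_expand (θ : ℝ) (w : Pt) :
    fdir (θ + Real.pi/2) w = -Real.sin θ * w 0 + Real.cos θ * w 1 := by
  unfold fdir
  rw [Real.cos_add_pi_div_two, Real.sin_add_pi_div_two]

noncomputable def rotLE (θ : ℝ) : Pt ≃ₗ[ℝ] Pt where
  toFun := rotPt θ
  invFun := rotPt (-θ)
  map_add' x y := by
    apply ext2
    · show fdir θ (x + y) = fdir θ x + fdir θ y
      unfold fdir
      show Real.cos θ * (x 0 + y 0) + Real.sin θ * (x 1 + y 1) = _
      ring
    · show fdir (θ + Real.pi/2) (x + y) = fdir (θ + Real.pi/2) x + fdir (θ + Real.pi/2) y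
      unfold fdir
      show Real.cos _ * (x 0 + y 0) + Real.sin _ * (x 1 + y 1) = _
      ring
  map_smul' c x := by
    apply ext2
    · show fdir θ (c • x) = c * fdir θ x
      unfold fdir
      show Real.cos θ * (c * x 0) + Real.sin θ * (c * x 1) = _
      ring
    · show fdir (θ + Real.pi/2) (c • x) = c * fdir (θ + Real.pi/2) x
      unfold fdir
      show Real.cos _ * (c * x 0) + Real.sin _ * (c * x 1) = _
      ring
  left_inv x := by
    apply ext2
    · show fdir (-θ) (rotPt θ x) = x 0
      unfold fdir
      rw [rotPt_0, rotPt_1, fdir_expand]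
      unfold fdir
      rw [Real.cos_neg, Real.sin_neg]
      have := Real.sin_sq_add_cos_sq θ
      linear_combination (x 0) * this
    · show fdir (-θ + Real.pi/2) (rotPt θ x) = x 1
      rw [fdir_expand]
      rw [rotPt_0, rotPt_1, fdir_expand]
      unfold fdir
      rw [Real.cos_neg, Real.sin_neg]
      have := Real.sin_sq_add_cos_sq θ
      linear_combination (x 1) * this
  right_inv x := by
    apply ext2
    · show fdir θ (rotPt (-θ) x) = x 0
      unfold fdir
      rw [rotPt_0, rotPt_1, fdir_expand]
      unfold fdir
      rw [Real.cos_neg, Real.sin_neg]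
      have := Real.sin_sq_add_cos_sq θ
      linear_combination (x 0) * this
    · show fdir (θ + Real.pi/2) (rotPt (-θ) x) = x 1
      rw [fdir_expand]
      rw [rotPt_0, rotPt_1, fdir_expand]
      unfold fdir
      rw [Real.cos_neg, Real.sin_neg]
      have := Real.sin_sq_add_cos_sq θ
      linear_combination (x 1) * this

lemma norm_sq2 (x : Pt) : ‖x‖ = Real.sqrt ((x 0)^2 + (x 1)^2) := by
  rw [EuclideanSpace.norm_eq, Fin.sum_univ_two, Real.norm_eq_abs, Real.norm_eq_abs,
    sq_abs, sq_abs]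

noncomputable def rotLIE (θ : ℝ) : Pt ≃ₗᵢ[ℝ] Pt :=
  ⟨rotLE θ, by
    intro x
    show ‖rotPt θ x‖ = ‖x‖
    rw [norm_sq2, norm_sq2, rotPt_0, rotPt_1, fdir_expand]
    unfold fdir
    have := Real.sin_sq_add_cos_sq θ
    congr 1
    linear_combination ((x 0)^2 + (x 1)^2) * this⟩

lemma rotLIE_coe (θ : ℝ) : ⇑(rotLIE θ) = rotPt θ := rfl

lemma rot_apply_single (θ : ℝ) (j : Fin 2) :
    rotPt θ (EuclideanSpace.single j 1)
      = pt2 (fdir θ (EuclideanSpace.single j 1)) (fdir (θ + Real.pi/2) (EuclideanSpace.single j 1)) := rfl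

lemma rot_det (θ : ℝ) :
    LinearMap.det ((rotLE θ : Pt →ₗ[ℝ] Pt)) = 1 := by
  classical
  set f : Pt →ₗ[ℝ] Pt := (rotLE θ : Pt →ₗ[ℝ] Pt) with hf
  have hfa : ∀ w, f w = rotPt θ w := fun w => rfl
  set b := (EuclideanSpace.basisFun (Fin 2) ℝ).toBasis with hb
  rw [← LinearMap.det_toMatrix b f]
  rw [Matrix.det_fin_two]
  have hM : ∀ i j : Fin 2, LinearMap.toMatrix b b f i j = f (EuclideanSpace.single j 1) i := by
    intro i j
    rw [LinearMap.toMatrix_apply, hb]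
    rw [OrthonormalBasis.coe_toBasis_repr_apply, EuclideanSpace.basisFun_repr,
      OrthonormalBasis.coe_toBasis, EuclideanSpace.basisFun_apply]
  have e0 : (EuclideanSpace.single (0 : Fin 2) (1:ℝ)) 0 = 1 := by
    simp [EuclideanSpace.single_apply]
  have e1 : (EuclideanSpace.single (0 : Fin 2) (1:ℝ)) 1 = 0 := by
    simp [EuclideanSpace.single_apply]
  have e2 : (EuclideanSpace.single (1 : Fin 2) (1:ℝ)) 0 = 0 := by
    simp [EuclideanSpace.single_apply]
  have e3 : (EuclideanSpace.single (1 : Fin 2) (1:ℝ)) 1 = 1 := by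
    simp [EuclideanSpace.single_apply]
  rw [hM, hM, hM, hM]
  have h00 : f (EuclideanSpace.single 0 1) 0 = Real.cos θ := by
    rw [hfa, rotPt_0]
    unfold fdir
    rw [e0, e1]
    ring
  have h10 : f (EuclideanSpace.single 0 1) 1 = -Real.sin θ := by
    rw [hfa, rotPt_1, fdir_expand, e0, e1]
    ring
  have h01 : f (EuclideanSpace.single 1 1) 0 = Real.sin θ := by
    rw [hfa, rotPt_0]
    unfold fdir
    rw [e2, e3]
    ring
  have h11 : f (EuclideanSpace.single 1 1) 1 = Real.cos θ := by
    rw [hfa, rotPt_1, fdir_expand, e2, e3]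
    ring
  rw [h00, h10, h01, h11]
  have := Real.sin_sq_add_cos_sq θ
  linear_combination this
lemma line_singleton_extreme {C : Set Pt} (hconv : Convex ℝ C) (hint : (interior C).Nonempty)
    {z : Pt} (i : Fin 2) (u : Pt) (hui : u i = 0) (hun : ‖u‖ = 1)
    (hline : ∀ w ∈ C, w i = z i → w = z) :
    (∀ w ∈ C, w i ≤ z i) ∨ (∀ w ∈ C, z i ≤ w i) := by
  by_contra hno
  push_neg at hno
  obtain ⟨⟨wp, hwp, hwp'⟩, ⟨wm, hwm, hwm'⟩⟩ := hno
  obtain ⟨p, hp⟩ := hint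
  obtain ⟨ε, hε, hball⟩ := Metric.isOpen_iff.1 isOpen_interior p hp
  have hpC : p ∈ C := interior_subset hp
  have hj : ∃ j : Fin 2, u j ≠ 0 := by
    by_contra hz'
    push_neg at hz'
    have hu0 : u = (0 : Pt) := by
      apply ext2
      · rw [hz' 0]; rfl
      · rw [hz' 1]; rfl
    rw [hu0] at hun
    simp at hun
  obtain ⟨j, hj⟩ := hj
  have hball' : ∀ c : ℝ, |c| < ε → p + c • u ∈ C := by
    intro c hc
    apply interior_subset
    apply hball
    simp only [Metric.mem_ball]
    rw [dist_eq_norm]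
    have he : p + c • u - p = c • u := by abel
    rw [he, norm_smul, hun, mul_one, Real.norm_eq_abs]
    exact hc
  have hp2C : p + (ε/2) • u ∈ C := hball' (ε/2) (by rw [abs_of_pos (by linarith)]; linarith)
  have hp2i : (p + (ε/2) • u) i = p i := by
    have : (p + (ε/2) • u) i = p i + (ε/2) * u i := rfl
    rw [this, hui]
    ring
  have hp2j : (p + (ε/2) • u) j = p j + (ε/2) * u j := rfl
  rcases lt_trichotomy (p i) (z i) with hpi | hpi | hpi
  · -- p strictly below : cross from p up to wp, twice
    set s : ℝ := (z i - p i) / (wp i - p i) with hs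
    have hs0 : 0 < s := div_pos (by linarith) (by linarith)
    have hs1 : s < 1 := (div_lt_one (by linarith)).2 (by linarith)
    have hq : (1 - s) • p + s • wp ∈ C := hconv hpC hwp (by linarith) (le_of_lt hs0) (by ring)
    have hqi : ((1 - s) • p + s • wp) i = z i := by
      rw [comb_coord, hs]
      exact interp (p i) (wp i) (z i) (by linarith)
    have hq' : (1 - s) • (p + (ε/2) • u) + s • wp ∈ C :=
      hconv hp2C hwp (by linarith) (le_of_lt hs0) (by ring)
    have hqi' : ((1 - s) • (p + (ε/2) • u) + s • wp) i = z i := by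
      rw [comb_coord, hp2i, hs]
      exact interp (p i) (wp i) (z i) (by linarith)
    have e1 := hline _ hq hqi
    have e2 := hline _ hq' hqi'
    have : ((1 - s) • p + s • wp) j = ((1 - s) • (p + (ε/2) • u) + s • wp) j := by
      rw [e1, e2]
    rw [comb_coord, comb_coord, hp2j] at this
    have hcon : (1 - s) * ((ε/2) * u j) = 0 := by nlinarith [this]
    have : (1 - s) * ((ε/2) * u j) ≠ 0 :=
      mul_ne_zero (by linarith) (mul_ne_zero (by linarith) hj)
    exact this hcon
  · -- p on the line
    by_cases hpz : p = z
    · subst hpz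
      have hq := hline _ hp2C (by rw [hp2i])
      have : p j + (ε/2) * u j = p j := by
        rw [← hp2j, hq]
      have : (ε/2) * u j = 0 := by linarith
      exact (mul_ne_zero (by linarith) hj) this
    · exact hpz (hline p hpC hpi)
  · -- p strictly above : cross from wm up to p, twice
    set s : ℝ := (z i - wm i) / (p i - wm i) with hs
    have hs0 : 0 < s := div_pos (by linarith) (by linarith)
    have hs1 : s < 1 := (div_lt_one (by linarith)).2 (by linarith)
    have hq : (1 - s) • wm + s • p ∈ C := hconv hwm hpC (by linarith) (le_of_lt hs0) (by ring)
    have hqi : ((1 - s) • wm + s • p) i = z i := by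
      rw [comb_coord, hs]
      exact interp (wm i) (p i) (z i) (by linarith)
    have hq' : (1 - s) • wm + s • (p + (ε/2) • u) ∈ C :=
      hconv hwm hp2C (by linarith) (le_of_lt hs0) (by ring)
    have hqi' : ((1 - s) • wm + s • (p + (ε/2) • u)) i = z i := by
      rw [comb_coord, hp2i, hs]
      exact interp (wm i) (p i) (z i) (by linarith)
    have e1 := hline _ hq hqi
    have e2 := hline _ hq' hqi'
    have : ((1 - s) • wm + s • p) j = ((1 - s) • wm + s • (p + (ε/2) • u)) j := by
      rw [e1, e2]
    rw [comb_coord, comb_coord, hp2j] at this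
    have hcon : s * ((ε/2) * u j) = 0 := by nlinarith [this]
    have : s * ((ε/2) * u j) ≠ 0 :=
      mul_ne_zero (by linarith) (mul_ne_zero (by linarith) hj)
    exact this hcon

lemma norm_e2 : ‖pt2 0 1‖ = 1 := by
  rw [norm_sq2, pt2_0, pt2_1]
  norm_num
lemma norm_e1 : ‖pt2 1 0‖ = 1 := by
  rw [norm_sq2, pt2_0, pt2_1]
  norm_num

theorem main_NL {D : Set Pt} (hconv : Convex ℝ D) (hcomp : IsCompact D)
    (hint : (interior D).Nonempty) {θ : ℝ}
    (h1 : ¬ PP D θ) (h2 : ¬ PP D (θ + Real.pi/2)) (h3 : ¬ PP D (θ + Real.pi))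
    (h4 : ¬ PP D (θ + 3*(Real.pi/2))) :
    ∀ z' ∈ ⇑(rotLIE θ) '' D, ∃ w' ∈ ⇑(rotLIE θ) '' D, w' ≠ z' ∧
      (w' 0 = z' 0 ∨ w' 1 = z' 1) := by
  set K' : Set Pt := ⇑(rotLIE θ) '' D with hK'
  have hKfun : ∀ w, (rotLIE θ) w = rotPt θ w := fun w => rfl
  have hC : Convex ℝ K' := by
    intro a ha b hb s t hs ht hst
    obtain ⟨a', ha', rfl⟩ := ha
    obtain ⟨b', hb', rfl⟩ := hb
    refine ⟨s • a' + t • b', hconv ha' hb' hs ht hst, ?_⟩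
    rw [_root_.map_add, LinearIsometryEquiv.map_smul, LinearIsometryEquiv.map_smul]
  have hIn : (interior K').Nonempty := by
    obtain ⟨p, hp⟩ := hint
    refine ⟨(rotLIE θ) p, ?_⟩
    have himg : ⇑(rotLIE θ).toHomeomorph '' interior D = interior (⇑(rotLIE θ).toHomeomorph '' D) :=
      Homeomorph.image_interior _ _
    have hcoe : ⇑(rotLIE θ).toHomeomorph = ⇑(rotLIE θ) := rfl
    rw [hcoe] at himg
    rw [hK', ← himg]
    exact ⟨p, hp, rfl⟩
  intro z' hz'
  by_contra hcon
  push_neg at hcon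
  have hline0 : ∀ w ∈ K', w 0 = z' 0 → w = z' := by
    intro w hw he
    by_contra hne
    exact (hcon w hw hne).1 he
  have hline1 : ∀ w ∈ K', w 1 = z' 1 → w = z' := by
    intro w hw he
    by_contra hne
    exact (hcon w hw hne).2 he
  have hext0 := line_singleton_extreme hC hIn 0 (pt2 0 1) rfl norm_e2 hline0
  have hext1 := line_singleton_extreme hC hIn 1 (pt2 1 0) rfl norm_e1 hline1
  obtain ⟨z, hzD, rfl⟩ := hz'
  have hinj : ∀ w, (rotLIE θ) w = (rotLIE θ) z → w = z := fun w h => (rotLIE θ).injective h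
  -- translate the four extremality statements into UU over D
  have hmax0 : (∀ w ∈ K', w 0 ≤ ((rotLIE θ) z) 0) → UU D θ z := by
    intro hm
    refine ⟨hzD, fun w hw => ?_⟩
    have h := hm ((rotLIE θ) w) ⟨w, hw, rfl⟩
    rw [hKfun, hKfun, rotPt_0, rotPt_0] at h
    refine ⟨h, fun he => ?_⟩
    apply hinj
    apply hline0 _ ⟨w, hw, rfl⟩
    rw [hKfun, hKfun, rotPt_0, rotPt_0]
    exact he
  have hmin0 : (∀ w ∈ K', ((rotLIE θ) z) 0 ≤ w 0) → UU D (θ + Real.pi) z := by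
    intro hm
    refine ⟨hzD, fun w hw => ?_⟩
    have h := hm ((rotLIE θ) w) ⟨w, hw, rfl⟩
    rw [hKfun, hKfun, rotPt_0, rotPt_0] at h
    rw [fdir_pi, fdir_pi]
    refine ⟨by linarith, fun he => ?_⟩
    apply hinj
    apply hline0 _ ⟨w, hw, rfl⟩
    rw [hKfun, hKfun, rotPt_0, rotPt_0]
    linarith
  have hmax1 : (∀ w ∈ K', w 1 ≤ ((rotLIE θ) z) 1) → UU D (θ + Real.pi/2) z := by
    intro hm
    refine ⟨hzD, fun w hw => ?_⟩
    have h := hm ((rotLIE θ) w) ⟨w, hw, rfl⟩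
    rw [hKfun, hKfun, rotPt_1, rotPt_1] at h
    refine ⟨h, fun he => ?_⟩
    apply hinj
    apply hline1 _ ⟨w, hw, rfl⟩
    rw [hKfun, hKfun, rotPt_1, rotPt_1]
    exact he
  have hmin1 : (∀ w ∈ K', ((rotLIE θ) z) 1 ≤ w 1) → UU D (θ + Real.pi/2 + Real.pi) z := by
    intro hm
    refine ⟨hzD, fun w hw => ?_⟩
    have h := hm ((rotLIE θ) w) ⟨w, hw, rfl⟩
    rw [hKfun, hKfun, rotPt_1, rotPt_1] at h
    rw [fdir_pi, fdir_pi]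
    refine ⟨by linarith, fun he => ?_⟩
    apply hinj
    apply hline1 _ ⟨w, hw, rfl⟩
    rw [hKfun, hKfun, rotPt_1, rotPt_1]
    linarith
  rcases hext0 with hA | hA <;> rcases hext1 with hB | hB
  · exact h1 ⟨z, hmax0 hA, hmax1 hB⟩
  · -- max0, min1 : pair (θ+3π/2, θ+2π)
    apply h4
    refine ⟨z, ?_, ?_⟩
    · have := hmin1 hB
      rwa [show θ + Real.pi/2 + Real.pi = θ + 3*(Real.pi/2) by ring] at this
    · have := UU_two_pi (hmax0 hA)
      rwa [show θ + 2*Real.pi = θ + 3*(Real.pi/2) + Real.pi/2 by ring] at this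
  · -- min0, max1 : pair (θ+π/2, θ+π)
    apply h2
    refine ⟨z, hmax1 hB, ?_⟩
    have := hmin0 hA
    rwa [show θ + Real.pi = θ + Real.pi/2 + Real.pi/2 by ring] at this
  · -- min0, min1 : pair (θ+π, θ+3π/2)
    apply h3
    refine ⟨z, hmin0 hA, ?_⟩
    have := hmin1 hB
    rwa [show θ + Real.pi/2 + Real.pi = θ + Real.pi + Real.pi/2 by ring] at this
end SP

end
/-- Every convex body in `ℝ²` can be rotated to become staircase connected. -/
theorem exists_rotation_staircaseConnected (D : Set (EucR 2)) (hD : IsConvexBody D) :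
    ∃ ρ : EucR 2 ≃ₗᵢ[ℝ] EucR 2,
      0 < LinearMap.det (ρ.toLinearEquiv : EucR 2 →ₗ[ℝ] EucR 2) ∧
      StaircaseConnected (⇑ρ '' D) := by
  obtain ⟨hconv, hcomp, hint⟩ := hD
  obtain ⟨θ, h1, h2, h3, h4⟩ := SP.exists_good hint
  refine ⟨SP.rotLIE θ, ?_, ?_⟩
  · have h := SP.rot_det θ
    have he : ((SP.rotLIE θ).toLinearEquiv : EucR 2 →ₗ[ℝ] EucR 2)
        = ((SP.rotLE θ : SP.Pt ≃ₗ[ℝ] SP.Pt) : SP.Pt →ₗ[ℝ] SP.Pt) := rfl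
    rw [he, h]
    norm_num
  · apply SP.staircaseConnected_of_NL
    · intro a ha b hb s t hs ht hst
      obtain ⟨a', ha', rfl⟩ := ha
      obtain ⟨b', hb', rfl⟩ := hb
      refine ⟨s • a' + t • b', hconv ha' hb' hs ht hst, ?_⟩
      rw [_root_.map_add, LinearIsometryEquiv.map_smul, LinearIsometryEquiv.map_smul]
    · exact (hcomp.image (SP.rotLIE θ).continuous).isClosed
    · exact SP.main_NL hconv hcomp hint h1 h2 h3 h4
end

section
/- Any connected union of finitely many obtuse convex bodies in ℝ² is orthogonally connected. -/
open Set MeasureTheory Bornology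
open scoped ENNReal

noncomputable section

-- Reachability
def Rch (S : Set (EucR 2)) (x y : EucR 2) : Prop :=
  ∃ n : ℕ, ∃ p : ℕ → EucR 2, p 0 = x ∧ p n = y ∧ IsOrthPathIn S p n

lemma rch_refl (S : Set (EucR 2)) (x : EucR 2) : Rch S x x :=
  ⟨0, fun _ => x, rfl, rfl, fun k hk => absurd hk (Nat.not_lt_zero k)⟩

lemma rch_single {S : Set (EucR 2)} {x y : EucR 2} (h1 : IsOrthSeg x y)
    (h2 : segment ℝ x y ⊆ S) : Rch S x y := by
  refine ⟨1, fun k => if k = 0 then x else y, by simp, by simp, ?_⟩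
  intro k hk
  interval_cases k
  simpa using ⟨h1, h2⟩

lemma rch_trans {S : Set (EucR 2)} {x y z : EucR 2} (h1 : Rch S x y) (h2 : Rch S y z) :
    Rch S x z := by
  obtain ⟨n, p, hp0, hpn, hp⟩ := h1
  obtain ⟨m, q, hq0, hqm, hq⟩ := h2
  refine ⟨n + m, fun k => if k < n then p k else q (k - n), ?_, ?_, ?_⟩
  · rcases Nat.eq_zero_or_pos n with h | h
    · subst h; simpa [hq0, ← hpn] using hp0
    · simp [h, hp0]
  · simp only [show ¬ (n + m < n) by omega, if_neg, Nat.add_sub_cancel_left]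
    simpa using hqm
  · intro k hk
    by_cases h : k + 1 < n
    · have hk' : k < n := by omega
      simpa [h, hk'] using hp k hk'
    · by_cases h2 : k < n
      · -- k + 1 = n
        have hkn : k + 1 = n := by omega
        have := hp k h2
        have e2 : q (k + 1 - n) = p (k + 1) := by
          have : k + 1 - n = 0 := by omega
          rw [this, hq0, ← hpn, hkn]
        simpa [h2, h, e2, show q 0 = p (k + 1) by rw [hq0, ← hpn, hkn]] using this
      · have hkm : k - n < m := by omega
        have := hq (k - n) hkm
        have e1 : k + 1 - n = (k - n) + 1 := by omega
        simpa [h2, h, e1] using this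

lemma rch_mono {S T : Set (EucR 2)} (hST : S ⊆ T) {x y : EucR 2} (h : Rch S x y) :
    Rch T x y := by
  obtain ⟨n, p, h0, hn, hp⟩ := h
  exact ⟨n, p, h0, hn, fun k hk => ⟨(hp k hk).1, (hp k hk).2.trans hST⟩⟩

lemma isOrthSeg_symm {d : ℕ} {x y : EucR d} (h : IsOrthSeg x y) : IsOrthSeg y x := by
  obtain ⟨i, hi⟩ := h; exact ⟨i, fun j hj => (hi j hj).symm⟩

lemma rch_symm {S : Set (EucR 2)} {x y : EucR 2} (h : Rch S x y) : Rch S y x := by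
  obtain ⟨n, p, h0, hn, hp⟩ := h
  refine ⟨n, fun k => p (n - k), by simpa using hn, by simpa using h0, ?_⟩
  intro k hk
  have e : n - k = (n - (k+1)) + 1 := by omega
  have := hp (n - (k+1)) (by omega)
  constructor
  · show IsOrthSeg (p (n - k)) (p (n - (k+1)))
    rw [e]; exact isOrthSeg_symm this.1
  · show segment ℝ (p (n - k)) (p (n - (k+1))) ⊆ S
    rw [e, segment_symm]; exact this.2

-- coordinates
lemma pt2_apply_zero (a b : ℝ) : pt2 a b 0 = a := rfl
lemma pt2_apply_one (a b : ℝ) : pt2 a b 1 = b := rfl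

lemma eucr2_ext {x y : EucR 2} (h0 : x 0 = y 0) (h1 : x 1 = y 1) : x = y := by
  ext j
  fin_cases j <;> assumption

lemma eucr2_norm_sq (x : EucR 2) : ‖x‖ ^ 2 = x 0 ^ 2 + x 1 ^ 2 := by
  rw [EuclideanSpace.norm_eq]
  rw [Real.sq_sqrt (by positivity)]
  simp [Fin.sum_univ_two]

lemma eucr2_norm_eq_one {x : EucR 2} (h : x 0 ^ 2 + x 1 ^ 2 = 1) : ‖x‖ = 1 := by
  have := eucr2_norm_sq x
  nlinarith [norm_nonneg x]

lemma segment_norm_le {a b z : EucR 2} (hz : z ∈ segment ℝ a b) :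
    ‖z - a‖ ≤ ‖b - a‖ ∧ ‖z - b‖ ≤ ‖b - a‖ := by
  rw [segment_eq_image'] at hz
  obtain ⟨t, ⟨ht0, ht1⟩, rfl⟩ := hz
  constructor
  · rw [add_sub_cancel_left, norm_smul, Real.norm_eq_abs, abs_of_nonneg ht0]
    nlinarith [norm_nonneg (b - a)]
  · have : a + t • (b - a) - b = (t - 1) • (b - a) := by module
    rw [this, norm_smul, Real.norm_eq_abs, abs_of_nonpos (by linarith)]
    nlinarith [norm_nonneg (b - a)]

lemma eucr2_norm_le {v w : EucR 2} (h0 : v 0 ^ 2 ≤ w 0 ^ 2) (h1 : v 1 ^ 2 ≤ w 1 ^ 2) :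
    ‖v‖ ≤ ‖w‖ := by
  have hv := eucr2_norm_sq v
  have hw := eucr2_norm_sq w
  nlinarith [norm_nonneg v, norm_nonneg w]

lemma sub_apply_eucr2 (x y : EucR 2) (i : Fin 2) : (x - y) i = x i - y i := rfl
lemma add_apply_eucr2 (x y : EucR 2) (i : Fin 2) : (x + y) i = x i + y i := rfl
lemma smul_apply_eucr2 (c : ℝ) (x : EucR 2) (i : Fin 2) : (c • x) i = c * x i := rfl

/-- two-step move via the corner, staying in a thickening-controlled set -/
lemma rch_corner {U : Set (EucR 2)} {a b : EucR 2}
    (h1 : segment ℝ a (pt2 (b 0) (a 1)) ⊆ U) (h2 : segment ℝ (pt2 (b 0) (a 1)) b ⊆ U) :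
    Rch U a b := by
  apply rch_trans (rch_single ⟨0, ?_⟩ h1) (rch_single ⟨1, ?_⟩ h2)
  · intro j hj
    have : j = 1 := by omega
    subst this; rfl
  · intro j hj
    have : j = 0 := by omega
    subst this; rfl

lemma rch_of_open_convex {U : Set (EucR 2)} (hU : IsOpen U) (hconv : Convex ℝ U)
    {x y : EucR 2} (hx : x ∈ U) (hy : y ∈ U) : Rch U x y := by
  have hseg : segment ℝ x y ⊆ U := hconv.segment_subset hx hy
  have hcseg : IsCompact (segment ℝ x y) := by
    rw [segment_eq_image']
    exact isCompact_Icc.image (by continuity)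
  obtain ⟨δ, hδ, hthick⟩ := hcseg.exists_thickening_subset_open hU hseg
  obtain ⟨N, hN⟩ := exists_nat_gt (‖y - x‖ / δ)
  have hNpos : 0 < (N:ℝ) := lt_of_le_of_lt (by positivity) hN
  set r : ℕ → EucR 2 := fun k => x + ((k : ℝ)/N) • (y - x) with hr
  have hrseg : ∀ k, k ≤ N → r k ∈ segment ℝ x y := by
    intro k hk
    rw [segment_eq_image']
    exact ⟨(k:ℝ)/N, ⟨by positivity, by rw [div_le_one hNpos]; exact_mod_cast hk⟩, rfl⟩
  have hstep : ∀ k, ‖r (k+1) - r k‖ < δ := by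
    intro k
    have : r (k+1) - r k = ((1:ℝ)/N) • (y - x) := by
      rw [hr]; push_cast; module
    rw [this, norm_smul, Real.norm_eq_abs, abs_of_pos (by positivity)]
    rw [div_mul_eq_mul_div, one_mul, div_lt_iff₀ hNpos]
    rw [div_lt_iff₀ hδ] at hN
    linarith
  have key : ∀ k, k ≤ N → Rch U x (r k) := by
    intro k hk
    induction k with
    | zero => simpa [hr] using rch_refl U x
    | succ k ih =>
      refine rch_trans (ih (by omega)) (rch_corner ?_ ?_)
      · intro z hz
        apply hthick
        rw [Metric.mem_thickening_iff]
        refine ⟨r k, hrseg k (by omega), ?_⟩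
        rw [dist_eq_norm]
        calc ‖z - r k‖ ≤ ‖pt2 (r (k+1) 0) (r k 1) - r k‖ := (segment_norm_le hz).1
          _ ≤ ‖r (k+1) - r k‖ := by
              apply eucr2_norm_le <;>
                simp [sub_apply_eucr2, pt2_apply_zero, pt2_apply_one] <;> positivity
          _ < δ := hstep k
      · intro z hz
        apply hthick
        rw [Metric.mem_thickening_iff]
        refine ⟨r (k+1), hrseg (k+1) hk, ?_⟩
        rw [dist_eq_norm]
        calc ‖z - r (k+1)‖ ≤ ‖r (k+1) - pt2 (r (k+1) 0) (r k 1)‖ := (segment_norm_le hz).2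
          _ ≤ ‖r (k+1) - r k‖ := by
              apply eucr2_norm_le <;>
                simp [sub_apply_eucr2, pt2_apply_zero, pt2_apply_one] <;> positivity
          _ < δ := hstep k
  have : r N = y := by
    rw [hr]; simp only []
    rw [div_self (ne_of_gt hNpos), one_smul]
    module
  rw [← this]
  exact key N le_rfl

lemma eucr2_ne_zero {d : EucR 2} (hd : d ≠ 0) : d 0 ≠ 0 ∨ d 1 ≠ 0 := by
  by_contra h
  push_neg at h
  exact hd (eucr2_ext (by simp [h.1]) (by simp [h.2]))

lemma subA_core {K : Set (EucR 2)} (hK : Convex ℝ K) {a b w : EucR 2}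
    (ha : a ∈ K) (hb : b ∈ K) (hw : w ∈ interior K)
    {lam : ℝ} (hl0 : 0 < lam) (hl1 : lam < 1)
    {v : EucR 2} {i : Fin 2} (hax : ∀ j, j ≠ i → v j = 0)
    {α β : ℝ} (hβ : 0 < β) (hv : v = α • (b - a) + β • (w - (a + lam • (b - a)))) :
    ∃ q, q ∈ interior K ∧ IsOrthSeg (a + lam • (b - a)) q ∧
      segment ℝ (a + lam • (b - a)) q ⊆ K := by
  set p := a + lam • (b - a) with hp
  set m := min lam (1 - lam) with hm
  have hm0 : 0 < m := by simp [hm]; constructor <;> linarith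
  have hm1 : m ≤ lam := min_le_left _ _
  have hm2 : m ≤ 1 - lam := min_le_right _ _
  set ε := min (1/(2*β)) (m/(2*(|α|+1))) with hε
  have hεpos : 0 < ε := by
    apply lt_min <;> positivity
  have habs : 0 ≤ |α| := abs_nonneg α
  have hαle : α ≤ |α| := le_abs_self α
  have hαge : -|α| ≤ α := neg_abs_le α
  have hε1 : ε ≤ 1/(2*β) := min_le_left _ _
  have hε2 : ε ≤ m/(2*(|α|+1)) := min_le_right _ _
  have key : ∀ t, 0 ≤ t → t ≤ ε → (p + t • v ∈ K ∧ (0 < t → p + t • v ∈ interior K)) := by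
    intro t ht0 htε
    have htβ : t * β ≤ 1/2 := by
      have h' : t ≤ 1/(2*β) := le_trans htε hε1
      rw [le_div_iff₀ (by positivity : (0:ℝ) < 2*β)] at h'
      nlinarith
    have hden : (1:ℝ)/2 ≤ 1 - t*β := by linarith
    have hdenpos : (0:ℝ) < 1 - t*β := by linarith
    set μ := lam + t*α/(1 - t*β) with hμ
    have hbound : |t*α/(1 - t*β)| ≤ m := by
      rw [abs_div, abs_of_pos hdenpos, div_le_iff₀ hdenpos]
      have h1 : |t*α| = t * |α| := by rw [abs_mul, abs_of_nonneg ht0]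
      have h2 : t * (|α| + 1) ≤ m / 2 := by
        have := le_trans htε hε2
        rw [le_div_iff₀ (by positivity)] at this
        nlinarith
      nlinarith
    have hμ0 : 0 ≤ μ := by
      have := abs_le.1 hbound
      simp only [hμ]; linarith [this.1]
    have hμ1 : μ ≤ 1 := by
      have := abs_le.1 hbound
      simp only [hμ]; linarith [this.2]
    have hident : p + t • v = (1 - t*β) • (a + μ • (b - a)) + (t*β) • w := by
      rw [hp, hv, hμ]
      match_scalars <;> field_simp <;> ring
    have hmem : a + μ • (b - a) ∈ K := by
      apply hK.segment_subset ha hb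
      rw [segment_eq_image']
      exact ⟨μ, ⟨hμ0, hμ1⟩, rfl⟩
    constructor
    · rw [hident]
      exact hK hmem (interior_subset hw) (by linarith) (by positivity) (by ring)
    · intro htpos
      rw [hident]
      exact hK.combo_self_interior_mem_interior hmem hw (by linarith) (by positivity) (by ring)
  refine ⟨p + ε • v, ((key ε (le_of_lt hεpos) le_rfl).2 hεpos), ⟨i, ?_⟩, ?_⟩
  · intro j hj
    have : (p + ε • v) j = p j + ε * v j := rfl
    rw [this, hax j hj, mul_zero, add_zero]
  · intro z hz
    rw [segment_eq_image'] at hz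
    obtain ⟨s, ⟨hs0, hs1⟩, rfl⟩ := hz
    have h' : p + ε • v - p = ε • v := by module
    rw [h']
    show p + s • (ε • v) ∈ K
    rw [smul_smul]
    exact (key (s*ε) (by positivity) (by nlinarith)).1

lemma subA {K : Set (EucR 2)} (hK : Convex ℝ K) (hint : (interior K).Nonempty)
    {a b p : EucR 2} (ha : a ∈ K) (hb : b ∈ K) (hne : a ≠ b)
    (hp : p ∈ openSegment ℝ a b) :
    ∃ q, q ∈ interior K ∧ IsOrthSeg p q ∧ segment ℝ p q ⊆ K := by
  rw [openSegment_eq_image'] at hp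
  obtain ⟨lam, ⟨hl0, hl1⟩, rfl⟩ := hp
  set d := b - a with hd
  have hdne : d ≠ 0 := sub_ne_zero.2 (Ne.symm hne)
  set p := a + lam • d with hpdef
  -- find interior point w with "determinant" nonzero
  obtain ⟨w0, hw0⟩ := hint
  have : ∃ w ∈ interior K, d 0 * (w - p) 1 - d 1 * (w - p) 0 ≠ 0 := by
    by_cases h0 : d 0 * (w0 - p) 1 - d 1 * (w0 - p) 0 ≠ 0
    · exact ⟨w0, hw0, h0⟩
    · push_neg at h0
      obtain ⟨r, hr, hball⟩ := Metric.isOpen_iff.1 isOpen_interior w0 hw0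
      have hdnorm : 0 < ‖d‖ := norm_pos_iff.2 hdne
      set v := pt2 (-(d 1)) (d 0) with hv
      have hvnorm : ‖v‖ = ‖d‖ := by
        have h1 := eucr2_norm_sq v
        have h2 := eucr2_norm_sq d
        rw [hv] at h1
        rw [pt2_apply_zero, pt2_apply_one] at h1
        nlinarith [norm_nonneg v, norm_nonneg d]
      set w := w0 + (r/(2*‖d‖)) • v with hw
      refine ⟨w, hball ?_, ?_⟩
      · rw [Metric.mem_ball, dist_eq_norm]
        have : w - w0 = (r/(2*‖d‖)) • v := by rw [hw]; module
        rw [this, norm_smul, Real.norm_eq_abs, abs_of_pos (by positivity), hvnorm]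
        rw [div_mul_eq_mul_div, div_lt_iff₀ (by positivity : (0:ℝ) < 2 * ‖d‖)]
        nlinarith
      · have e0 : (w - p) 0 = (w0 - p) 0 + (r/(2*‖d‖)) * (-(d 1)) := by
          rw [hw]; show (w0 + _ • v - p) 0 = _
          rw [sub_apply_eucr2, add_apply_eucr2, smul_apply_eucr2, hv, pt2_apply_zero]
          ring_nf
          simp only [sub_apply_eucr2]
          ring
        have e1 : (w - p) 1 = (w0 - p) 1 + (r/(2*‖d‖)) * (d 0) := by
          rw [hw]; show (w0 + _ • v - p) 1 = _
          rw [sub_apply_eucr2, add_apply_eucr2, smul_apply_eucr2, hv, pt2_apply_one]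
          ring_nf
          simp only [sub_apply_eucr2]
          ring
        rw [e0, e1]
        have hdsq : 0 < d 0 ^ 2 + d 1 ^ 2 := by
          have := eucr2_norm_sq d
          nlinarith
        have heq : d 0 * ((w0 - p) 1 + r / (2 * ‖d‖) * d 0) -
            d 1 * ((w0 - p) 0 + r / (2 * ‖d‖) * -d 1)
            = (r/(2*‖d‖)) * (d 0 ^2 + d 1 ^ 2) := by
          linear_combination h0
        rw [heq]
        positivity
  obtain ⟨w, hwint, hdet⟩ := this
  set e := w - p with he
  set det := d 0 * e 1 - d 1 * e 0 with hdet2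
  -- choose axis vector
  have main : ∀ (vax : EucR 2) (i : Fin 2) (α β : ℝ), (∀ j, j ≠ i → vax j = 0) → 0 < β →
      vax = α • d + β • e → ∃ q, q ∈ interior K ∧ IsOrthSeg p q ∧ segment ℝ p q ⊆ K := by
    intro vax i α β h1 h2 h3
    exact subA_core hK ha hb hwint hl0 hl1 h1 h2 (by rw [h3, he, hpdef, hd])
  by_cases hd1 : d 1 ≠ 0
  · have hβ : -(d 1)/det ≠ 0 := by
      apply div_ne_zero _ hdet
      simpa using hd1
    have hid : ∀ (s : ℝ), s ≠ 0 → pt2 s 0 = (s*(e 1)/det) • d + (s*(-(d 1))/det) • e := by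
      intro s hs
      apply eucr2_ext
      · rw [pt2_apply_zero, add_apply_eucr2, smul_apply_eucr2, smul_apply_eucr2]
        field_simp
        ring
      · rw [pt2_apply_one, add_apply_eucr2, smul_apply_eucr2, smul_apply_eucr2]
        field_simp
        ring
    rcases lt_or_gt_of_ne hβ with hneg | hpos
    · refine main (pt2 (-1) 0) 0 ((-1)*(e 1)/det) ((-1)*(-(d 1))/det) ?_ ?_ (hid (-1) (by norm_num))
      · intro j hj
        have : j = 1 := by omega
        subst this; rfl
      · rw [neg_one_mul, neg_div]
        linarith
    · refine main (pt2 1 0) 0 (1*(e 1)/det) (1*(-(d 1))/det) ?_ ?_ (hid 1 one_ne_zero)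
      · intro j hj
        have : j = 1 := by omega
        subst this; rfl
      · rw [one_mul]; exact hpos
  · push_neg at hd1
    have hd0 : d 0 ≠ 0 := by
      rcases eucr2_ne_zero hdne with h | h
      · exact h
      · exact absurd hd1 h
    have hβ : (d 0)/det ≠ 0 := div_ne_zero hd0 hdet
    have hid : ∀ (s : ℝ), s ≠ 0 → pt2 0 s = (s*(-(e 0))/det) • d + (s*(d 0)/det) • e := by
      intro s hs
      apply eucr2_ext
      · rw [pt2_apply_zero, add_apply_eucr2, smul_apply_eucr2, smul_apply_eucr2]
        field_simp
        ring
      · rw [pt2_apply_one, add_apply_eucr2, smul_apply_eucr2, smul_apply_eucr2]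
        field_simp
        ring
    rcases lt_or_gt_of_ne hβ with hneg | hpos
    · refine main (pt2 0 (-1)) 1 ((-1)*(-(e 0))/det) ((-1)*(d 0)/det) ?_ ?_ (hid (-1) (by norm_num))
      · intro j hj
        have : j = 0 := by omega
        subst this; rfl
      · rw [neg_one_mul, neg_div]
        linarith
    · refine main (pt2 0 1) 1 (1*(-(e 0))/det) (1*(d 0)/det) ?_ ?_ (hid 1 one_ne_zero)
      · intro j hj
        have : j = 0 := by omega
        subst this; rfl
      · rw [one_mul]; exact hpos

-- circle parametrization
def cir (θ : ℝ) : EucR 2 := pt2 (Real.cos θ) (Real.sin θ)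

lemma cir_zero (θ : ℝ) : cir θ 0 = Real.cos θ := rfl
lemma cir_one (θ : ℝ) : cir θ 1 = Real.sin θ := rfl

lemma cir_norm (θ : ℝ) : ‖cir θ‖ = 1 :=
  eucr2_norm_eq_one (by rw [cir_zero, cir_one]; exact Real.cos_sq_add_sin_sq θ)

lemma cir_ne_zero (θ : ℝ) : cir θ ≠ 0 := by
  intro h
  have := cir_norm θ
  rw [h, norm_zero] at this
  norm_num at this

lemma mem_dirSet {K : Set (EucR 2)} {x y : EucR 2} (hy : y ∈ K) (hne : y ≠ x) :
    ‖y - x‖⁻¹ • (y - x) ∈ dirSet x K := ⟨y, hy, hne, rfl⟩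

lemma dirSet_spec {K : Set (EucR 2)} {x u : EucR 2} (hu : u ∈ dirSet x K) :
    ∃ r : ℝ, 0 < r ∧ x + r • u ∈ K := by
  obtain ⟨y, hy, hne, rfl⟩ := hu
  have hr : 0 < ‖y - x‖ := by
    rw [norm_pos_iff, sub_ne_zero]; exact hne
  refine ⟨‖y - x‖, hr, ?_⟩
  rw [smul_inv_smul₀ (ne_of_gt hr)]
  simpa using hy

lemma dirSet_norm_one {K : Set (EucR 2)} {x u : EucR 2} (hu : u ∈ dirSet x K) : ‖u‖ = 1 := by
  obtain ⟨y, hy, hne, rfl⟩ := hu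
  have hr : 0 < ‖y - x‖ := by
    rw [norm_pos_iff, sub_ne_zero]; exact hne
  rw [norm_smul, norm_inv, norm_norm, inv_mul_cancel₀ (ne_of_gt hr)]

lemma mem_dirSet_of_smul {K : Set (EucR 2)} {x u : EucR 2} {s : ℝ} (hs : 0 < s)
    (hnorm : ‖u‖ = 1) (hmem : x + s • u ∈ K) : u ∈ dirSet x K := by
  refine ⟨x + s • u, hmem, ?_, ?_⟩
  · intro h
    have : s • u = 0 := by
      have := congrArg (· - x) h
      simpa using this
    rcases smul_eq_zero.1 this with h' | h'
    · exact (ne_of_gt hs) h'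
    · rw [h', norm_zero] at hnorm; norm_num at hnorm
  · have h1 : x + s • u - x = s • u := by module
    rw [h1, norm_smul, Real.norm_eq_abs, abs_of_pos hs, hnorm, mul_one, smul_smul,
      inv_mul_cancel₀ (ne_of_gt hs), one_smul]

set_option maxHeartbeats 2000000 in
lemma between {K : Set (EucR 2)} (hK : Convex ℝ K) {x : EucR 2} {θ1 θ2 c : ℝ}
    (h1 : θ1 < c) (h2 : c < θ2) (hπ : θ2 - θ1 < Real.pi)
    (hu : cir θ1 ∈ dirSet x K) (hv : cir θ2 ∈ dirSet x K) : cir c ∈ dirSet x K := by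
  obtain ⟨r1, hr1, hy1⟩ := dirSet_spec hu
  obtain ⟨r2, hr2, hy2⟩ := dirSet_spec hv
  set D := Real.sin (θ2 - θ1) with hD
  have hDpos : 0 < D := Real.sin_pos_of_pos_of_lt_pi (by linarith) hπ
  set α := Real.sin (θ2 - c) / D with hα
  set β := Real.sin (c - θ1) / D with hβ
  have hαpos : 0 < α := by
    apply div_pos _ hDpos
    exact Real.sin_pos_of_pos_of_lt_pi (by linarith) (by linarith)
  have hβpos : 0 < β := by
    apply div_pos _ hDpos
    exact Real.sin_pos_of_pos_of_lt_pi (by linarith) (by linarith)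
  have hcomb : α • cir θ1 + β • cir θ2 = cir c := by
    apply eucr2_ext
    · rw [add_apply_eucr2, smul_apply_eucr2, smul_apply_eucr2, cir_zero, cir_zero, cir_zero,
        hα, hβ, hD]
      rw [div_mul_eq_mul_div, div_mul_eq_mul_div, ← add_div, div_eq_iff (ne_of_gt hDpos),
        hD, Real.sin_sub, Real.sin_sub, Real.sin_sub]
      ring
    · rw [add_apply_eucr2, smul_apply_eucr2, smul_apply_eucr2, cir_one, cir_one, cir_one,
        hα, hβ, hD]
      rw [div_mul_eq_mul_div, div_mul_eq_mul_div, ← add_div, div_eq_iff (ne_of_gt hDpos),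
        hD, Real.sin_sub, Real.sin_sub, Real.sin_sub]
      ring
  set s := (α/r1 + β/r2)⁻¹ with hs
  have hsumpos : 0 < α/r1 + β/r2 := by positivity
  have hspos : 0 < s := by rw [hs]; positivity
  set t := s*β/r2 with ht
  have htpos : 0 < t := by rw [ht]; positivity
  have hsum : s*α/r1 + s*β/r2 = 1 := by
    have h' : s * (α/r1 + β/r2) = 1 := by
      rw [hs]; exact inv_mul_cancel₀ (ne_of_gt hsumpos)
    calc s*α/r1 + s*β/r2 = s * (α/r1 + β/r2) := by ring
      _ = 1 := h'
  have h1t : 1 - t = s*α/r1 := by rw [ht]; linarith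
  have ht1 : t < 1 := by
    have : 0 < s*α/r1 := by positivity
    linarith
  set z := (1 - t) • (x + r1 • cir θ1) + t • (x + r2 • cir θ2) with hz
  have hzK : z ∈ K := hK hy1 hy2 (by linarith) (le_of_lt htpos) (by ring)
  have hzx : z - x = s • cir c := by
    have e1 : z - x = ((1-t)*r1) • cir θ1 + (t*r2) • cir θ2 := by
      rw [hz]; match_scalars <;> ring
    have e2 : (1-t)*r1 = s*α := by
      rw [h1t, div_mul_cancel₀ _ (ne_of_gt hr1)]
    have e3 : t*r2 = s*β := by
      rw [ht, div_mul_cancel₀ _ (ne_of_gt hr2)]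
    rw [e1, e2, e3, ← hcomb]
    match_scalars <;> ring
  have hznorm : ‖z - x‖ = s := by
    rw [hzx, norm_smul, Real.norm_eq_abs, abs_of_pos hspos, cir_norm, mul_one]
  refine ⟨z, hzK, ?_, ?_⟩
  · intro h
    rw [h, sub_self] at hzx
    exact cir_ne_zero c (by
      have := hzx.symm
      rcases smul_eq_zero.1 this with h' | h'
      · exact absurd h' (ne_of_gt hspos)
      · exact h')
  · rw [hznorm, hzx, smul_smul, inv_mul_cancel₀ (ne_of_gt hspos), one_smul]

lemma one_sub_cos_le_half_sq (t : ℝ) : 1 - Real.cos t ≤ t^2 / 2 := by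
  have ht : t = 2*(t/2) := by ring
  have h1 : Real.cos t = Real.cos (t/2)^2 - Real.sin (t/2)^2 := by
    rw [ht, Real.cos_two_mul']; ring_nf
  have h2 : Real.sin (t/2)^2 + Real.cos (t/2)^2 = 1 := Real.sin_sq_add_cos_sq _
  have h3 : Real.sin (t/2)^2 ≤ (t/2)^2 := Real.sin_sq_le_sq
  nlinarith

lemma cir_lipschitz : LipschitzWith 1 cir := by
  apply LipschitzWith.of_dist_le_mul
  intro a b
  rw [NNReal.coe_one, one_mul]
  have hd : dist (cir a) (cir b) = ‖cir a - cir b‖ := dist_eq_norm _ _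
  have h1 : ‖cir a - cir b‖^2 = (Real.cos a - Real.cos b)^2 + (Real.sin a - Real.sin b)^2 := by
    rw [eucr2_norm_sq]
    rw [sub_apply_eucr2, sub_apply_eucr2, cir_zero, cir_zero, cir_one, cir_one]
  have h2 : (Real.cos a - Real.cos b)^2 + (Real.sin a - Real.sin b)^2
      = 2 - 2 * Real.cos (a - b) := by
    rw [Real.cos_sub]
    nlinarith [Real.sin_sq_add_cos_sq a, Real.sin_sq_add_cos_sq b]
  have h3 := one_sub_cos_le_half_sq (a - b)
  have h4 : ‖cir a - cir b‖^2 ≤ (a-b)^2 := by rw [h1, h2]; linarith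
  rw [hd, Real.dist_eq]
  nlinarith [norm_nonneg (cir a - cir b), abs_nonneg (a-b), sq_abs (a-b)]

lemma neg_apply_eucr2 (x : EucR 2) (i : Fin 2) : (-x) i = -(x i) := rfl

lemma cir_add_pi (θ : ℝ) : cir (θ + Real.pi) = -cir θ := by
  apply eucr2_ext
  · rw [cir_zero, neg_apply_eucr2, cir_zero, Real.cos_add_pi]
  · rw [cir_one, neg_apply_eucr2, cir_one, Real.sin_add_pi]

lemma cir_sub_two_pi (θ : ℝ) : cir (θ - 2*Real.pi) = cir θ := by
  apply eucr2_ext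
  · rw [cir_zero, cir_zero, Real.cos_sub_two_pi]
  · rw [cir_one, cir_one, Real.sin_sub_two_pi]

lemma cir_exists {u : EucR 2} (h : ‖u‖ = 1) :
    ∃ θ, -Real.pi < θ ∧ θ ≤ Real.pi ∧ cir θ = u := by
  have hsq : u 0 ^ 2 + u 1 ^ 2 = 1 := by
    have := eucr2_norm_sq u
    rw [h] at this
    linarith [this.symm]
  have hb1 : -1 ≤ u 0 := by nlinarith
  have hb2 : u 0 ≤ 1 := by nlinarith
  have hpi := Real.pi_pos
  by_cases h1 : 0 ≤ u 1
  · refine ⟨Real.arccos (u 0), by linarith [Real.arccos_nonneg (u 0)],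
      Real.arccos_le_pi (u 0), eucr2_ext ?_ ?_⟩
    · rw [cir_zero, Real.cos_arccos hb1 hb2]
    · rw [cir_one, Real.sin_arccos]
      rw [show 1 - u 0 ^ 2 = u 1 ^ 2 by linarith, Real.sqrt_sq h1]
  · push_neg at h1
    refine ⟨-Real.arccos (u 0), ?_, by linarith [Real.arccos_nonneg (u 0)], eucr2_ext ?_ ?_⟩
    · rw [neg_lt_neg_iff]
      rcases lt_or_eq_of_le (Real.arccos_le_pi (u 0)) with h' | h'
      · exact h'
      · exfalso
        have : u 0 ≤ -1 := Real.arccos_eq_pi.1 h'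
        have : u 0 = -1 := le_antisymm this hb1
        rw [this] at hsq
        nlinarith
    · rw [cir_zero, Real.cos_neg, Real.cos_arccos hb1 hb2]
    · rw [cir_one, Real.sin_neg, Real.sin_arccos]
      rw [show 1 - u 0 ^ 2 = u 1 ^ 2 by linarith, Real.sqrt_sq_eq_abs,
        abs_of_neg h1, neg_neg]

lemma ivt_zero {g : ℝ → ℝ} (hg : Continuous g) {a b : ℝ} (hab : a < b)
    (hsign : g a * g b < 0) : ∃ c ∈ Ioo a b, g c = 0 := by
  rcases lt_or_ge (g a) 0 with h1 | h1
  · have h2 : 0 < g b := by nlinarith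
    have := intermediate_value_Ioo (le_of_lt hab) (hg.continuousOn (s := Icc a b))
    obtain ⟨c, hc, hgc⟩ := this (by constructor <;> assumption : (0:ℝ) ∈ Ioo (g a) (g b))
    exact ⟨c, hc, hgc⟩
  · have h2 : g b < 0 := by nlinarith
    have h1' : 0 < g a := by nlinarith
    have := intermediate_value_Ioo' (le_of_lt hab) (hg.continuousOn (s := Icc a b))
    obtain ⟨c, hc, hgc⟩ := this (by constructor <;> assumption : (0:ℝ) ∈ Ioo (g b) (g a))
    exact ⟨c, hc, hgc⟩

lemma ivt_step {K : Set (EucR 2)} (hK : Convex ℝ K) {x : EucR 2} {θ1 θ2 : ℝ}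
    (h12 : θ1 < θ2) (hlt : θ2 - θ1 < Real.pi)
    (h1 : cir θ1 ∈ dirSet x K) (h2 : cir θ2 ∈ dirSet x K)
    (hdiff : Real.cos θ1 * Real.cos θ2 < 0 ∨ Real.sin θ1 * Real.sin θ2 < 0) :
    ∃ u ∈ dirSet x K, u 0 = 0 ∨ u 1 = 0 := by
  rcases hdiff with hd | hd
  · obtain ⟨c, hc, hgc⟩ := ivt_zero Real.continuous_cos h12 hd
    exact ⟨cir c, between hK hc.1 hc.2 hlt h1 h2, Or.inl (by rw [cir_zero, hgc])⟩
  · obtain ⟨c, hc, hgc⟩ := ivt_zero Real.continuous_sin h12 hd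
    exact ⟨cir c, between hK hc.1 hc.2 hlt h1 h2, Or.inr (by rw [cir_one, hgc])⟩

lemma same_signs {K : Set (EucR 2)} (hK : Convex ℝ K) {x u v : EucR 2}
    (hu : u ∈ dirSet x K) (hv : v ∈ dirSet x K)
    (hax : ∀ w ∈ dirSet x K, w 0 ≠ 0 ∧ w 1 ≠ 0)
    (hnoanti : ∀ w ∈ dirSet x K, -w ∉ dirSet x K) :
    (0 < u 0 ↔ 0 < v 0) ∧ (0 < u 1 ↔ 0 < v 1) := by
  by_contra hcon
  -- extract: opposite sign in some coordinate
  have hu0 := (hax u hu).1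
  have hu1 := (hax u hu).2
  have hv0 := (hax v hv).1
  have hv1 := (hax v hv).2
  have hprod : u 0 * v 0 < 0 ∨ u 1 * v 1 < 0 := by
    by_contra h
    push_neg at h
    apply hcon
    constructor
    · rcases lt_or_gt_of_ne hu0 with h' | h' <;> rcases lt_or_gt_of_ne hv0 with h'' | h'' <;>
        constructor <;> intro <;> try linarith
      · nlinarith [h.1]
      · nlinarith [h.1]
    · rcases lt_or_gt_of_ne hu1 with h' | h' <;> rcases lt_or_gt_of_ne hv1 with h'' | h'' <;>
        constructor <;> intro <;> try linarith
      · nlinarith [h.2]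
      · nlinarith [h.2]
  obtain ⟨θu, hθu1, hθu2, hθu⟩ := cir_exists (dirSet_norm_one hu)
  obtain ⟨θv, hθv1, hθv2, hθv⟩ := cir_exists (dirSet_norm_one hv)
  have hpi := Real.pi_pos
  -- helper applying ivt_step given ordered pair
  have main : ∀ θ1 θ2 : ℝ, θ1 < θ2 → θ2 - θ1 < Real.pi → cir θ1 ∈ dirSet x K →
      cir θ2 ∈ dirSet x K →
      (Real.cos θ1 * Real.cos θ2 < 0 ∨ Real.sin θ1 * Real.sin θ2 < 0) → False := by
    intro θ1 θ2 ha hb hc hd he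
    obtain ⟨w, hw, hw0⟩ := ivt_step hK ha hb hc hd he
    rcases hw0 with h' | h'
    · exact (hax w hw).1 h'
    · exact (hax w hw).2 h'
  have hne : θu ≠ θv := by
    intro h
    rw [h, hθv] at hθu
    subst hθu
    rcases hprod with h' | h' <;> nlinarith
  have hnpi : θv - θu ≠ Real.pi ∧ θu - θv ≠ Real.pi := by
    constructor <;> intro h
    · have : θv = θu + Real.pi := by linarith
      rw [this, cir_add_pi, hθu] at hθv
      exact hnoanti u hu (hθv ▸ hv)
    · have : θu = θv + Real.pi := by linarith
      rw [this, cir_add_pi, hθv] at hθu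
      exact hnoanti v hv (hθu ▸ hu)
  -- u coords in terms of θu
  have hu0' : u 0 = Real.cos θu := by rw [← hθu, cir_zero]
  have hu1' : u 1 = Real.sin θu := by rw [← hθu, cir_one]
  have hv0' : v 0 = Real.cos θv := by rw [← hθv, cir_zero]
  have hv1' : v 1 = Real.sin θv := by rw [← hθv, cir_one]
  rw [hu0', hv0', hu1', hv1'] at hprod
  rcases lt_or_gt_of_ne hne with hlt | hlt
  · rcases lt_trichotomy (θv - θu) Real.pi with h' | h' | h'
    · exact main θu θv hlt (by linarith) (hθu ▸ hu) (hθv ▸ hv) hprod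
    · exact hnpi.1 h'
    · -- use θv - 2π < θu
      refine main (θv - 2*Real.pi) θu (by linarith) (by linarith)
        (by rw [cir_sub_two_pi]; exact hθv ▸ hv) (hθu ▸ hu) ?_
      rcases hprod with h'' | h''
      · left
        rw [Real.cos_sub_two_pi]
        linarith [h'']
      · right
        rw [Real.sin_sub_two_pi]
        linarith [h'']
  · rcases lt_trichotomy (θu - θv) Real.pi with h' | h' | h'
    · refine main θv θu hlt (by linarith) (hθv ▸ hv) (hθu ▸ hu) ?_
      rcases hprod with h'' | h''
      · exact Or.inl (by linarith)
      · exact Or.inr (by linarith)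
    · exact hnpi.2 h'
    · refine main (θu - 2*Real.pi) θv (by linarith) (by linarith)
        (by rw [cir_sub_two_pi]; exact hθu ▸ hu) (hθv ▸ hv) ?_
      rcases hprod with h'' | h''
      · left
        rw [Real.cos_sub_two_pi]
        linarith [h'']
      · right
        rw [Real.sin_sub_two_pi]
        linarith [h'']

lemma normalize_norm_one {z x : EucR 2} (h : z ≠ x) : ‖‖z - x‖⁻¹ • (z - x)‖ = 1 := by
  have hr : 0 < ‖z - x‖ := by rw [norm_pos_iff, sub_ne_zero]; exact h
  rw [norm_smul, norm_inv, norm_norm, inv_mul_cancel₀ (ne_of_gt hr)]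

set_option maxHeartbeats 1000000 in
lemma measure_core {K : Set (EucR 2)} (hK : Convex ℝ K) {x : EucR 2} {ε0 ε1 a : ℝ}
    (F1 : ∀ u : EucR 2, ‖u‖ = 1 → 0 < ε0 * u 0 → 0 < ε1 * u 1 →
      ∃ θ, θ ∈ Ioo a (a + Real.pi/2) ∧ cir θ = u)
    (F2 : ∀ θ, θ ∈ Ioo a (a + Real.pi/2) →
      0 < ε0 * Real.cos θ ∧ 0 < ε1 * Real.sin θ)
    (hsign : ∀ u ∈ dirSet x K, 0 < ε0 * u 0 ∧ 0 < ε1 * u 1)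
    (hne : (dirSet x K).Nonempty)
    (hob : ENNReal.ofReal (Real.pi / 2) < angMeasure x K ∨
      (angMeasure x K = ENNReal.ofReal (Real.pi / 2) ∧ ¬ IsOpen (TCone x K \ {x}))) :
    False := by
  have hpi := Real.pi_pos
  set S : Set ℝ := Ioo a (a + Real.pi/2) ∩ cir ⁻¹' (dirSet x K) with hS
  have himg : dirSet x K = cir '' S := by
    apply Set.Subset.antisymm
    · intro u hu
      obtain ⟨θ, hθ, hcirθ⟩ := F1 u (dirSet_norm_one hu) (hsign u hu).1 (hsign u hu).2
      exact ⟨θ, ⟨hθ, by rw [mem_preimage, hcirθ]; exact hu⟩, hcirθ⟩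
    · rintro u ⟨θ, ⟨_, hθ2⟩, rfl⟩
      exact hθ2
  have hlip := cir_lipschitz.hausdorffMeasure_image_le (by norm_num : (0:ℝ) ≤ 1) S
  simp only [ENNReal.coe_one, ENNReal.one_rpow, one_mul] at hlip
  have hlip' : μH[1] (cir '' S) ≤ volume S := by
    rw [← MeasureTheory.hausdorffMeasure_real]
    simpa using hlip
  have hIoovol : volume (Ioo a (a + Real.pi/2)) = ENNReal.ofReal (Real.pi/2) := by
    rw [Real.volume_Ioo]
    norm_num
  have hmeas : angMeasure x K ≤ ENNReal.ofReal (Real.pi/2) := by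
    rw [angMeasure, himg]
    refine le_trans hlip' (le_trans (measure_mono inter_subset_left) ?_)
    rw [hIoovol]
  rcases hob with hlt | ⟨heq, hopen⟩
  · exact absurd hmeas (not_le.2 hlt)
  -- equality case
  have hvol : volume S = ENNReal.ofReal (Real.pi/2) := by
    apply le_antisymm
    · exact le_trans (measure_mono inter_subset_left) (le_of_eq hIoovol)
    · rw [← heq, angMeasure, himg]
      exact hlip'
  have hord : ∀ p ∈ S, ∀ q ∈ S, ∀ c, p < c → c < q → c ∈ S := by
    intro p hp q hq c h1 h2
    refine ⟨⟨lt_trans hp.1.1 h1, lt_trans h2 hq.1.2⟩, ?_⟩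
    rw [mem_preimage]
    exact between hK h1 h2 (by have := hp.1.1; have := hq.1.2; linarith) hp.2 hq.2
  have hSfull : S = Ioo a (a + Real.pi/2) := by
    by_contra hcon
    have hsub : S ⊆ Ioo a (a + Real.pi/2) := inter_subset_left
    obtain ⟨t, ht, htS⟩ : ∃ t ∈ Ioo a (a + Real.pi/2), t ∉ S := by
      by_contra h
      push_neg at h
      exact hcon (Subset.antisymm hsub h)
    have hsplit : (∀ s ∈ S, s < t) ∨ (∀ s ∈ S, t < s) := by
      by_contra h
      push_neg at h
      obtain ⟨⟨p, hp, hpt⟩, ⟨q, hq, hqt⟩⟩ := h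
      -- h : (∃ s ∈ S, ¬ s < t) ∧ (∃ s ∈ S, ¬ t < s)
      have hpt' : t ≤ p := hpt
      have hqt' : q ≤ t := hqt
      rcases eq_or_lt_of_le hpt' with h' | h'
      · exact htS (h' ▸ hp)
      rcases eq_or_lt_of_le hqt' with h'' | h''
      · exact htS (h'' ▸ hq)
      exact htS (hord q hq p hp t h'' h')
    have hlt' : volume S < ENNReal.ofReal (Real.pi/2) := by
      rcases hsplit with h | h
      · have : S ⊆ Ioo a t := fun s hs => ⟨(hsub hs).1, h s hs⟩
        calc volume S ≤ volume (Ioo a t) := measure_mono this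
          _ = ENNReal.ofReal (t - a) := Real.volume_Ioo
          _ < ENNReal.ofReal (Real.pi/2) := by
              apply ENNReal.ofReal_lt_ofReal_iff (by linarith) |>.2
              have := ht.2; linarith
      · have : S ⊆ Ioo t (a + Real.pi/2) := fun s hs => ⟨h s hs, (hsub hs).2⟩
        calc volume S ≤ volume (Ioo t (a + Real.pi/2)) := measure_mono this
          _ = ENNReal.ofReal (a + Real.pi/2 - t) := Real.volume_Ioo
          _ < ENNReal.ofReal (Real.pi/2) := by
              apply ENNReal.ofReal_lt_ofReal_iff (by linarith) |>.2
              have := ht.1; linarith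
    rw [hvol] at hlt'
    exact absurd hlt' (lt_irrefl _)
  -- dirSet is the full open quadrant arc; show TCone \ {x} is open
  have hdir : dirSet x K = cir '' Ioo a (a + Real.pi/2) := by rw [himg, hSfull]
  have hTChar : TCone x K \ {x} =
      {z : EucR 2 | 0 < ε0 * ((z - x) 0) ∧ 0 < ε1 * ((z - x) 1)} := by
    apply Set.Subset.antisymm
    · rintro z ⟨hzT, hzx⟩
      rw [TCone, mem_iUnion₂] at hzT
      obtain ⟨y, hy, t, ht0, rfl⟩ := hzT
      have hyne : y ≠ x := by
        intro h
        exact hy.2 (by simp [h])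
      have hu := mem_dirSet hy.1 hyne
      have hsig := hsign _ hu
      have hnorm : 0 < ‖y - x‖ := by rw [norm_pos_iff, sub_ne_zero]; exact hyne
      have hs0 : 0 < ε0 * ((y - x) 0) := by
        have h1 : (‖y - x‖⁻¹ • (y - x)) 0 = ‖y - x‖⁻¹ * ((y-x) 0) := rfl
        rw [h1] at hsig
        have h2 : ε0 * ((y-x) 0) = (ε0 * (‖y - x‖⁻¹ * ((y-x) 0))) * ‖y - x‖ := by
          field_simp
        rw [h2]
        exact mul_pos hsig.1 hnorm
      have hs1 : 0 < ε1 * ((y - x) 1) := by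
        have h1 : (‖y - x‖⁻¹ • (y - x)) 1 = ‖y - x‖⁻¹ * ((y-x) 1) := rfl
        rw [h1] at hsig
        have h2 : ε1 * ((y-x) 1) = (ε1 * (‖y - x‖⁻¹ * ((y-x) 1))) * ‖y - x‖ := by
          field_simp
        rw [h2]
        exact mul_pos hsig.2 hnorm
      have htpos : 0 < t := by
        rcases eq_or_lt_of_le ht0 with h' | h'
        · exfalso; apply hzx; rw [← h', zero_smul, add_zero]; rfl
        · exact h'
      have he : (x + t • (y - x) - x) = t • (y - x) := by module
      constructor
      · rw [he]
        have : (t • (y-x)) 0 = t * ((y-x) 0) := rfl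
        rw [this]
        nlinarith
      · rw [he]
        have : (t • (y-x)) 1 = t * ((y-x) 1) := rfl
        rw [this]
        nlinarith
    · rintro z ⟨hz0, hz1⟩
      have hzx : z ≠ x := by
        intro h
        rw [h, sub_self] at hz0
        have : ((0:EucR 2)) 0 = (0:ℝ) := rfl
        rw [this, mul_zero] at hz0
        exact lt_irrefl _ hz0
      have hnorm : 0 < ‖z - x‖ := by rw [norm_pos_iff, sub_ne_zero]; exact hzx
      set u := ‖z - x‖⁻¹ • (z - x) with hu
      have hun : ‖u‖ = 1 := normalize_norm_one hzx
      have hu0 : 0 < ε0 * u 0 := by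
        have h1 : u 0 = ‖z - x‖⁻¹ * ((z-x) 0) := rfl
        have hinv : 0 < ‖z-x‖⁻¹ := by positivity
        rw [h1, show ε0 * (‖z - x‖⁻¹ * ((z-x) 0)) = (ε0 * ((z-x) 0)) * ‖z-x‖⁻¹ by ring]
        exact mul_pos hz0 hinv
      have hu1 : 0 < ε1 * u 1 := by
        have h1 : u 1 = ‖z - x‖⁻¹ * ((z-x) 1) := rfl
        have hinv : 0 < ‖z-x‖⁻¹ := by positivity
        rw [h1, show ε1 * (‖z - x‖⁻¹ * ((z-x) 1)) = (ε1 * ((z-x) 1)) * ‖z-x‖⁻¹ by ring]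
        exact mul_pos hz1 hinv
      obtain ⟨θ, hθ, hcirθ⟩ := F1 u hun hu0 hu1
      have humem : u ∈ dirSet x K := by
        rw [hdir]
        exact ⟨θ, hθ, hcirθ⟩
      obtain ⟨y, hyK, hyne, hyu⟩ := humem
      refine ⟨?_, ?_⟩
      · rw [TCone, mem_iUnion₂]
        refine ⟨y, ⟨hyK, by simpa using hyne⟩, ‖z-x‖ * ‖y-x‖⁻¹, by positivity, ?_⟩
        have h1 : z = x + (z - x) := by module
        rw [mul_smul, ← hyu]
        rw [hu, smul_inv_smul₀ (ne_of_gt hnorm)]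
        exact h1
      · simpa using hzx
  apply hopen
  rw [hTChar]
  have hcont0 : Continuous (fun z : EucR 2 => ε0 * ((z - x) 0)) := by
    apply Continuous.mul continuous_const
    have : (fun z : EucR 2 => (z - x) 0) = fun z : EucR 2 => z 0 - x 0 := rfl
    rw [this]
    exact Continuous.sub ((EuclideanSpace.proj (0 : Fin 2)).continuous) continuous_const
  have hcont1 : Continuous (fun z : EucR 2 => ε1 * ((z - x) 1)) := by
    apply Continuous.mul continuous_const
    have : (fun z : EucR 2 => (z - x) 1) = fun z : EucR 2 => z 1 - x 1 := rfl
    rw [this]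
    exact Continuous.sub ((EuclideanSpace.proj (1 : Fin 2)).continuous) continuous_const
  have : {z : EucR 2 | 0 < ε0 * ((z - x) 0) ∧ 0 < ε1 * ((z - x) 1)} =
      (fun z : EucR 2 => ε0 * ((z - x) 0)) ⁻¹' (Ioi 0) ∩
      (fun z : EucR 2 => ε1 * ((z - x) 1)) ⁻¹' (Ioi 0) := rfl
  rw [this]
  exact (isOpen_Ioi.preimage hcont0).inter (isOpen_Ioi.preimage hcont1)

lemma cir_cos {θ : ℝ} {u : EucR 2} (h : cir θ = u) : Real.cos θ = u 0 := by
  rw [← h]; rfl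
lemma cir_sin {θ : ℝ} {u : EucR 2} (h : cir θ = u) : Real.sin θ = u 1 := by
  rw [← h]; rfl

lemma quadθ_pp {u : EucR 2} (hn : ‖u‖ = 1) (h0 : 0 < u 0) (h1 : 0 < u 1) :
    ∃ θ, θ ∈ Ioo (0:ℝ) (0 + Real.pi/2) ∧ cir θ = u := by
  have hpi := Real.pi_pos
  obtain ⟨θ, ha, hb, hc⟩ := cir_exists hn
  have hcos := cir_cos hc
  have hsin := cir_sin hc
  refine ⟨θ, ⟨?_, ?_⟩, hc⟩
  · by_contra h
    push_neg at h
    have := Real.sin_nonpos_of_nonpos_of_neg_pi_le h (by linarith)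
    linarith
  · by_contra h
    push_neg at h
    have := Real.cos_nonpos_of_pi_div_two_le_of_le (x := θ) (by linarith) (by linarith)
    linarith

lemma quadθ_mp {u : EucR 2} (hn : ‖u‖ = 1) (h0 : u 0 < 0) (h1 : 0 < u 1) :
    ∃ θ, θ ∈ Ioo (Real.pi/2) (Real.pi/2 + Real.pi/2) ∧ cir θ = u := by
  have hpi := Real.pi_pos
  obtain ⟨θ, ha, hb, hc⟩ := cir_exists hn
  have hcos := cir_cos hc
  have hsin := cir_sin hc
  refine ⟨θ, ⟨?_, ?_⟩, hc⟩
  · by_contra h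
    push_neg at h
    have h' : -(Real.pi/2) ≤ θ := by
      by_contra h''
      push_neg at h''
      have := Real.sin_nonpos_of_nonpos_of_neg_pi_le (x := θ) (by linarith) (by linarith)
      linarith
    have := Real.cos_nonneg_of_neg_pi_div_two_le_of_le h' h
    linarith
  · rcases lt_or_eq_of_le hb with h' | h'
    · linarith
    · rw [h', Real.sin_pi] at hsin
      linarith

lemma quadθ_pm {u : EucR 2} (hn : ‖u‖ = 1) (h0 : 0 < u 0) (h1 : u 1 < 0) :
    ∃ θ, θ ∈ Ioo (-(Real.pi/2)) (-(Real.pi/2) + Real.pi/2) ∧ cir θ = u := by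
  have hpi := Real.pi_pos
  obtain ⟨θ, ha, hb, hc⟩ := cir_exists hn
  have hcos := cir_cos hc
  have hsin := cir_sin hc
  refine ⟨θ, ⟨?_, ?_⟩, hc⟩
  · by_contra h
    push_neg at h
    -- θ ≤ -π/2 : cos θ ≤ 0
    have h2 : Real.cos (-θ) ≤ 0 :=
      Real.cos_nonpos_of_pi_div_two_le_of_le (x := -θ) (by linarith) (by linarith)
    rw [Real.cos_neg] at h2
    linarith
  · by_contra h
    push_neg at h
    have := Real.sin_nonneg_of_nonneg_of_le_pi (x := θ) (by linarith) hb
    linarith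

lemma quadθ_mm {u : EucR 2} (hn : ‖u‖ = 1) (h0 : u 0 < 0) (h1 : u 1 < 0) :
    ∃ θ, θ ∈ Ioo (-Real.pi) (-Real.pi + Real.pi/2) ∧ cir θ = u := by
  have hpi := Real.pi_pos
  obtain ⟨θ, ha, hb, hc⟩ := cir_exists hn
  have hcos := cir_cos hc
  have hsin := cir_sin hc
  refine ⟨θ, ⟨ha, ?_⟩, hc⟩
  by_contra h
  push_neg at h
  -- -π/2 ≤ θ; also θ < 0 by sin; so cos ≥ 0 contradiction
  have hθ0 : θ < 0 := by
    by_contra h'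
    push_neg at h'
    have := Real.sin_nonneg_of_nonneg_of_le_pi h' hb
    linarith
  have := Real.cos_nonneg_of_neg_pi_div_two_le_of_le (x := θ) (by linarith) (by linarith)
  linarith

lemma quadF2_pp : ∀ θ, θ ∈ Ioo (0:ℝ) (0 + Real.pi/2) →
    0 < (1:ℝ) * Real.cos θ ∧ 0 < (1:ℝ) * Real.sin θ := by
  intro θ hθ
  have hpi := Real.pi_pos
  constructor
  · rw [one_mul]
    exact Real.cos_pos_of_mem_Ioo ⟨by linarith [hθ.1], by linarith [hθ.2]⟩
  · rw [one_mul]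
    exact Real.sin_pos_of_pos_of_lt_pi hθ.1 (by linarith [hθ.2])

lemma quadF2_mp : ∀ θ, θ ∈ Ioo (Real.pi/2) (Real.pi/2 + Real.pi/2) →
    0 < (-1:ℝ) * Real.cos θ ∧ 0 < (1:ℝ) * Real.sin θ := by
  intro θ hθ
  have hpi := Real.pi_pos
  constructor
  · have := Real.cos_neg_of_pi_div_two_lt_of_lt (x := θ) hθ.1 (by linarith [hθ.2])
    linarith
  · rw [one_mul]
    exact Real.sin_pos_of_pos_of_lt_pi (by linarith [hθ.1]) (by linarith [hθ.2])

lemma quadF2_pm : ∀ θ, θ ∈ Ioo (-(Real.pi/2)) (-(Real.pi/2) + Real.pi/2) →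
    0 < (1:ℝ) * Real.cos θ ∧ 0 < (-1:ℝ) * Real.sin θ := by
  intro θ hθ
  have hpi := Real.pi_pos
  constructor
  · rw [one_mul]
    exact Real.cos_pos_of_mem_Ioo ⟨by linarith [hθ.1], by linarith [hθ.2]⟩
  · have := Real.sin_neg_of_neg_of_neg_pi_lt (x := θ) (by linarith [hθ.2]) (by linarith [hθ.1])
    linarith

lemma quadF2_mm : ∀ θ, θ ∈ Ioo (-Real.pi) (-Real.pi + Real.pi/2) →
    0 < (-1:ℝ) * Real.cos θ ∧ 0 < (-1:ℝ) * Real.sin θ := by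
  intro θ hθ
  have hpi := Real.pi_pos
  constructor
  · have h2 : Real.cos (-θ) < 0 :=
      Real.cos_neg_of_pi_div_two_lt_of_lt (x := -θ) (by linarith [hθ.2]) (by linarith [hθ.1])
    rw [Real.cos_neg] at h2
    linarith
  · have := Real.sin_neg_of_neg_of_neg_pi_lt (x := θ) (by linarith [hθ.2]) hθ.1
    linarith

lemma frontier_not_interior {K : Set (EucR 2)} {x : EucR 2} (hx : x ∈ frontier K) :
    x ∉ interior K := by
  intro h
  exact disjoint_interior_frontier.ne_of_mem h hx rfl

lemma exists_axis_dir {K : Set (EucR 2)} (hK : Convex ℝ K) (hint : (interior K).Nonempty)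
    {x : EucR 2} (hx : x ∈ frontier K)
    (hob : ENNReal.ofReal (Real.pi / 2) < angMeasure x K ∨
      (angMeasure x K = ENNReal.ofReal (Real.pi / 2) ∧ ¬ IsOpen (TCone x K \ {x})))
    (hnoanti : ∀ u ∈ dirSet x K, -u ∉ dirSet x K) :
    ∃ u ∈ dirSet x K, u 0 = 0 ∨ u 1 = 0 := by
  by_contra hcon
  push_neg at hcon
  have hcon' : ∀ u ∈ dirSet x K, u 0 ≠ 0 ∧ u 1 ≠ 0 := by
    intro u hu
    have := hcon u hu
    exact ⟨this.1, this.2⟩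
  obtain ⟨w, hw⟩ := hint
  have hwx : w ≠ x := by
    intro h
    exact frontier_not_interior hx (h ▸ hw)
  have hustar : ‖w - x‖⁻¹ • (w - x) ∈ dirSet x K := mem_dirSet (interior_subset hw) hwx
  set ustar := ‖w - x‖⁻¹ • (w - x) with hustardef
  have hne : (dirSet x K).Nonempty := ⟨ustar, hustar⟩
  have hss : ∀ v ∈ dirSet x K, (0 < ustar 0 ↔ 0 < v 0) ∧ (0 < ustar 1 ↔ 0 < v 1) :=
    fun v hv => same_signs hK hustar hv hcon' hnoanti
  have hu0ne := (hcon' ustar hustar).1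
  have hu1ne := (hcon' ustar hustar).2
  rcases lt_or_gt_of_ne hu0ne with hn0 | hp0 <;> rcases lt_or_gt_of_ne hu1ne with hn1 | hp1
  · -- (-,-)
    refine measure_core hK (ε0 := -1) (ε1 := -1) (a := -Real.pi)
      (fun u hn h0 h1 => quadθ_mm hn (by nlinarith) (by nlinarith)) quadF2_mm ?_ hne hob
    intro u hu
    have h := hss u hu
    have h0 : u 0 < 0 := by
      have := (hcon' u hu).1
      rcases lt_or_gt_of_ne this with h' | h'
      · exact h'
      · exact absurd (h.1.2 h') (not_lt.2 (le_of_lt hn0))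
    have h1 : u 1 < 0 := by
      have := (hcon' u hu).2
      rcases lt_or_gt_of_ne this with h' | h'
      · exact h'
      · exact absurd (h.2.2 h') (not_lt.2 (le_of_lt hn1))
    constructor <;> nlinarith
  · -- (-,+)
    refine measure_core hK (ε0 := -1) (ε1 := 1) (a := Real.pi/2)
      (fun u hn h0 h1 => quadθ_mp hn (by nlinarith) (by nlinarith)) quadF2_mp ?_ hne hob
    intro u hu
    have h := hss u hu
    have h0 : u 0 < 0 := by
      have := (hcon' u hu).1
      rcases lt_or_gt_of_ne this with h' | h'
      · exact h'
      · exact absurd (h.1.2 h') (not_lt.2 (le_of_lt hn0))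
    have h1 : 0 < u 1 := h.2.1 hp1
    constructor <;> nlinarith
  · -- (+,-)
    refine measure_core hK (ε0 := 1) (ε1 := -1) (a := -(Real.pi/2))
      (fun u hn h0 h1 => quadθ_pm hn (by nlinarith) (by nlinarith)) quadF2_pm ?_ hne hob
    intro u hu
    have h := hss u hu
    have h0 : 0 < u 0 := h.1.1 hp0
    have h1 : u 1 < 0 := by
      have := (hcon' u hu).2
      rcases lt_or_gt_of_ne this with h' | h'
      · exact h'
      · exact absurd (h.2.2 h') (not_lt.2 (le_of_lt hn1))
    constructor <;> nlinarith
  · -- (+,+)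
    refine measure_core hK (ε0 := 1) (ε1 := 1) (a := 0)
      (fun u hn h0 h1 => quadθ_pp hn (by nlinarith) (by nlinarith)) quadF2_pp ?_ hne hob
    intro u hu
    have h := hss u hu
    have h0 : 0 < u 0 := h.1.1 hp0
    have h1 : 0 < u 1 := h.2.1 hp1
    constructor <;> nlinarith

lemma body_to_interior {K : Set (EucR 2)} (hconv : Convex ℝ K) (hint : (interior K).Nonempty)
    (hob : Obtuse K) {x : EucR 2} (hxK : x ∈ K) :
    ∃ q ∈ interior K, Rch K x q := by
  by_cases hxint : x ∈ interior K
  · exact ⟨x, hxint, rch_refl K x⟩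
  have hfront : x ∈ frontier K := by
    rw [← closure_diff_interior]
    exact ⟨subset_closure hxK, hxint⟩
  by_cases hanti : ∀ u ∈ dirSet x K, -u ∉ dirSet x K
  · -- no antipodal pair : use the measure argument to find an axis direction
    obtain ⟨u, hu, hu0⟩ := exists_axis_dir hconv hint hfront (hob x hfront) hanti
    obtain ⟨r, hr, hyK⟩ := dirSet_spec hu
    set y := x + r • u with hy
    have hune : u ≠ 0 := by
      intro h
      have := dirSet_norm_one hu
      rw [h, norm_zero] at this
      norm_num at this
    have hxy : x ≠ y := by
      intro h
      have h2 : x + r • u - x = 0 := by rw [← hy, ← h]; simp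
      have h3 : r • u = 0 := by
        rwa [show x + r • u - x = r • u by module] at h2
      rcases smul_eq_zero.1 h3 with h' | h'
      · exact (ne_of_gt hr) h'
      · exact hune h'
    set m := x + (r/2) • u with hm
    have hmseg : m ∈ openSegment ℝ x y := by
      rw [openSegment_eq_image']
      refine ⟨1/2, ⟨by norm_num, by norm_num⟩, ?_⟩
      rw [hy, hm]
      match_scalars <;> ring
    have horth : IsOrthSeg x m := by
      rcases hu0 with h' | h'
      · refine ⟨1, fun j hj => ?_⟩
        have : j = 0 := by omega
        subst this
        have : m 0 = x 0 + (r/2) * u 0 := rfl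
        rw [this, h', mul_zero, add_zero]
      · refine ⟨0, fun j hj => ?_⟩
        have : j = 1 := by omega
        subst this
        have : m 1 = x 1 + (r/2) * u 1 := rfl
        rw [this, h', mul_zero, add_zero]
    have hsegxm : segment ℝ x m ⊆ K := by
      have h1 : m ∈ segment ℝ x y := openSegment_subset_segment _ _ _ hmseg
      have h2 : segment ℝ x m ⊆ segment ℝ x y :=
        (convex_segment x y).segment_subset (left_mem_segment _ _ _) h1
      exact h2.trans (hconv.segment_subset hxK hyK)
    obtain ⟨q, hqint, hqorth, hqseg⟩ := subA hconv hint hxK hyK hxy hmseg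
    exact ⟨q, hqint, rch_trans (rch_single horth hsegxm) (rch_single hqorth hqseg)⟩
  · -- antipodal pair exists : x is between two points of K
    push_neg at hanti
    obtain ⟨u, hu, hanti'⟩ := hanti
    obtain ⟨r1, hr1, hy1⟩ := dirSet_spec hu
    obtain ⟨r2, hr2, hy2⟩ := dirSet_spec hanti'
    have hune : u ≠ 0 := by
      intro h
      have := dirSet_norm_one hu
      rw [h, norm_zero] at this
      norm_num at this
    set y1 := x + r1 • u with hy1d
    set y2 := x + r2 • (-u) with hy2d
    have hne12 : y1 ≠ y2 := by
      intro h
      have : (r1 + r2) • u = 0 := by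
        have h2 := congrArg (· - x) h
        simp only [hy1d, hy2d] at h2
        have h3 : x + r1 • u - x = r1 • u := by module
        have h4 : x + r2 • (-u) - x = (-r2) • u := by module
        rw [h3, h4] at h2
        have : r1 • u - (-r2) • u = 0 := by rw [h2]; module
        rw [← this]
        module
      rcases smul_eq_zero.1 this with h' | h'
      · nlinarith
      · exact hune h'
    have hxseg : x ∈ openSegment ℝ y1 y2 := by
      refine ⟨r2/(r1+r2), r1/(r1+r2), by positivity, by positivity, ?_, ?_⟩
      · field_simp; ring
      · rw [hy1d, hy2d]
        match_scalars <;> field_simp <;> ring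
    obtain ⟨q, hqint, hqorth, hqseg⟩ := subA hconv hint hy1 hy2 hne12 hxseg
    exact ⟨q, hqint, rch_single hqorth hqseg⟩

lemma body_rch {K : Set (EucR 2)} (hconv : Convex ℝ K) (hint : (interior K).Nonempty)
    (hob : Obtuse K) {x y : EucR 2} (hxK : x ∈ K) (hyK : y ∈ K) : Rch K x y := by
  obtain ⟨qx, hqx, hrx⟩ := body_to_interior hconv hint hob hxK
  obtain ⟨qy, hqy, hry⟩ := body_to_interior hconv hint hob hyK
  have hmid : Rch (interior K) qx qy :=
    rch_of_open_convex isOpen_interior hconv.interior hqx hqy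
  exact rch_trans hrx (rch_trans (rch_mono interior_subset hmid) (rch_symm hry))

end

/-- Any connected union of finitely many obtuse convex bodies in `ℝ²` is
orthogonally connected. -/
theorem orthConnected_union_obtuse (n : ℕ) (A : Fin n → Set (EucR 2))
    (hA : ∀ i, IsConvexBody (A i)) (hob : ∀ i, Obtuse (A i))
    (hconn : IsConnected (⋃ i, A i)) :
    OrthConnected (⋃ i, A i) := by
  set S := ⋃ i, A i with hS
  have hidir : ∀ i j : Fin n, Relation.ReflTransGen (fun k l => (A k ∩ A l).Nonempty) i j := by
    intro i j
    by_contra hcon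
    set T := {k : Fin n | Relation.ReflTransGen (fun k l => (A k ∩ A l).Nonempty) i k} with hT
    set U := ⋃ k ∈ T, A k with hU
    set V := ⋃ k ∈ Tᶜ, A k with hV
    have hUc : IsClosed U := (Set.toFinite T).isClosed_biUnion (fun k _ => (hA k).2.1.isClosed)
    have hVc : IsClosed V := (Set.toFinite Tᶜ).isClosed_biUnion (fun k _ => (hA k).2.1.isClosed)
    have hcover : S ⊆ U ∪ V := by
      intro z hz
      rw [hS, mem_iUnion] at hz
      obtain ⟨k, hk⟩ := hz
      by_cases h : k ∈ T
      · exact Or.inl (mem_biUnion h hk)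
      · exact Or.inr (mem_biUnion h hk)
    have hUne : (S ∩ U).Nonempty := by
      obtain ⟨w, hw⟩ := (hA i).2.2
      exact ⟨w, mem_iUnion.2 ⟨i, interior_subset hw⟩,
        mem_biUnion (Relation.ReflTransGen.refl) (interior_subset hw)⟩
    have hVne : (S ∩ V).Nonempty := by
      obtain ⟨w, hw⟩ := (hA j).2.2
      exact ⟨w, mem_iUnion.2 ⟨j, interior_subset hw⟩,
        mem_biUnion (by exact hcon) (interior_subset hw)⟩
    obtain ⟨z, _, hzU, hzV⟩ :=
      (isPreconnected_closed_iff.1 hconn.2) U V hUc hVc hcover hUne hVne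
    rw [hU, mem_iUnion₂] at hzU
    rw [hV, mem_iUnion₂] at hzV
    obtain ⟨k, hkT, hzk⟩ := hzU
    obtain ⟨l, hlT, hzl⟩ := hzV
    exact hlT (Relation.ReflTransGen.tail hkT ⟨z, hzk, hzl⟩)
  have hrch : ∀ (i j : Fin n), ∀ x ∈ A i, ∀ z ∈ A j, Rch S x z := by
    intro i j
    have hgen := hidir i j
    induction hgen with
    | refl =>
      intro x hx z hz
      exact rch_mono (subset_iUnion A i) (body_rch (hA i).1 (hA i).2.2 (hob i) hx hz)
    | @tail k l hik hkl ih =>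
      intro x hx z hz
      obtain ⟨c, hck, hcl⟩ := hkl
      exact rch_trans (ih x hx c hck)
        (rch_mono (subset_iUnion A l) (body_rch (hA l).1 (hA l).2.2 (hob l) hcl hz))
  intro x hx y hy
  rw [hS, mem_iUnion] at hx hy
  obtain ⟨i, hxi⟩ := hx
  obtain ⟨j, hyj⟩ := hy
  exact hrch i j x hxi y hyj
end
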